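/- arXiv:1104.1047 — 6 statements merged into one kernel-verified Lean document; each statement's English description precedes it below -/
import Mathlib

section
/- Let φ : [0, ∞) → ℝ be a right-continuous nonnegative function with left limits and let a > 0. Define Λ_a(φ)(t) = φ(t) - sup_{s ∈ [0,t]} [ (φ(s) - a)^+ ∧ inf_{u ∈ [s,t]} φ(u) ]. Then Λ_a(φ)(t) ∈ [0, a] for all t ≥ 0. -/
open Set

/-- The candidate two-sided reflection map on `[0, a]`:
`Λ_a(φ)(t) = φ(t) - sup_{s ∈ [0,t]} [ (φ(s) - a)⁺ ∧ inf_{u ∈ [s,t]} φ(u) ]`. -/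
noncomputable def doubleReflection (φ : ℝ → ℝ) (a : ℝ) (t : ℝ) : ℝ :=
  φ t - sSup ((fun s => min (max (φ s - a) 0) (sInf (φ '' Set.Icc s t))) '' Set.Icc 0 t)

/-- If `φ : [0,∞) → [0,∞)` is càdlàg and `a > 0`, then
`Λ_a(φ)(t) ∈ [0, a]` for all `t ≥ 0`. -/
theorem stmt2 (φ : ℝ → ℝ) (a : ℝ) (ha : 0 < a)
    (hnonneg : ∀ t, 0 ≤ t → 0 ≤ φ t)
    (hrc : ∀ t, 0 ≤ t → ContinuousWithinAt φ (Set.Ici t) t)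
    (hll : ∀ t, 0 < t → ∃ l, Filter.Tendsto φ (nhdsWithin t (Set.Iio t)) (nhds l)) :
    ∀ t, 0 ≤ t → doubleReflection φ a t ∈ Set.Icc 0 a := by
  intro t ht
  set S := (fun s => min (max (φ s - a) 0) (sInf (φ '' Set.Icc s t))) '' Set.Icc 0 t with hS
  have hne : S.Nonempty := ⟨_, ⟨t, ⟨ht, le_refl t⟩, rfl⟩⟩
  have hub : ∀ x ∈ S, x ≤ φ t := by
    rintro x ⟨s, hs, rfl⟩
    have hbd : BddBelow (φ '' Set.Icc s t) := by
      refine ⟨0, ?_⟩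
      rintro y ⟨u, hu, rfl⟩
      exact hnonneg u (le_trans hs.1 hu.1)
    have hinf : sInf (φ '' Set.Icc s t) ≤ φ t :=
      csInf_le hbd ⟨t, ⟨hs.2, le_refl t⟩, rfl⟩
    exact le_trans (min_le_right _ _) hinf
  have hbdd : BddAbove S := ⟨φ t, hub⟩
  have h1 : sSup S ≤ φ t := csSup_le hne hub
  have hgt : min (max (φ t - a) 0) (sInf (φ '' Set.Icc t t)) ∈ S :=
    ⟨t, ⟨ht, le_refl t⟩, rfl⟩
  have h2 : φ t - a ≤ sSup S := by
    refine le_trans ?_ (le_csSup hbdd hgt)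
    have heq : sInf (φ '' Set.Icc t t) = φ t := by
      rw [Set.Icc_self, Set.image_singleton, csInf_singleton]
    rw [heq]
    exact le_min (le_max_left _ _) (by linarith)
  constructor <;> simp only [doubleReflection, ← hS] <;> linarith
end

section
/- Let φ : [0, ∞) → ℝ be a nonnegative càdlàg function with φ(0) = 0 and let a > 0. Then the function Λ_a(φ) defined by Λ_a(φ)(t) = φ(t) - sup_{s ∈ [0,t]} [ (φ(s) - a)^+ ∧ inf_{u ∈ [s,t]} φ(u) ] admits a decomposition Λ_a(φ) = φ - κ_+ + κ_-, where κ_+ and κ_- are nondecreasing càdlàg functions with κ_±(0) = 0 such that κ_+ increases only at times t with Λ_a(φ)(t) = a and κ_- increases only at times t with Λ_a(φ)(t) = 0 (i.e., ∫_{[0,∞)} 1{Λ_a(φ)(s) < a} dκ_+(s) = 0 and ∫_{[0,∞)} 1{Λ_a(φ)(s) > 0} dκ_-(s) = 0). -/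
open Set MeasureTheory

namespace DR

open Filter

/-- Hypothesis bundle. -/
structure Hyp (φ : ℝ → ℝ) (a : ℝ) : Prop where
  ha : 0 < a
  h0 : φ 0 = 0
  nonneg : ∀ t, 0 ≤ t → 0 ≤ φ t
  rc : ∀ t, 0 ≤ t → ContinuousWithinAt φ (Set.Ici t) t
  ll : ∀ t, 0 < t → ∃ l, Filter.Tendsto φ (nhdsWithin t (Set.Iio t)) (nhds l)

variable {φ : ℝ → ℝ} {a : ℝ}

noncomputable def G (φ : ℝ → ℝ) (a s : ℝ) : ℝ := max (φ s - a) 0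

noncomputable def II (φ : ℝ → ℝ) (s t : ℝ) : ℝ := sInf (φ '' Set.Icc s t)

noncomputable def FF (φ : ℝ → ℝ) (a s t : ℝ) : ℝ := min (G φ a s) (II φ s t)

noncomputable def eta (φ : ℝ → ℝ) (a t : ℝ) : ℝ :=
  sSup ((fun s => FF φ a s t) '' Set.Icc 0 t)

lemma dr_eq (t : ℝ) : doubleReflection φ a t = φ t - eta φ a t := rfl

lemma G_nonneg (s : ℝ) : 0 ≤ G φ a s := le_max_right _ _

/-- ε-δ form of right continuity. -/
lemma rc_eps (H : Hyp φ a) {t : ℝ} (ht : 0 ≤ t) {ε : ℝ} (hε : 0 < ε) :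
    ∃ δ > 0, ∀ u, t ≤ u → u < t + δ → |φ u - φ t| ≤ ε := by
  have := (H.rc t ht)
  rw [Metric.continuousWithinAt_iff] at this
  obtain ⟨δ, hδ, hb⟩ := this ε hε
  refine ⟨δ, hδ, fun u hu hu' => ?_⟩
  have : dist u t < δ := by
    rw [Real.dist_eq, abs_of_nonneg (by linarith)]; linarith
  exact le_of_lt (by simpa [Real.dist_eq] using hb hu this)

lemma II_bddBelow (H : Hyp φ a) {s t : ℝ} (hs : 0 ≤ s) :
    BddBelow (φ '' Set.Icc s t) := by
  refine ⟨0, fun x hx => ?_⟩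
  obtain ⟨u, hu, rfl⟩ := hx
  exact H.nonneg u (le_trans hs hu.1)

lemma II_le (H : Hyp φ a) {s t u : ℝ} (hs : 0 ≤ s) (h1 : s ≤ u) (h2 : u ≤ t) :
    II φ s t ≤ φ u :=
  csInf_le (II_bddBelow H hs) ⟨u, ⟨h1, h2⟩, rfl⟩

lemma II_nonneg (H : Hyp φ a) {s t : ℝ} (hs : 0 ≤ s) : 0 ≤ II φ s t := by
  rcases le_or_gt s t with h | h
  · exact le_csInf ⟨φ s, ⟨s, ⟨le_refl s, h⟩, rfl⟩⟩
      (fun x ⟨u, hu, hx⟩ => hx ▸ H.nonneg u (le_trans hs hu.1))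
  · simp [II, Set.Icc_eq_empty (not_le.mpr h), Real.sInf_empty]

lemma le_II (H : Hyp φ a) {s t c : ℝ} (hst : s ≤ t) (h : ∀ u, s ≤ u → u ≤ t → c ≤ φ u) :
    c ≤ II φ s t :=
  le_csInf ⟨φ s, ⟨s, ⟨le_refl s, hst⟩, rfl⟩⟩ (fun x ⟨u, hu, hx⟩ => hx ▸ h u hu.1 hu.2)

lemma II_self (s : ℝ) : II φ s s = φ s := by
  simp [II, Set.Icc_self]

lemma II_split (H : Hyp φ a) {q r t : ℝ} (hq : 0 ≤ q) (h1 : q ≤ r) (h2 : r ≤ t) :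
    II φ q t = min (II φ q r) (II φ r t) := by
  have : Set.Icc q t = Set.Icc q r ∪ Set.Icc r t := (Set.Icc_union_Icc_eq_Icc h1 h2).symm
  rw [II, this, Set.image_union]
  exact csInf_union (II_bddBelow H hq) ⟨φ q, ⟨q, ⟨le_refl q, h1⟩, rfl⟩⟩
    (II_bddBelow H (le_trans hq h1)) ⟨φ r, ⟨r, ⟨le_refl r, h2⟩, rfl⟩⟩

lemma FF_nonneg (H : Hyp φ a) {s t : ℝ} (hs : 0 ≤ s) : 0 ≤ FF φ a s t :=
  le_min (G_nonneg s) (II_nonneg H hs)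

lemma FF_le_G (s t : ℝ) : FF φ a s t ≤ G φ a s := min_le_left _ _

lemma FF_le_phi (H : Hyp φ a) {s t : ℝ} (hs : 0 ≤ s) (hst : s ≤ t) : FF φ a s t ≤ φ t :=
  le_trans (min_le_right _ _) (II_le H hs hst (le_refl t))

lemma FF_split (H : Hyp φ a) {q r t : ℝ} (hq : 0 ≤ q) (h1 : q ≤ r) (h2 : r ≤ t) :
    FF φ a q t = min (FF φ a q r) (II φ r t) := by
  rw [FF, FF, II_split H hq h1 h2, min_assoc]

lemma FF_anti (H : Hyp φ a) {s t t' : ℝ} (hs : 0 ≤ s) (h1 : s ≤ t) (h2 : t ≤ t') :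
    FF φ a s t' ≤ FF φ a s t := by
  rw [FF_split H hs h1 h2]
  exact min_le_left _ _

lemma FF_self (H : Hyp φ a) {s : ℝ} (hs : 0 ≤ s) : FF φ a s s = G φ a s := by
  rw [FF, II_self, min_eq_left]
  exact max_le (by linarith [H.ha]) (H.nonneg s hs)

lemma eta_bddAbove (H : Hyp φ a) {t : ℝ} (ht : 0 ≤ t) :
    BddAbove ((fun s => FF φ a s t) '' Set.Icc 0 t) := by
  refine ⟨φ t, fun x hx => ?_⟩
  obtain ⟨s, hs, rfl⟩ := hx
  exact le_trans (min_le_right _ _) (II_le H hs.1 hs.2 (le_refl t))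

lemma eta_nonempty {t : ℝ} (ht : 0 ≤ t) :
    ((fun s => FF φ a s t) '' Set.Icc 0 t).Nonempty :=
  ⟨_, ⟨0, ⟨le_refl 0, ht⟩, rfl⟩⟩

lemma FF_le_eta (H : Hyp φ a) {s t : ℝ} (hs : 0 ≤ s) (hst : s ≤ t) :
    FF φ a s t ≤ eta φ a t :=
  le_csSup (eta_bddAbove H (le_trans hs hst)) ⟨s, ⟨hs, hst⟩, rfl⟩

lemma eta_le (H : Hyp φ a) {t c : ℝ} (ht : 0 ≤ t) (h : ∀ s, 0 ≤ s → s ≤ t → FF φ a s t ≤ c) :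
    eta φ a t ≤ c :=
  csSup_le (eta_nonempty ht) (fun x ⟨s, hs, hx⟩ => hx ▸ h s hs.1 hs.2)

lemma eta_nonneg (H : Hyp φ a) {t : ℝ} (ht : 0 ≤ t) : 0 ≤ eta φ a t :=
  le_trans (FF_nonneg H (le_refl 0)) (FF_le_eta H (le_refl 0) ht)

lemma eta_le_phi (H : Hyp φ a) {t : ℝ} (ht : 0 ≤ t) : eta φ a t ≤ φ t :=
  eta_le H ht (fun s hs hst => le_trans (min_le_right _ _) (II_le H hs hst (le_refl t)))

lemma G_le_eta (H : Hyp φ a) {t : ℝ} (ht : 0 ≤ t) : G φ a t ≤ eta φ a t := by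
  have := FF_le_eta H ht (le_refl t)
  rwa [FF_self H ht] at this

lemma eta_zero (H : Hyp φ a) : eta φ a 0 = 0 := by
  apply le_antisymm
  · exact le_trans (eta_le_phi H (le_refl 0)) (le_of_eq H.h0)
  · exact eta_nonneg H (le_refl 0)

/-- Split upper bound: `η t' ≤ max (η t) c` if `c` bounds `G` on `(t, t']`. -/
lemma eta_split_ub (H : Hyp φ a) {t t' c : ℝ} (ht : 0 ≤ t) (htt' : t ≤ t')
    (hc : ∀ u, t < u → u ≤ t' → G φ a u ≤ c) :
    eta φ a t' ≤ max (eta φ a t) c := by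
  apply eta_le H (le_trans ht htt')
  intro s hs hst'
  rcases le_or_gt s t with h | h
  · exact le_trans (FF_anti H hs h htt') (le_max_of_le_left (FF_le_eta H hs h))
  · exact le_max_of_le_right (le_trans (FF_le_G s t') (hc s h hst'))

/-- Lower bound via splitting. -/
lemma eta_lower (H : Hyp φ a) {s t r : ℝ} (hr : 0 ≤ r) (hrs : r ≤ s) (hst : s ≤ t) :
    min (FF φ a r s) (II φ s t) ≤ eta φ a t := by
  rw [← FF_split H hr hrs hst]
  exact FF_le_eta H hr (le_trans hrs hst)

/-- Near-optimal index: there is `r ≤ s` with `FF φ a r s > η s - ε`. -/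
lemma eta_approx (H : Hyp φ a) {s ε : ℝ} (hs : 0 ≤ s) (hε : 0 < ε) :
    ∃ r, 0 ≤ r ∧ r ≤ s ∧ eta φ a s - ε < FF φ a r s := by
  obtain ⟨x, hx, hlt⟩ := exists_lt_of_lt_csSup (eta_nonempty hs)
    (show eta φ a s - ε < eta φ a s by linarith)
  obtain ⟨r, hr, rfl⟩ := hx
  exact ⟨r, hr.1, hr.2, hlt⟩

/-- Right-continuity of η, quantitative form. -/
lemma eta_rc (H : Hyp φ a) {t : ℝ} (ht : 0 ≤ t) {ε : ℝ} (hε : 0 < ε) :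
    ∃ δ > 0, ∀ t', t ≤ t' → t' < t + δ → |eta φ a t' - eta φ a t| ≤ ε := by
  obtain ⟨δ, hδ, hw⟩ := rc_eps H ht hε
  refine ⟨δ, hδ, fun t' h1 h2 => ?_⟩
  rw [abs_le]
  constructor
  · -- lower bound : η t' ≥ η t - ε
    have key : ∀ ε' > 0, eta φ a t - ε - ε' ≤ eta φ a t' := by
      intro ε' hε'
      obtain ⟨r, hr0, hrt, hFF⟩ := eta_approx H ht hε'
      have hII : φ t - ε ≤ II φ t t' :=
        le_II H h1 (fun u hu1 hu2 => by
          have := hw u hu1 (lt_of_le_of_lt hu2 h2)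
          have := abs_le.mp this
          linarith)
      have := eta_lower H hr0 hrt h1 (t := t')
      have hle : min (FF φ a r t) (II φ t t') ≥ min (eta φ a t - ε - ε') (φ t - ε) := by
        apply le_min
        · exact le_trans (min_le_left _ _) (by linarith)
        · exact le_trans (min_le_right _ _) hII
      have hφt : eta φ a t ≤ φ t := eta_le_phi H ht
      have : min (eta φ a t - ε - ε') (φ t - ε) ≤ eta φ a t' := le_trans hle this
      rcases min_le_iff.mp (le_refl (min (eta φ a t - ε - ε') (φ t - ε))) with _ | _
      · calc eta φ a t - ε - ε' ≤ min (eta φ a t - ε - ε') (φ t - ε) := by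
              apply le_min (le_refl _) (by linarith)
          _ ≤ eta φ a t' := this
      · calc eta φ a t - ε - ε' ≤ min (eta φ a t - ε - ε') (φ t - ε) := by
              apply le_min (le_refl _) (by linarith)
          _ ≤ eta φ a t' := this
    by_contra hcon
    push_neg at hcon
    have : 0 < (eta φ a t - ε) - eta φ a t' := by linarith
    have := key ((eta φ a t - ε - eta φ a t') / 2) (by linarith)
    linarith
  · -- upper bound : η t' ≤ η t + ε
    have : eta φ a t' ≤ max (eta φ a t) (G φ a t + ε) := by
      apply eta_split_ub H ht h1
      intro u hu1 hu2
      have := abs_le.mp (hw u (le_of_lt hu1) (lt_of_le_of_lt hu2 h2))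
      have : φ u - a ≤ φ t - a + ε := by linarith
      have hGt : φ t - a ≤ G φ a t := le_max_left _ _
      have hG0 : (0:ℝ) ≤ G φ a t := G_nonneg t
      exact max_le (by linarith) (by linarith)
    have hG : G φ a t ≤ eta φ a t := G_le_eta H ht
    have h2' : max (eta φ a t) (G φ a t + ε) ≤ eta φ a t + ε :=
      max_le (by linarith) (by linarith)
    linarith [le_trans this h2']

/-- Theorem A: if η increases over `(t₁, t₂]` past level `β`, there is a point `q`
in `(t₁,t₂]` where `η q = φ q - a` (the path is at the upper barrier) and `η q ≥ β`. -/
lemma thmA (H : Hyp φ a) {t₁ t₂ β : ℝ} (ht₁ : 0 ≤ t₁) (h12 : t₁ ≤ t₂)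
    (hβ1 : eta φ a t₁ < β) (hβ2 : β < eta φ a t₂) :
    ∃ q, t₁ < q ∧ q ≤ t₂ ∧ eta φ a q = φ q - a ∧ β ≤ eta φ a q := by
  have ht₂ : 0 ≤ t₂ := le_trans ht₁ h12
  have hβ0 : 0 < β := lt_of_le_of_lt (eta_nonneg H ht₁) hβ1
  set S : Set ℝ := {s | t₁ < s ∧ s ≤ t₂ ∧ β ≤ FF φ a s t₂} with hS
  -- S nonempty
  have hSne : S.Nonempty := by
    obtain ⟨x, hx, hlt⟩ := exists_lt_of_lt_csSup (eta_nonempty ht₂) hβ2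
    obtain ⟨s, hs, rfl⟩ := hx
    refine ⟨s, ?_, hs.2, le_of_lt hlt⟩
    by_contra hle
    push_neg at hle
    have : FF φ a s t₂ ≤ eta φ a t₁ :=
      le_trans (FF_anti H hs.1 hle h12) (FF_le_eta H hs.1 hle)
    linarith
  have hSbdd : BddBelow S := ⟨t₁, fun s hs => le_of_lt hs.1⟩
  set q := sInf S with hq
  have hq1 : t₁ ≤ q := le_csInf hSne (fun s hs => le_of_lt hs.1)
  have hq0 : 0 ≤ q := le_trans ht₁ hq1
  obtain ⟨s₀, hs₀⟩ := id hSne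
  have hq2 : q ≤ t₂ := le_trans (csInf_le hSbdd hs₀) hs₀.2.1
  -- key components: β ≤ G φ a q and β ≤ II φ q t₂
  have hcomp : β ≤ G φ a q ∧ β ≤ II φ q t₂ := by
    have key : ∀ ε, 0 < ε → ε ≤ a / 2 → ε < β → β - ε ≤ G φ a q ∧ β ≤ II φ q t₂ := by
      intro ε hε hεa hεβ
      obtain ⟨δ, hδ, hw⟩ := rc_eps H hq0 hε
      -- find s ∈ S with s < q + δ
      obtain ⟨s, hsS, hsδ⟩ : ∃ s ∈ S, s < q + δ := by
        by_contra hc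
        push_neg at hc
        have : q + δ ≤ q := le_csInf hSne hc
        linarith
      have hsq : q ≤ s := csInf_le hSbdd hsS
      have hφs : |φ s - φ q| ≤ ε := hw s hsq hsδ
      have hFFs : β ≤ FF φ a s t₂ := hsS.2.2
      have hGs : β ≤ G φ a s := le_trans hFFs (FF_le_G s t₂)
      have hGs' : β ≤ φ s - a := by
        rcases le_or_gt (φ s - a) 0 with h | h
        · rw [G, max_eq_right h] at hGs; linarith
        · rwa [G, max_eq_left (le_of_lt h)] at hGs
      have habs := abs_le.mp hφs
      have hφq : a + β - ε ≤ φ q := by linarith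
      constructor
      · -- G φ a q ≥ β - ε
        have : β - ε ≤ φ q - a := by linarith
        exact le_trans this (le_max_left _ _)
      · -- II φ q t₂ ≥ β
        rw [II_split H hq0 hsq hsS.2.1]
        apply le_min
        · apply le_II H hsq
          intro u hu1 hu2
          have := abs_le.mp (hw u hu1 (lt_of_le_of_lt hu2 hsδ))
          have : φ q - ε ≤ φ u := by linarith
          linarith
        · exact le_trans hFFs (le_trans (min_le_right _ _) (le_refl _))
    have hG : β ≤ G φ a q := by
      by_contra hc
      push_neg at hc
      set ε := min (min (a/2) (β/2)) ((β - G φ a q)/2) with hεdef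
      have hε : 0 < ε := by
        apply lt_min (lt_min (by linarith [H.ha]) (by linarith)) (by linarith)
      have := (key ε hε (le_trans (min_le_left _ _) (min_le_left _ _))
        (lt_of_le_of_lt (le_trans (min_le_left _ _) (min_le_right _ _)) (by linarith))).1
      have : β - ε ≤ G φ a q := this
      have hεle : ε ≤ (β - G φ a q)/2 := min_le_right _ _
      linarith
    refine ⟨hG, ?_⟩
    have hε2 : (0:ℝ) < min (a/2) (β/2) := lt_min (by linarith [H.ha]) (by linarith)
    exact (key _ hε2 (min_le_left _ _) (lt_of_le_of_lt (min_le_right _ _) (by linarith))).2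
  obtain ⟨hGq, hIIq⟩ := hcomp
  -- q > t₁
  have hqt₁ : t₁ < q := by
    rcases lt_or_eq_of_le hq1 with h | h
    · exact h
    · exfalso
      have : β ≤ FF φ a q t₂ := le_min hGq hIIq
      have h2 : FF φ a q t₂ ≤ eta φ a t₁ := by
        rw [← h]
        exact le_trans (FF_anti H ht₁ (le_refl t₁) h12) (FF_le_eta H ht₁ (le_refl t₁))
      linarith
  -- η q ≤ G φ a q
  have hup : eta φ a q ≤ G φ a q := by
    apply eta_le H hq0
    intro s hs0 hsq
    rcases le_or_gt s t₁ with h | h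
    · have : FF φ a s q ≤ eta φ a t₁ :=
        le_trans (FF_anti H hs0 h (le_trans hq1 (le_refl q))) (FF_le_eta H hs0 h)
      linarith
    · rcases lt_or_eq_of_le hsq with hlt | heq
      · -- s ∉ S since s < q = inf S
        have hsnotS : s ∉ S := fun hmem => absurd (csInf_le hSbdd hmem) (not_le.mpr hlt)
        have : ¬ (β ≤ FF φ a s t₂) := fun hcc => hsnotS ⟨h, le_trans (le_of_lt hlt) hq2, hcc⟩
        push_neg at this
        have hsplit : FF φ a s t₂ = min (FF φ a s q) (II φ q t₂) :=
          FF_split H hs0 (le_of_lt hlt) hq2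
        rw [hsplit] at this
        rcases min_lt_iff.mp this with h' | h'
        · linarith
        · linarith
      · rw [heq, FF_self H hq0]
  have := G_le_eta H hq0
  have hetaq : eta φ a q = G φ a q := le_antisymm hup this
  have hGpos : G φ a q = φ q - a := by
    rcases max_cases (φ q - a) (0:ℝ) with ⟨h1, _⟩ | ⟨h1, h2⟩
    · exact h1
    · exfalso; rw [G] at hGq; rw [h1] at hGq; linarith
  exact ⟨q, hqt₁, hq2, by rw [hetaq, hGpos], by rw [hetaq]; exact hGq⟩

/-- Theorem B: if η decreases over `[t₁, t₂]` past level `β`, there is `q ∈ [t₁,t₂]`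
with `η q = φ q` (the path is at the lower barrier 0) and `η q ≤ β`. -/
lemma thmB (H : Hyp φ a) {t₁ t₂ β : ℝ} (ht₁ : 0 ≤ t₁) (h12 : t₁ ≤ t₂)
    (hβ2 : eta φ a t₂ < β) (hβ1 : β < eta φ a t₁) :
    ∃ q, t₁ ≤ q ∧ q ≤ t₂ ∧ eta φ a q = φ q ∧ eta φ a q ≤ β := by
  have ht₂ : 0 ≤ t₂ := le_trans ht₁ h12
  -- pick r with FF φ a r t₁ > β
  obtain ⟨x, hx, hlt⟩ := exists_lt_of_lt_csSup (eta_nonempty ht₁) hβ1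
  obtain ⟨r, hr, rfl⟩ := hx
  have hrsplit : FF φ a r t₂ = min (FF φ a r t₁) (II φ t₁ t₂) := FF_split H hr.1 hr.2 h12
  have hFFr2 : FF φ a r t₂ ≤ eta φ a t₂ := FF_le_eta H hr.1 (le_trans hr.2 h12)
  have hII12 : II φ t₁ t₂ < β := by
    by_contra hc
    push_neg at hc
    have : β ≤ FF φ a r t₂ := by rw [hrsplit]; exact le_min (le_of_lt hlt) hc
    linarith
  -- find point where φ < β
  have hex : ∃ u, u ∈ Set.Icc t₁ t₂ ∧ φ u < β := by
    by_contra hc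
    push_neg at hc
    have : β ≤ II φ t₁ t₂ := le_II H h12 (fun u h1 h2 => hc u ⟨h1, h2⟩)
    linarith
  set S : Set ℝ := {u | t₁ ≤ u ∧ u ≤ t₂ ∧ φ u < β} with hS
  have hSne : S.Nonempty := by obtain ⟨u, hu, hφu⟩ := hex; exact ⟨u, hu.1, hu.2, hφu⟩
  have hSbdd : BddBelow S := ⟨t₁, fun s hs => hs.1⟩
  set q := sInf S with hq
  have hq1 : t₁ ≤ q := le_csInf hSne (fun s hs => hs.1)
  have hq0 : 0 ≤ q := le_trans ht₁ hq1
  obtain ⟨s₀, hs₀⟩ := hSne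
  have hq2 : q ≤ t₂ := le_trans (csInf_le hSbdd hs₀) hs₀.2.1
  -- φ q ≤ β
  have hφq : φ q ≤ β := by
    by_contra hc
    push_neg at hc
    set ε := (φ q - β)/2 with hε
    obtain ⟨δ, hδ, hw⟩ := rc_eps H hq0 (show 0 < ε by linarith)
    obtain ⟨s, hsS, hsδ⟩ : ∃ s ∈ S, s < q + δ := by
      by_contra hcc
      push_neg at hcc
      have : q + δ ≤ q := le_csInf ⟨s₀, hs₀⟩ hcc
      linarith
    have hsq : q ≤ s := csInf_le hSbdd hsS
    have := abs_le.mp (hw s hsq hsδ)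
    have : φ s < β := hsS.2.2
    linarith
  -- on [t₁, q), φ ≥ β
  have hlow : ∀ u, t₁ ≤ u → u < q → β ≤ φ u := by
    intro u h1 h2
    by_contra hc
    push_neg at hc
    have : u ∈ S := ⟨h1, le_trans (le_of_lt h2) hq2, hc⟩
    exact absurd (csInf_le hSbdd this) (not_le.mpr h2)
  -- II φ t₁ q ≥ φ q
  have hIIq : φ q ≤ II φ t₁ q := by
    apply le_II H hq1
    intro u h1 h2
    rcases lt_or_eq_of_le h2 with h | h
    · linarith [hlow u h1 h]
    · rw [h]
  -- η q ≥ φ q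
  have hetaq : φ q ≤ eta φ a q := by
    have : min (FF φ a r t₁) (II φ t₁ q) ≤ eta φ a q := eta_lower H hr.1 hr.2 hq1
    have hmin : φ q ≤ min (FF φ a r t₁) (II φ t₁ q) := le_min (by linarith) hIIq
    linarith
  have := eta_le_phi H hq0
  exact ⟨q, hq1, hq2, le_antisymm this hetaq, by linarith⟩
noncomputable def pos (x : ℝ) : ℝ := max x 0

lemma pos_nonneg (x : ℝ) : 0 ≤ pos x := le_max_right _ _

lemma pos_mono {x y : ℝ} (h : x ≤ y) : pos x ≤ pos y := max_le_max h (le_refl 0)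

lemma pos_eq_zero {x : ℝ} (h : x ≤ 0) : pos x = 0 := max_eq_right h

lemma pos_eq_self {x : ℝ} (h : 0 ≤ x) : pos x = x := max_eq_left h

lemma pos_le {x c : ℝ} (h1 : x ≤ c) (h2 : 0 ≤ c) : pos x ≤ c := max_le h1 h2

lemma pos_tri (x y z : ℝ) : pos (x - z) ≤ pos (y - z) + pos (x - y) := by
  rcases le_or_gt (x - z) 0 with h | h
  · rw [pos_eq_zero h]; exact add_nonneg (pos_nonneg _) (pos_nonneg _)
  · rw [pos_eq_self h.le]
    calc x - z = (y - z) + (x - y) := by ring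
    _ ≤ pos (y - z) + pos (x - y) := add_le_add (le_max_left _ _) (le_max_left _ _)

noncomputable def famSum (φ : ℝ → ℝ) (a : ℝ) (n : ℕ) (u : ℕ → ℝ) : ℝ :=
  ∑ i ∈ Finset.range n, pos (eta φ a (u (2*i+1)) - eta φ a (u (2*i)))

lemma famSum_nonneg (n : ℕ) (u : ℕ → ℝ) : 0 ≤ famSum φ a n u :=
  Finset.sum_nonneg (fun i _ => pos_nonneg _)

/-- Splitting a family at a level `y`. -/
lemma famSum_split (y : ℝ) (n : ℕ) (u : ℕ → ℝ) (hu : Monotone u) :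
    famSum φ a n u ≤ famSum φ a n (fun i => min (u i) y) + famSum φ a n (fun i => max (u i) y) := by
  rw [famSum, famSum, famSum, ← Finset.sum_add_distrib]
  apply Finset.sum_le_sum
  intro i _
  have hcb : u (2*i) ≤ u (2*i+1) := hu (by omega)
  by_cases hby : u (2*i+1) ≤ y
  · rw [min_eq_left hby, min_eq_left (le_trans hcb hby), max_eq_right hby,
      max_eq_right (le_trans hcb hby)]
    simp [pos_nonneg]
  · by_cases hyc : y ≤ u (2*i)
    · rw [max_eq_left (le_trans hyc hcb), max_eq_left hyc, min_eq_right hyc,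
        min_eq_right (le_trans hyc hcb)]
      simp [pos_nonneg]
    · push_neg at hby hyc
      rw [min_eq_left (le_of_lt hyc), min_eq_right (le_of_lt hby), max_eq_left (le_of_lt hby),
        max_eq_right (le_of_lt hyc)]
      exact pos_tri _ _ _

/-- Telescoping bound for a family, given a pairwise bound by a function monotone
along the family. -/
lemma famSum_le_of_pairbound (n : ℕ) (u : ℕ → ℝ) (g : ℝ → ℝ)
    (hg : ∀ i j : ℕ, i ≤ j → g (u i) ≤ g (u j))
    (hpair : ∀ i, i < n → pos (eta φ a (u (2*i+1)) - eta φ a (u (2*i)))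
      ≤ g (u (2*i+1)) - g (u (2*i))) :
    famSum φ a n u ≤ g (u (2*n)) - g (u 0) := by
  induction n with
  | zero => simp [famSum]
  | succ n ih =>
    have h1 : famSum φ a (n+1) u = famSum φ a n u
        + pos (eta φ a (u (2*n+1)) - eta φ a (u (2*n))) := by
      rw [famSum, Finset.sum_range_succ]; rfl
    have h2 := ih (fun i hi => hpair i (by omega))
    have h3 := hpair n (by omega)
    have h4 : g (u (2*n+1)) ≤ g (u (2*(n+1))) := hg _ _ (by omega)
    rw [h1]
    calc famSum φ a n u + pos (eta φ a (u (2*n+1)) - eta φ a (u (2*n)))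
        ≤ (g (u (2*n)) - g (u 0)) + (g (u (2*n+1)) - g (u (2*n))) := add_le_add h2 h3
    _ ≤ g (u (2*(n+1))) - g (u 0) := by linarith

noncomputable def BB (φ : ℝ → ℝ) (a v x : ℝ) : ℝ := sSup (G φ a '' Set.Ioc v x)

section Band

variable {v w gB κ : ℝ}

lemma BB_nonneg (v x : ℝ) : 0 ≤ BB φ a v x :=
  Real.sSup_nonneg (fun y ⟨z, _, hz⟩ => hz ▸ G_nonneg z)

lemma BB_le_gB (hGb : ∀ z, v < z → z < w → G φ a z ≤ gB) (hgB0 : 0 ≤ gB)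
    {x : ℝ} (hxw : x < w) : BB φ a v x ≤ gB :=
  Real.sSup_le (fun y ⟨z, hz, hy⟩ => hy ▸ hGb z hz.1 (lt_of_le_of_lt hz.2 hxw)) hgB0

lemma BB_bddAbove (hGb : ∀ z, v < z → z < w → G φ a z ≤ gB)
    {x : ℝ} (hxw : x < w) : BddAbove (G φ a '' Set.Ioc v x) :=
  ⟨max gB 0, fun y ⟨z, hz, hy⟩ => hy ▸ le_max_of_le_left (hGb z hz.1 (lt_of_le_of_lt hz.2 hxw))⟩

lemma BB_mono (hGb : ∀ z, v < z → v < w → z < w → G φ a z ≤ gB) : True := trivial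

lemma BB_mono' (hGb : ∀ z, v < z → z < w → G φ a z ≤ gB)
    {x y : ℝ} (hxy : x ≤ y) (hyw : y < w) : BB φ a v x ≤ BB φ a v y :=
  Real.sSup_le (fun val ⟨z, hz, hval⟩ => hval ▸ le_csSup (BB_bddAbove hGb hyw)
    ⟨z, ⟨hz.1, le_trans hz.2 hxy⟩, rfl⟩) (BB_nonneg v y)

lemma eta_ge_BB (H : Hyp φ a) (hv : 0 ≤ v)
    (hosc : ∀ p ∈ Set.Ico v w, ∀ z ∈ Set.Ico v w, |φ p - φ z| ≤ a/4)
    {c : ℝ} (hvc : v ≤ c) (hcw : c < w) : BB φ a v c ≤ eta φ a c := by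
  apply Real.sSup_le _ (eta_nonneg H (le_trans hv hvc))
  rintro y ⟨z, hz, rfl⟩
  have hz0 : 0 ≤ z := le_trans hv hz.1.le
  have hIz : G φ a z ≤ II φ z c := by
    rcases le_or_gt (φ z - a) 0 with h | h
    · rw [G, max_eq_right h]; exact II_nonneg H hz0
    · rw [G, max_eq_left h.le]
      apply le_II H hz.2
      intro p hp1 hp2
      have hzmem : z ∈ Set.Ico v w := ⟨hz.1.le, lt_of_le_of_lt hz.2 hcw⟩
      have hpmem : p ∈ Set.Ico v w := ⟨le_trans hz.1.le hp1, lt_of_le_of_lt hp2 hcw⟩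
      have := abs_le.mp (hosc p hpmem z hzmem)
      linarith [H.ha]
  have : FF φ a z c = G φ a z := min_eq_left hIz
  rw [← this]
  exact FF_le_eta H hz0 hz.2

lemma eta_le_BB (H : Hyp φ a) (hGb : ∀ z, v < z → z < w → G φ a z ≤ gB)
    {c b : ℝ} (hv : 0 ≤ v) (hvc : v ≤ c) (hcb : c ≤ b) (hbw : b < w)
    (hlt : eta φ a c < eta φ a b) : eta φ a b ≤ BB φ a v b := by
  have h := eta_split_ub H (le_trans hv hvc) hcb
    (c := BB φ a v b) (fun z h1 h2 => le_csSup (BB_bddAbove hGb hbw)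
      ⟨z, ⟨lt_of_le_of_lt hvc h1, h2⟩, rfl⟩)
  rcases max_cases (eta φ a c) (BB φ a v b) with ⟨he, _⟩ | ⟨he, _⟩
  · rw [he] at h; linarith
  · rwa [he] at h

lemma band_pair (H : Hyp φ a) (hv : 0 ≤ v)
    (hosc : ∀ p ∈ Set.Ico v w, ∀ z ∈ Set.Ico v w, |φ p - φ z| ≤ a/4)
    (hGb : ∀ z, v < z → z < w → G φ a z ≤ gB)
    (hκ : ∀ x, v ≤ x → x < w → κ ≤ eta φ a x)
    {c b : ℝ} (hvc : v ≤ c) (hcb : c ≤ b) (hbw : b < w) :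
    pos (eta φ a b - eta φ a c) ≤ max (BB φ a v b) κ - max (BB φ a v c) κ := by
  have hcw : c < w := lt_of_le_of_lt hcb hbw
  rcases le_or_gt (eta φ a b) (eta φ a c) with h | h
  · rw [pos_eq_zero (by linarith)]
    have : BB φ a v c ≤ BB φ a v b := BB_mono' hGb hcb hbw
    have := max_le_max this (le_refl κ)
    linarith
  · rw [pos_eq_self (by linarith)]
    have h1 : eta φ a b ≤ BB φ a v b := eta_le_BB H hGb hv hvc hcb hbw h
    have h2 : max (BB φ a v c) κ ≤ eta φ a c :=
      max_le (eta_ge_BB H hv hosc hvc hcw) (hκ c hvc hcw)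
    have h3 : BB φ a v b ≤ max (BB φ a v b) κ := le_max_left _ _
    linarith

/-- Master band estimate for family sums. -/
lemma famSum_band (H : Hyp φ a) (hv : 0 ≤ v)
    (hosc : ∀ p ∈ Set.Ico v w, ∀ z ∈ Set.Ico v w, |φ p - φ z| ≤ a/4)
    (hGb : ∀ z, v < z → z < w → G φ a z ≤ gB) (hgB0 : 0 ≤ gB)
    (hκ : ∀ x, v ≤ x → x < w → κ ≤ eta φ a x)
    (n : ℕ) (u : ℕ → ℝ) (hu : Monotone u) (hrange : ∀ i, u i ∈ Set.Icc v w) :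
    famSum φ a n u ≤ (max gB κ - κ) + pos (eta φ a w - κ) := by
  set g : ℝ → ℝ := fun x => if x < w then max (BB φ a v x) κ
    else max gB κ + pos (eta φ a w - κ) with hg
  have hgtop : ∀ x, g x ≤ max gB κ + pos (eta φ a w - κ) := by
    intro x
    by_cases hx : x < w
    · simp only [hg, if_pos hx]
      have : BB φ a v x ≤ gB := BB_le_gB hGb hgB0 hx
      have := max_le_max this (le_refl κ)
      have := pos_nonneg (eta φ a w - κ)
      linarith
    · simp only [hg, if_neg hx]
      exact le_rfl
  have hgκ : ∀ x, κ ≤ g x := by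
    intro x
    by_cases hx : x < w
    · simp only [hg, if_pos hx]; exact le_max_right _ _
    · simp only [hg, if_neg hx]
      have := pos_nonneg (eta φ a w - κ)
      have : κ ≤ max gB κ := le_max_right _ _
      linarith [pos_nonneg (eta φ a w - κ)]
  have hmono : ∀ i j : ℕ, i ≤ j → g (u i) ≤ g (u j) := by
    intro i j hij
    have hxy : u i ≤ u j := hu hij
    by_cases hyw : u j < w
    · have hxw : u i < w := lt_of_le_of_lt hxy hyw
      simp only [hg, if_pos hxw, if_pos hyw]
      exact max_le_max (BB_mono' hGb hxy hyw) (le_refl κ)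
    · calc g (u i) ≤ max gB κ + pos (eta φ a w - κ) := hgtop _
      _ = g (u j) := by simp [hg, if_neg hyw]
  have hpair : ∀ i, i < n → pos (eta φ a (u (2*i+1)) - eta φ a (u (2*i)))
      ≤ g (u (2*i+1)) - g (u (2*i)) := by
    intro i _
    set c := u (2*i)
    set b := u (2*i+1)
    have hcb : c ≤ b := hu (by omega)
    have hcr := hrange (2*i)
    have hbr := hrange (2*i+1)
    by_cases hbw : b < w
    · simp only [hg, if_pos hbw, if_pos (lt_of_le_of_lt hcb hbw)]
      exact band_pair H hv hosc hGb hκ hcr.1 hcb hbw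
    · have hbeq : b = w := le_antisymm hbr.2 (not_lt.mp hbw)
      by_cases hcw : c < w
      · simp only [hg, if_neg hbw, if_pos hcw]
        have h1 : pos (eta φ a b - eta φ a c) ≤ pos (eta φ a w - κ) := by
          rw [hbeq]
          exact pos_mono (by linarith [hκ c hcr.1 hcw])
        have h2 : max (BB φ a v c) κ ≤ max gB κ :=
          max_le_max (BB_le_gB hGb hgB0 hcw) (le_refl κ)
        linarith
      · have hceq : c = w := le_antisymm hcr.2 (not_lt.mp hcw)
        simp only [hg, if_neg hbw, if_neg hcw]
        rw [hbeq, hceq, sub_self, pos_eq_zero (le_refl 0), sub_self]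
  have := famSum_le_of_pairbound n u g hmono hpair
  have h1 : g (u (2*n)) ≤ max gB κ + pos (eta φ a w - κ) := hgtop _
  have h2 : κ ≤ g (u 0) := hgκ _
  linarith

end Band
/-- A partition of `[0,T]` into finitely many half-open intervals on which `φ`
oscillates by at most `a/4`. -/
def OKpart (φ : ℝ → ℝ) (a T : ℝ) : Prop :=
  ∃ n : ℕ, ∃ v : ℕ → ℝ, Monotone v ∧ v 0 = 0 ∧ (∀ j, n ≤ j → v j = T) ∧
    (∀ j, j < n → v j < v (j+1)) ∧
    ∀ j, j < n → ∀ p ∈ Set.Ico (v j) (v (j+1)), ∀ z ∈ Set.Ico (v j) (v (j+1)),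
      |φ p - φ z| ≤ a/4

lemma OK_extend {x y : ℝ} (hOK : OKpart φ a x) (hxy : x < y)
    (hband : ∀ p ∈ Set.Ico x y, ∀ z ∈ Set.Ico x y, |φ p - φ z| ≤ a/4) :
    OKpart φ a y := by
  obtain ⟨n, v, hmono, h0, htail, hstrict, hosc⟩ := hOK
  refine ⟨n+1, fun j => if j ≤ n then v j else y, ?_, ?_, ?_, ?_, ?_⟩
  · intro i j hij
    dsimp only
    by_cases hj : j ≤ n
    · rw [if_pos (le_trans hij hj), if_pos hj]; exact hmono hij
    · rw [if_neg hj]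
      by_cases hi : i ≤ n
      · rw [if_pos hi]
        exact le_trans (le_of_le_of_eq (hmono hi) (htail n le_rfl)) (le_of_lt hxy)
      · rw [if_neg hi]
  · dsimp only
    rw [if_pos (Nat.zero_le n)]; exact h0
  · intro j hj
    dsimp only
    rw [if_neg (by omega)]
  · intro j hj
    dsimp only
    rcases Nat.lt_or_ge j n with h | h
    · rw [if_pos (by omega), if_pos (by omega)]; exact hstrict j h
    · have hjn : j = n := by omega
      rw [if_pos (le_of_eq hjn), if_neg (by omega), hjn, htail n le_rfl]
      exact hxy
  · intro j hj p hp z hz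
    dsimp only at hp hz ⊢
    rcases Nat.lt_or_ge j n with h | h
    · rw [if_pos (by omega), if_pos (by omega)] at hp hz
      exact hosc j h p hp z hz
    · have hjn : j = n := by omega
      rw [if_pos (le_of_eq hjn), if_neg (by omega), hjn, htail n le_rfl] at hp hz
      exact hband p hp z hz

lemma osc_partition (H : Hyp φ a) {T : ℝ} (hT : 0 < T) : OKpart φ a T := by
  have hOK0 : OKpart φ a 0 :=
    ⟨0, fun _ => 0, monotone_const, rfl, fun _ _ => rfl, fun j hj => by omega,
      fun j hj => by omega⟩
  set S : Set ℝ := {x | 0 ≤ x ∧ x ≤ T ∧ OKpart φ a x} with hS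
  have h0S : (0:ℝ) ∈ S := ⟨le_rfl, hT.le, hOK0⟩
  have hne : S.Nonempty := ⟨0, h0S⟩
  have hbdd : BddAbove S := ⟨T, fun x hx => hx.2.1⟩
  set c := sSup S with hc
  have hc0 : 0 ≤ c := le_csSup hbdd h0S
  have hcT : c ≤ T := csSup_le hne (fun x hx => hx.2.1)
  have hcS : c ∈ S := by
    rcases eq_or_lt_of_le hc0 with h | h
    · rw [← h]; exact h0S
    · obtain ⟨l, hl⟩ := H.ll c h
      rw [Metric.tendsto_nhdsWithin_nhds] at hl
      obtain ⟨δ, hδ, hw⟩ := hl (a/8) (by linarith [H.ha])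
      set d := min δ c with hd
      have hd0 : 0 < d := lt_min hδ h
      obtain ⟨x, hxS, hxc⟩ := exists_lt_of_lt_csSup hne (show c - d < c by linarith)
      have hxc' : x ≤ c := le_csSup hbdd hxS
      have hOKc : OKpart φ a c := by
        rcases eq_or_lt_of_le hxc' with heq | hlt
        · rw [← heq]; exact hxS.2.2
        · apply OK_extend hxS.2.2 hlt
          intro p hp z hz
          have hwin : ∀ u, x ≤ u → u < c → |φ u - l| ≤ a/8 := by
            intro u h1 h2
            have : dist u c < δ := by
              rw [Real.dist_eq, abs_of_nonpos (by linarith)]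
              have : c - d ≤ u := le_trans (le_of_lt hxc) h1
              have : d ≤ δ := min_le_left _ _
              linarith
            exact le_of_lt (by simpa [Real.dist_eq] using hw h2 this)
          have h1 := hwin p hp.1 hp.2
          have h2 := hwin z hz.1 hz.2
          have := abs_sub_le (φ p) l (φ z)
          rw [abs_sub_comm l (φ z)] at this
          linarith
      exact ⟨hc0, hcT, hOKc⟩
  rcases eq_or_lt_of_le hcT with h | h
  · rw [← h]; exact hcS.2.2
  · exfalso
    obtain ⟨δ, hδ, hw⟩ := rc_eps H hc0 (show (0:ℝ) < a/8 by linarith [H.ha])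
    set y := min T (c + δ/2) with hy
    have hyc : c < y := lt_min h (by linarith)
    have hyS : y ∈ S := by
      refine ⟨by linarith, min_le_left _ _, ?_⟩
      apply OK_extend hcS.2.2 hyc
      intro p hp z hz
      have hy2 : y ≤ c + δ/2 := min_le_right _ _
      have h1 := abs_le.mp (hw p hp.1 (by linarith [hp.2]))
      have h2 := abs_le.mp (hw z hz.1 (by linarith [hz.2]))
      rw [abs_le]
      constructor <;> linarith
    have := le_csSup hbdd hyS
    linarith

/-- Finding the band containing a point. -/
lemma exists_band (v : ℕ → ℝ) (n : ℕ) (x : ℝ) (h0 : v 0 ≤ x) (hn : x < v n) :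
    ∃ j, j < n ∧ v j ≤ x ∧ x < v (j+1) := by
  induction n with
  | zero => exact absurd hn (not_lt.mpr h0)
  | succ n ih =>
    rcases le_or_gt (v n) x with h | h
    · exact ⟨n, by omega, h, hn⟩
    · obtain ⟨j, hj, h1, h2⟩ := ih h
      exact ⟨j, by omega, h1, h2⟩

/-- Global bound on family sums over `[0,T]`. -/
lemma famSum_glob (H : Hyp φ a) {T : ℝ} (hT : 0 < T) :
    ∃ C, 0 ≤ C ∧ ∀ n u, Monotone u → (∀ i, u i ∈ Set.Icc 0 T) → famSum φ a n u ≤ C := by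
  obtain ⟨n, v, hmono, h0, htail, hstrict, hosc⟩ := osc_partition H hT
  have hvT : ∀ j, v j ≤ T := fun j => by
    rcases le_or_gt n j with h | h
    · exact le_of_eq (htail j h)
    · exact le_trans (hmono h.le) (le_of_eq (htail n le_rfl))
  have hv0 : ∀ j, 0 ≤ v j := fun j => h0 ▸ hmono (Nat.zero_le j)
  -- a bound for φ on [0,T]
  set M := ((Finset.range (n+1)).sup' ⟨0, Finset.mem_range.mpr (by omega)⟩
    (fun j => φ (v j))) + a/4 with hM
  have hMb : ∀ x ∈ Set.Icc (0:ℝ) T, φ x ≤ M := by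
    intro x hx
    rcases eq_or_lt_of_le hx.2 with h | h
    · rw [h, ← htail n le_rfl]
      rw [hM]
      have : φ (v n) ≤ (Finset.range (n+1)).sup' ⟨0, Finset.mem_range.mpr (by omega)⟩
          (fun j => φ (v j)) :=
        Finset.le_sup' (fun j => φ (v j)) (Finset.mem_range.mpr (show n < n+1 by omega))
      linarith [H.ha]
    · obtain ⟨j, hj, h1, h2⟩ := exists_band v n x (h0 ▸ hx.1) (htail n le_rfl ▸ h)
      have := abs_le.mp (hosc j hj x ⟨h1, h2⟩ (v j) ⟨le_rfl, lt_of_le_of_lt h1 h2⟩)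
      have hφvj : φ (v j) ≤ (Finset.range (n+1)).sup' ⟨0, Finset.mem_range.mpr (by omega)⟩
          (fun j => φ (v j)) :=
        Finset.le_sup' (fun j => φ (v j)) (Finset.mem_range.mpr (show j < n+1 by omega))
      rw [hM]; linarith
  have hM0 : 0 ≤ M := by
    have := hMb 0 ⟨le_rfl, hT.le⟩
    have := H.nonneg 0 le_rfl
    linarith
  -- induction over bands
  have claim : ∀ j, j ≤ n → ∀ m u, Monotone u → (∀ i, u i ∈ Set.Icc 0 (v j)) →
      famSum φ a m u ≤ 2*M*j := by
    intro j
    induction j with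
    | zero =>
      intro _ m u hu hrange
      have : ∀ i, u i = 0 := fun i => le_antisymm (h0 ▸ (hrange i).2) (hrange i).1
      have : famSum φ a m u = 0 := by
        rw [famSum]
        apply Finset.sum_eq_zero
        intro i _
        rw [this (2*i+1), this (2*i), sub_self, pos_eq_zero le_rfl]
      rw [this]; norm_num
    | succ j ih =>
      intro hj m u hu hrange
      have hjn : j < n := by omega
      have hband : famSum φ a m (fun i => max (u i) (v j)) ≤ 2*M := by
        have := famSum_band (w := v (j+1)) (gB := M) (κ := 0) H (hv0 j)
          (hosc j hjn)
          (fun z hz1 hz2 => max_le (by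
            have : φ z ≤ M := hMb z ⟨le_trans (hv0 j) hz1.le, le_trans hz2.le (hvT (j+1))⟩
            linarith [H.ha]) hM0)
          hM0
          (fun x hx1 _ => eta_nonneg H (le_trans (hv0 j) hx1))
          m (fun i => max (u i) (v j)) (fun i k hik => max_le_max (hu hik) le_rfl)
          (fun i => ⟨le_max_right _ _, max_le (hrange i).2 (hmono (by omega))⟩)
        have h1 : pos (eta φ a (v (j+1)) - 0) ≤ M := by
          rw [sub_zero]
          exact pos_le (le_trans (eta_le_phi H (hv0 (j+1)))
            (hMb _ ⟨hv0 (j+1), hvT (j+1)⟩)) hM0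
        have h2 : max M 0 = M := max_eq_left hM0
        rw [h2] at this
        linarith
      have hsplit := famSum_split (φ := φ) (a := a) (v j) m u hu
      have hfirst : famSum φ a m (fun i => min (u i) (v j)) ≤ 2*M*j :=
        ih (by omega) m _ (fun i k hik => min_le_min (hu hik) le_rfl)
          (fun i => ⟨le_min (hrange i).1 (hv0 j), min_le_right _ _⟩)
      have : (j:ℝ) + 1 = ((j+1 : ℕ) : ℝ) := by push_cast; ring
      calc famSum φ a m u ≤ _ + _ := hsplit
        _ ≤ 2*M*j + 2*M := add_le_add hfirst hband
        _ = 2*M*((j:ℝ)+1) := by ring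
        _ = 2*M*((j+1:ℕ):ℝ) := by rw [this]
  exact ⟨2*M*n, by positivity, fun m u hu hr => claim n le_rfl m u hu
    (by rw [htail n le_rfl]; exact hr)⟩

def famSet (φ : ℝ → ℝ) (a x y : ℝ) : Set ℝ :=
  {r | ∃ n u, Monotone u ∧ (∀ i, u i ∈ Set.Icc x y) ∧ r = famSum φ a n u}

noncomputable def Pfun (φ : ℝ → ℝ) (a t : ℝ) : ℝ := sSup (famSet φ a 0 (max t 0))

lemma zero_mem_famSet {x y : ℝ} (hxy : x ≤ y) : (0:ℝ) ∈ famSet φ a x y :=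
  ⟨0, fun _ => x, monotone_const, fun _ => ⟨le_rfl, hxy⟩, by simp [famSum]⟩

lemma famSet_bddAbove (H : Hyp φ a) {y : ℝ} (hy : 0 ≤ y) :
    BddAbove (famSet φ a 0 y) := by
  rcases eq_or_lt_of_le hy with h | h
  · refine ⟨0, ?_⟩
    rintro r ⟨m, u, hu, hrange, rfl⟩
    have : ∀ i, u i = 0 := fun i => le_antisymm (h ▸ (hrange i).2) (hrange i).1
    rw [famSum]
    apply le_of_eq
    apply Finset.sum_eq_zero
    intro i _
    rw [this (2*i+1), this (2*i), sub_self, pos_eq_zero le_rfl]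
  · obtain ⟨C, hC0, hC⟩ := famSum_glob H h
    refine ⟨C, ?_⟩
    rintro r ⟨m, u, hu, hrange, rfl⟩
    exact hC m u hu hrange

lemma Pfun_eq {t : ℝ} (ht : 0 ≤ t) : Pfun φ a t = sSup (famSet φ a 0 t) := by
  rw [Pfun, max_eq_left ht]

lemma Pfun_nonneg (H : Hyp φ a) (t : ℝ) : 0 ≤ Pfun φ a t :=
  le_csSup (famSet_bddAbove H (le_max_right t 0)) (zero_mem_famSet (le_max_right t 0))

lemma Pfun_zero (H : Hyp φ a) : Pfun φ a 0 = 0 := by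
  rw [Pfun_eq le_rfl]
  apply le_antisymm
  · apply csSup_le ⟨0, zero_mem_famSet le_rfl⟩
    rintro r ⟨m, u, hu, hrange, rfl⟩
    have : ∀ i, u i = 0 := fun i => le_antisymm (hrange i).2 (hrange i).1
    apply le_of_eq
    apply Finset.sum_eq_zero
    intro i _
    rw [this (2*i+1), this (2*i), sub_self, pos_eq_zero le_rfl]
  · exact le_csSup (famSet_bddAbove H le_rfl) (zero_mem_famSet le_rfl)

lemma Pfun_mono (H : Hyp φ a) : Monotone (Pfun φ a) := by
  intro t₁ t₂ h12
  apply csSup_le_csSup (famSet_bddAbove H (le_max_right t₂ 0))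
    ⟨0, zero_mem_famSet (le_max_right t₁ 0)⟩
  rintro r ⟨m, u, hu, hrange, rfl⟩
  exact ⟨m, u, hu, fun i => ⟨(hrange i).1, le_trans (hrange i).2
    (max_le_max h12 le_rfl)⟩, rfl⟩

lemma le_Pfun (H : Hyp φ a) {t : ℝ} (ht : 0 ≤ t) (n : ℕ) (u : ℕ → ℝ) (hu : Monotone u)
    (hrange : ∀ i, u i ∈ Set.Icc 0 t) : famSum φ a n u ≤ Pfun φ a t := by
  rw [Pfun_eq ht]
  exact le_csSup (famSet_bddAbove H ht) ⟨n, u, hu, hrange, rfl⟩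

lemma Pfun_incr_le (H : Hyp φ a) {t₁ t₂ C : ℝ} (h1 : 0 ≤ t₁) (h12 : t₁ ≤ t₂) (hC : 0 ≤ C)
    (h : ∀ n u, Monotone u → (∀ i, u i ∈ Set.Icc t₁ t₂) → famSum φ a n u ≤ C) :
    Pfun φ a t₂ ≤ Pfun φ a t₁ + C := by
  rw [Pfun_eq (le_trans h1 h12)]
  apply csSup_le ⟨0, zero_mem_famSet (le_trans h1 h12)⟩
  rintro r ⟨m, u, hu, hrange, rfl⟩
  have hsplit := famSum_split (φ := φ) (a := a) t₁ m u hu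
  have hfirst : famSum φ a m (fun i => min (u i) t₁) ≤ Pfun φ a t₁ :=
    le_Pfun H h1 m _ (fun i k hik => min_le_min (hu hik) le_rfl)
      (fun i => ⟨le_min (hrange i).1 h1, min_le_right _ _⟩)
  have hsecond : famSum φ a m (fun i => max (u i) t₁) ≤ C :=
    h m _ (fun i k hik => max_le_max (hu hik) le_rfl)
      (fun i => ⟨le_max_right _ _, max_le (hrange i).2 h12⟩)
  linarith

lemma Pfun_super (H : Hyp φ a) {t₁ t₂ : ℝ} (h1 : 0 ≤ t₁) (h12 : t₁ ≤ t₂) :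
    Pfun φ a t₁ + pos (eta φ a t₂ - eta φ a t₁) ≤ Pfun φ a t₂ := by
  have ht₂ : 0 ≤ t₂ := le_trans h1 h12
  have key : ∀ r ∈ famSet φ a 0 t₁, r + pos (eta φ a t₂ - eta φ a t₁) ≤ Pfun φ a t₂ := by
    rintro r ⟨m, u, hu, hrange, rfl⟩
    set u' : ℕ → ℝ := fun i => if i < 2*m then u i else if i = 2*m then t₁ else t₂ with hu'
    have hu'val : ∀ i, u' i = if i < 2*m then u i else if i = 2*m then t₁ else t₂ :=
      fun i => rfl
    have hu'mono : Monotone u' := by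
      intro i j hij
      rw [hu'val i, hu'val j]
      by_cases hj : j < 2*m
      · rw [if_pos (by omega : i < 2*m), if_pos hj]; exact hu hij
      · by_cases hi : i < 2*m
        · rw [if_pos hi, if_neg hj]
          have hle : u i ≤ t₁ := (hrange i).2
          by_cases hj2 : j = 2*m
          · rw [if_pos hj2]; exact hle
          · rw [if_neg hj2]; exact le_trans hle h12
        · rw [if_neg hi, if_neg hj]
          by_cases hi2 : i = 2*m
          · rw [if_pos hi2]
            by_cases hj2 : j = 2*m
            · rw [if_pos hj2]
            · rw [if_neg hj2]; exact h12
          · rw [if_neg hi2, if_neg (show ¬ j = 2*m by omega)]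
    have hu'range : ∀ i, u' i ∈ Set.Icc 0 t₂ := by
      intro i
      rw [hu'val i]
      by_cases hi : i < 2*m
      · rw [if_pos hi]
        exact ⟨(hrange i).1, le_trans (hrange i).2 h12⟩
      · by_cases hi2 : i = 2*m
        · rw [if_neg hi, if_pos hi2]; exact ⟨h1, h12⟩
        · rw [if_neg hi, if_neg hi2]; exact ⟨ht₂, le_rfl⟩
    have hsum : famSum φ a (m+1) u' = famSum φ a m u + pos (eta φ a t₂ - eta φ a t₁) := by
      rw [famSum, Finset.sum_range_succ]
      congr 1
      · apply Finset.sum_congr rfl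
        intro i hi
        have hi' : i < m := Finset.mem_range.mp hi
        rw [hu'val (2*i+1), hu'val (2*i),
          if_pos (show 2*i+1 < 2*m by omega), if_pos (show 2*i < 2*m by omega)]
      · rw [hu'val (2*m+1), hu'val (2*m),
          if_neg (show ¬ (2*m+1 < 2*m) by omega), if_neg (show ¬ (2*m+1 = 2*m) by omega),
          if_neg (show ¬ (2*m < 2*m) by omega), if_pos rfl]
    have := le_Pfun H ht₂ (m+1) u' hu'mono hu'range
    rw [hsum] at this
    linarith
  have : Pfun φ a t₁ ≤ Pfun φ a t₂ - pos (eta φ a t₂ - eta φ a t₁) := by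
    rw [Pfun_eq h1]
    apply csSup_le ⟨0, zero_mem_famSet h1⟩
    intro r hr
    linarith [key r hr]
  linarith
noncomputable def etat (φ : ℝ → ℝ) (a t : ℝ) : ℝ := eta φ a (max t 0)

noncomputable def Nt (φ : ℝ → ℝ) (a t : ℝ) : ℝ := Pfun φ a t - etat φ a t

lemma etat_eq {t : ℝ} (ht : 0 ≤ t) : etat φ a t = eta φ a t := by
  rw [etat, max_eq_left ht]

lemma Pfun_max (t : ℝ) : Pfun φ a t = Pfun φ a (max t 0) := by
  rw [Pfun, Pfun, max_eq_left (le_max_right t 0)]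

lemma Pfun_neg (H : Hyp φ a) {t : ℝ} (ht : t ≤ 0) : Pfun φ a t = 0 := by
  have h : max t 0 = 0 := max_eq_right ht
  have h2 := Pfun_zero H
  rw [Pfun] at h2 ⊢
  rw [h]
  rwa [show max (0:ℝ) 0 = 0 from max_self 0] at h2

lemma Nt_mono (H : Hyp φ a) : Monotone (Nt φ a) := by
  intro t₁ t₂ h12
  have hm : max t₁ 0 ≤ max t₂ 0 := max_le_max h12 le_rfl
  have hsuper := Pfun_super H (le_max_right t₁ 0) hm
  have hpos : eta φ a (max t₂ 0) - eta φ a (max t₁ 0)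
      ≤ pos (eta φ a (max t₂ 0) - eta φ a (max t₁ 0)) := le_max_left _ _
  have e1 : Pfun φ a t₁ = Pfun φ a (max t₁ 0) := Pfun_max t₁
  have e2 : Pfun φ a t₂ = Pfun φ a (max t₂ 0) := Pfun_max t₂
  rw [Nt, Nt, etat, etat, e1, e2]
  linarith

/-- key right-continuity estimate for Pfun. -/
lemma Pfun_rc_est (H : Hyp φ a) {x : ℝ} (hx : 0 ≤ x) {ε : ℝ} (hε : 0 < ε) (hεa : ε ≤ a/8) :
    ∃ δ > 0, ∀ y, x ≤ y → y < x + δ → Pfun φ a y ≤ Pfun φ a x + 4*ε := by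
  obtain ⟨δ₁, hδ₁, hw₁⟩ := rc_eps H hx hε
  obtain ⟨δ₂, hδ₂, hw₂⟩ := eta_rc H hx hε
  refine ⟨min δ₁ δ₂, lt_min hδ₁ hδ₂, fun y hy1 hy2 => ?_⟩
  set w := (y + (x + min δ₁ δ₂))/2 with hwdef
  have hyw : y < w := by rw [hwdef]; linarith
  have hww : w < x + min δ₁ δ₂ := by rw [hwdef]; linarith
  have hw1 : w < x + δ₁ := lt_of_lt_of_le hww (by simp [min_le_left])
  have hw2 : w < x + δ₂ := lt_of_lt_of_le hww (by simp [min_le_right])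
  have hband : ∀ n u, Monotone u → (∀ i, u i ∈ Set.Icc x y) → famSum φ a n u ≤ 4*ε := by
    intro n u hu hrange
    have hosc : ∀ p ∈ Set.Ico x w, ∀ z ∈ Set.Ico x w, |φ p - φ z| ≤ a/4 := by
      intro p hp z hz
      have h1 := abs_le.mp (hw₁ p hp.1 (by linarith [hp.2]))
      have h2 := abs_le.mp (hw₁ z hz.1 (by linarith [hz.2]))
      rw [abs_le]; constructor <;> linarith
    have hGb : ∀ z, x < z → z < w → G φ a z ≤ G φ a x + ε := by
      intro z hz1 hz2
      have h1 := abs_le.mp (hw₁ z hz1.le (by linarith))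
      apply max_le
      · have : φ x - a ≤ G φ a x := le_max_left _ _
        linarith
      · have := G_nonneg (φ := φ) (a := a) x
        linarith
    have hκ : ∀ z, x ≤ z → z < w → eta φ a x - ε ≤ eta φ a z := by
      intro z hz1 hz2
      have := abs_le.mp (hw₂ z hz1 (by linarith))
      linarith
    have := famSum_band (w := w) (gB := G φ a x + ε) (κ := eta φ a x - ε) H hx hosc hGb
      (by linarith [G_nonneg (φ := φ) (a := a) x]) hκ n u hu
      (fun i => ⟨(hrange i).1, le_trans (hrange i).2 hyw.le⟩)
    have hmax : max (G φ a x + ε) (eta φ a x - ε) ≤ eta φ a x + ε :=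
      max_le (by linarith [G_le_eta H hx]) (by linarith)
    have hetaw : eta φ a w ≤ eta φ a x + ε := by
      have := abs_le.mp (hw₂ w (le_trans hy1 hyw.le) (by linarith))
      linarith
    have hpos2 : pos (eta φ a w - (eta φ a x - ε)) ≤ 2*ε := pos_le (by linarith) (by linarith)
    linarith
  have := Pfun_incr_le H hx hy1 (by linarith : (0:ℝ) ≤ 4*ε) hband
  linarith

lemma Pfun_rc (H : Hyp φ a) (x : ℝ) : ContinuousWithinAt (Pfun φ a) (Set.Ici x) x := by
  rcases lt_or_ge x 0 with hx | hx
  · -- locally constant 0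
    have hev : ∀ᶠ y in nhdsWithin x (Set.Ici x), Pfun φ a y = 0 := by
      have hnb : Set.Iio (0:ℝ) ∈ nhdsWithin x (Set.Ici x) :=
        mem_nhdsWithin_of_mem_nhds (Iio_mem_nhds hx)
      filter_upwards [hnb] with y hy using Pfun_neg H (le_of_lt hy)
    have hx0 : Pfun φ a x = 0 := Pfun_neg H hx.le
    apply ContinuousWithinAt.congr_of_eventuallyEq continuousWithinAt_const hev hx0
  · rw [Metric.continuousWithinAt_iff]
    intro ε hε
    set ε' := min (ε/5) (a/8) with hε'
    have hε'0 : 0 < ε' := lt_min (by linarith) (by linarith [H.ha])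
    obtain ⟨δ, hδ, hest⟩ := Pfun_rc_est H hx hε'0 (min_le_right _ _)
    refine ⟨δ, hδ, fun y hy hdist => ?_⟩
    have hy1 : x ≤ y := hy
    have hy2 : y < x + δ := by
      rw [Real.dist_eq, abs_of_nonneg (by linarith)] at hdist
      linarith
    have h1 := hest y hy1 hy2
    have h2 : Pfun φ a x ≤ Pfun φ a y := Pfun_mono H hy1
    rw [Real.dist_eq, abs_of_nonneg (by linarith)]
    have : ε' ≤ ε/5 := min_le_left _ _
    linarith

lemma etat_rc (H : Hyp φ a) (x : ℝ) : ContinuousWithinAt (etat φ a) (Set.Ici x) x := by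
  rcases lt_or_ge x 0 with hx | hx
  · have hev : ∀ᶠ y in nhdsWithin x (Set.Ici x), etat φ a y = eta φ a 0 := by
      have hnb : Set.Iio (0:ℝ) ∈ nhdsWithin x (Set.Ici x) :=
        mem_nhdsWithin_of_mem_nhds (Iio_mem_nhds hx)
      filter_upwards [hnb] with y hy
      rw [etat, max_eq_right (le_of_lt hy)]
    have hx0 : etat φ a x = eta φ a 0 := by rw [etat, max_eq_right hx.le]
    exact ContinuousWithinAt.congr_of_eventuallyEq continuousWithinAt_const hev hx0
  · rw [Metric.continuousWithinAt_iff]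
    intro ε hε
    obtain ⟨δ, hδ, hw⟩ := eta_rc H hx (half_pos hε)
    refine ⟨δ, hδ, fun y hy hdist => ?_⟩
    have hy1 : x ≤ y := hy
    have hy2 : y < x + δ := by
      rw [Real.dist_eq, abs_of_nonneg (by linarith)] at hdist
      linarith
    have := hw y hy1 hy2
    rw [etat_eq (le_trans hx hy1), etat_eq hx, Real.dist_eq]
    linarith [abs_le.mp this, hε]

lemma Nt_rc (H : Hyp φ a) (x : ℝ) : ContinuousWithinAt (Nt φ a) (Set.Ici x) x :=
  (Pfun_rc H x).sub (etat_rc H x)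

lemma Nt_neg (H : Hyp φ a) {t : ℝ} (ht : t ≤ 0) : Nt φ a t = 0 := by
  rw [Nt, Pfun_neg H ht, etat, max_eq_right ht, eta_zero H, sub_zero]
lemma pos_add_const {x c : ℝ} (hc : 0 ≤ c) : pos (x + c) ≤ pos x + c := by
  have := pos_nonneg x
  exact max_le (add_le_add (le_max_left _ _) le_rfl) (by linarith)

lemma left_window {f : ℝ → ℝ} {t l : ℝ} (h : Filter.Tendsto f (nhdsWithin t (Set.Iio t)) (nhds l))
    {ε : ℝ} (hε : 0 < ε) :
    ∃ δ > 0, ∀ u, t - δ < u → u < t → |f u - l| ≤ ε := by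
  rw [Metric.tendsto_nhdsWithin_nhds] at h
  obtain ⟨δ, hδ, hw⟩ := h ε hε
  refine ⟨δ, hδ, fun u h1 h2 => ?_⟩
  have hd : dist u t < δ := by
    rw [Real.dist_eq, abs_of_nonpos (by linarith)]; linarith
  exact le_of_lt (by simpa [Real.dist_eq] using hw h2 hd)

lemma pick_s {t δ : ℝ} (ht : 0 < t) (hδ : 0 < δ) : ∃ s, 0 < s ∧ s < t ∧ t - δ < s :=
  ⟨max (t - δ/2) (t/2), lt_max_of_lt_right (by linarith),
    max_lt (by linarith) (by linarith), lt_max_of_lt_left (by linarith)⟩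

lemma eta_tendsto_left (H : Hyp φ a) {t : ℝ} (ht : 0 < t) :
    Filter.Tendsto (eta φ a) (nhdsWithin t (Set.Iio t))
      (nhds (Function.leftLim (Pfun φ a) t - Function.leftLim (Nt φ a) t)) := by
  have h1 := (Pfun_mono H).tendsto_leftLim t
  have h2 := (Nt_mono H).tendsto_leftLim t
  have h3 := h1.sub h2
  apply Filter.Tendsto.congr' _ h3
  have hmem : Set.Ioo (0:ℝ) t ∈ nhdsWithin t (Set.Iio t) :=
    Ioo_mem_nhdsLT_of_mem ⟨ht, le_rfl⟩
  filter_upwards [hmem] with y hy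
  rw [Nt, etat_eq hy.1.le]
  ring

section LeftLemmas

variable {t l L : ℝ}

lemma L_le_l (H : Hyp φ a) (ht : 0 < t)
    (hl : Filter.Tendsto φ (nhdsWithin t (Set.Iio t)) (nhds l))
    (hη : Filter.Tendsto (eta φ a) (nhdsWithin t (Set.Iio t)) (nhds L)) : L ≤ l := by
  apply le_of_tendsto_of_tendsto hη hl
  filter_upwards [Ioo_mem_nhdsLT_of_mem (Set.mem_Ioc.mpr ⟨ht, le_rfl⟩)] with y hy
  exact eta_le_phi H hy.1.le

lemma L_nonneg (H : Hyp φ a) (ht : 0 < t)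
    (hη : Filter.Tendsto (eta φ a) (nhdsWithin t (Set.Iio t)) (nhds L)) : 0 ≤ L := by
  apply ge_of_tendsto hη
  filter_upwards [Ioo_mem_nhdsLT_of_mem (Set.mem_Ioc.mpr ⟨ht, le_rfl⟩)] with y hy
  exact eta_nonneg H hy.1.le

lemma posl_le_L (H : Hyp φ a) (ht : 0 < t)
    (hl : Filter.Tendsto φ (nhdsWithin t (Set.Iio t)) (nhds l))
    (hη : Filter.Tendsto (eta φ a) (nhdsWithin t (Set.Iio t)) (nhds L)) :
    max (l - a) 0 ≤ L := by
  have hcont : Continuous (fun z : ℝ => max (z - a) 0) :=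
    (continuous_id.sub continuous_const).max continuous_const
  have hG : Filter.Tendsto (fun y => max (φ y - a) 0) (nhdsWithin t (Set.Iio t))
      (nhds (max (l - a) 0)) := (hcont.tendsto l).comp hl
  apply le_of_tendsto_of_tendsto hG hη
  filter_upwards [Ioo_mem_nhdsLT_of_mem (Set.mem_Ioc.mpr ⟨ht, le_rfl⟩)] with y hy
  exact G_le_eta H hy.1.le

lemma LLA (H : Hyp φ a) (ht : 0 < t)
    (hl : Filter.Tendsto φ (nhdsWithin t (Set.Iio t)) (nhds l))
    (hη : Filter.Tendsto (eta φ a) (nhdsWithin t (Set.Iio t)) (nhds L))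
    (hΛ : φ t - eta φ a t < a) : eta φ a t ≤ L := by
  have hLG := posl_le_L H ht hl hη
  have hL0 := L_nonneg H ht hη
  by_contra hgt
  push_neg at hgt
  set ε := (eta φ a t - L)/2 with hεdef
  have hε : 0 < ε := by rw [hεdef]; linarith
  obtain ⟨δ₁, hδ₁, hw₁⟩ := left_window hl hε
  obtain ⟨δ₂, hδ₂, hw₂⟩ := left_window hη hε
  obtain ⟨s, hs0, hst, hsδ⟩ := pick_s ht (lt_min hδ₁ hδ₂)
  have hsδ₁ : t - δ₁ < s := by have := min_le_left δ₁ δ₂; linarith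
  have hsδ₂ : t - δ₂ < s := by have := min_le_right δ₁ δ₂; linarith
  have hηs := abs_le.mp (hw₂ s hsδ₂ hst)
  have hsplit : eta φ a t ≤ max (eta φ a s) (max (max (l - a) 0 + ε) (G φ a t)) := by
    apply eta_split_ub H hs0.le hst.le
    intro u hu1 hu2
    rcases eq_or_lt_of_le hu2 with heq | hlt
    · rw [heq]
      exact le_max_right _ _
    · have hb := abs_le.mp (hw₁ u (by linarith) hlt)
      have hGu : G φ a u ≤ max (l - a) 0 + ε := by
        apply max_le
        · have h' : l - a ≤ max (l - a) 0 := le_max_left _ _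
          linarith
        · have h' : (0:ℝ) ≤ max (l - a) 0 := le_max_right _ _
          linarith
      exact le_trans hGu (le_max_left _ _)
  have h1 : eta φ a s ≤ L + ε := by linarith
  have h2 : max (l - a) 0 + ε ≤ L + ε := by linarith
  have h3 : eta φ a t ≤ max (L + ε) (G φ a t) := by
    calc eta φ a t ≤ max (eta φ a s) (max (max (l - a) 0 + ε) (G φ a t)) := hsplit
    _ ≤ max (L + ε) (max (L + ε) (G φ a t)) :=
        max_le_max h1 (max_le_max h2 le_rfl)
    _ = max (L + ε) (G φ a t) := by rw [← max_assoc, max_self]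
  have hεt : L + ε < eta φ a t := by rw [hεdef]; linarith
  have h4 : eta φ a t ≤ G φ a t := by
    rcases max_cases (L + ε) (G φ a t) with ⟨he, h⟩ | ⟨he, h⟩
    · rw [he] at h3; linarith
    · rwa [he] at h3
  have h5 : G φ a t ≤ eta φ a t := G_le_eta H (by linarith)
  have h6 : eta φ a t = G φ a t := le_antisymm h4 h5
  rcases max_cases (φ t - a) (0:ℝ) with ⟨he, h⟩ | ⟨he, h⟩
  · rw [G, he] at h6; linarith
  · rw [G, he] at h6; linarith

lemma LLB (H : Hyp φ a) (ht : 0 < t)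
    (hl : Filter.Tendsto φ (nhdsWithin t (Set.Iio t)) (nhds l))
    (hη : Filter.Tendsto (eta φ a) (nhdsWithin t (Set.Iio t)) (nhds L))
    (hΛ : 0 < φ t - eta φ a t) : L ≤ eta φ a t := by
  have hLl := L_le_l H ht hl hη
  by_contra hgt
  push_neg at hgt
  set ε := (L - eta φ a t)/4 with hεdef
  have hε : 0 < ε := by rw [hεdef]; linarith
  obtain ⟨δ₁, hδ₁, hw₁⟩ := left_window hl hε
  obtain ⟨δ₂, hδ₂, hw₂⟩ := left_window hη hε
  obtain ⟨s, hs0, hst, hsδ⟩ := pick_s ht (lt_min hδ₁ hδ₂)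
  have hsδ₁ : t - δ₁ < s := by have := min_le_left δ₁ δ₂; linarith
  have hsδ₂ : t - δ₂ < s := by have := min_le_right δ₁ δ₂; linarith
  have hηs := abs_le.mp (hw₂ s hsδ₂ hst)
  obtain ⟨r, hr0, hrs, hFF⟩ := eta_approx H hs0.le hε
  have hII : min (l - ε) (φ t) ≤ II φ s t := by
    apply le_II H hst.le
    intro u hu1 hu2
    rcases eq_or_lt_of_le hu2 with heq | hlt
    · rw [heq]; exact min_le_right _ _
    · have := abs_le.mp (hw₁ u (by linarith) hlt)
      have : l - ε ≤ φ u := by linarith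
      exact le_trans (min_le_left _ _) this
  have hkey : min (FF φ a r s) (II φ s t) ≤ eta φ a t := eta_lower H hr0 hrs hst.le
  rcases min_cases (FF φ a r s) (II φ s t) with ⟨he, h⟩ | ⟨he, h⟩
  · rw [he] at hkey
    have : L - 2*ε ≤ eta φ a t := by linarith
    rw [hεdef] at this; linarith
  · rw [he] at hkey
    have h7 : min (l - ε) (φ t) ≤ eta φ a t := le_trans hII hkey
    rcases min_cases (l - ε) (φ t) with ⟨he2, h2⟩ | ⟨he2, h2⟩
    · rw [he2] at h7
      rw [hεdef] at h7
      linarith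
    · rw [he2] at h7
      linarith

lemma jumpP (H : Hyp φ a) (ht : 0 < t)
    (hl : Filter.Tendsto φ (nhdsWithin t (Set.Iio t)) (nhds l))
    (hη : Filter.Tendsto (eta φ a) (nhdsWithin t (Set.Iio t)) (nhds L)) :
    Pfun φ a t - Function.leftLim (Pfun φ a) t ≤ pos (eta φ a t - L) := by
  have hLG := posl_le_L H ht hl hη
  have key : ∀ ε, 0 < ε → ε ≤ a/8 →
      Pfun φ a t ≤ Function.leftLim (Pfun φ a) t + (pos (eta φ a t - L) + 3*ε) := by
    intro ε hε hεa
    obtain ⟨δ₁, hδ₁, hw₁⟩ := left_window hl hε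
    obtain ⟨δ₂, hδ₂, hw₂⟩ := left_window hη hε
    obtain ⟨s, hs0, hst, hsδ⟩ := pick_s ht (lt_min hδ₁ hδ₂)
    have hsδ₁ : t - δ₁ < s := by have := min_le_left δ₁ δ₂; linarith
    have hsδ₂ : t - δ₂ < s := by have := min_le_right δ₁ δ₂; linarith
    have hband : ∀ n u, Monotone u → (∀ i, u i ∈ Set.Icc s t) →
        famSum φ a n u ≤ pos (eta φ a t - L) + 3*ε := by
      intro n u hu hrange
      have hosc : ∀ p ∈ Set.Ico s t, ∀ z ∈ Set.Ico s t, |φ p - φ z| ≤ a/4 := by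
        intro p hp z hz
        have h1 := abs_le.mp (hw₁ p (by linarith [hp.1]) hp.2)
        have h2 := abs_le.mp (hw₁ z (by linarith [hz.1]) hz.2)
        rw [abs_le]; constructor <;> linarith
      have hGb : ∀ z, s < z → z < t → G φ a z ≤ max (l - a) 0 + ε := by
        intro z hz1 hz2
        have h1 := abs_le.mp (hw₁ z (by linarith) hz2)
        apply max_le
        · have : l - a ≤ max (l - a) 0 := le_max_left _ _
          linarith
        · have : (0:ℝ) ≤ max (l - a) 0 := le_max_right _ _
          linarith
      have hκ : ∀ z, s ≤ z → z < t → L - ε ≤ eta φ a z := by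
        intro z hz1 hz2
        have := abs_le.mp (hw₂ z (by linarith) hz2)
        linarith
      have := famSum_band (w := t) (gB := max (l - a) 0 + ε) (κ := L - ε) H hs0.le hosc hGb
        (by positivity) hκ n u hu hrange
      have hmax : max (max (l - a) 0 + ε) (L - ε) ≤ L + ε :=
        max_le (by linarith) (by linarith)
      have hpos2 : pos (eta φ a t - (L - ε)) ≤ pos (eta φ a t - L) + ε := by
        have : eta φ a t - (L - ε) = (eta φ a t - L) + ε := by ring
        rw [this]
        exact pos_add_const hε.le
      linarith
    have hCnn : (0:ℝ) ≤ pos (eta φ a t - L) + 3*ε := by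
      have := pos_nonneg (eta φ a t - L); linarith
    have h1 := Pfun_incr_le H hs0.le hst.le hCnn hband
    have h2 : Pfun φ a s ≤ Function.leftLim (Pfun φ a) t := (Pfun_mono H).le_leftLim hst
    linarith
  by_contra hcon
  push_neg at hcon
  set g := Pfun φ a t - Function.leftLim (Pfun φ a) t - pos (eta φ a t - L) with hg
  have hg0 : 0 < g := by rw [hg]; linarith
  have hε : 0 < min (g/4) (a/8) := lt_min (by linarith) (by linarith [H.ha])
  have := key _ hε (min_le_right _ _)
  have : min (g/4) (a/8) ≤ g/4 := min_le_left _ _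
  linarith [key (min (g/4) (a/8)) hε (min_le_right _ _)]

end LeftLemmas
/-- Generic lemma: a Stieltjes measure vanishes on a "right-open" set on which the
function is locally constant and has no atoms. -/
lemma meas_zero (κ : StieltjesFunction ℝ) (U : Set ℝ)
    (hU0 : ∀ s ∈ U, (0:ℝ) ≤ s)
    (hopen : ∀ s ∈ U, ∃ δ > 0, ∀ u, s ≤ u → u < s + δ → u ∈ U)
    (hconst : ∀ t₁ t₂, t₁ ∈ U → t₁ ≤ t₂ → (∀ u, t₁ ≤ u → u ≤ t₂ → u ∈ U) → κ t₂ ≤ κ t₁)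
    (hatom : ∀ t ∈ U, κ.measure {t} = 0) :
    κ.measure U = 0 := by
  set Iq : ℚ → Set ℝ := fun q => {x | x ∈ U ∧ x < (q:ℝ) ∧ ∀ u, x ≤ u → u < (q:ℝ) → u ∈ U}
    with hIq
  have hcover : U ⊆ ⋃ q : ℚ, Iq q := by
    intro s hs
    obtain ⟨δ, hδ, hw⟩ := hopen s hs
    obtain ⟨q, hq1, hq2⟩ := exists_rat_btwn (show s < s + δ by linarith)
    exact Set.mem_iUnion.mpr ⟨q, hs, hq1, fun u h1 h2 => hw u h1 (lt_trans h2 hq2)⟩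
  have hzero : ∀ q : ℚ, κ.measure (Iq q) = 0 := by
    intro q
    rcases Set.eq_empty_or_nonempty (Iq q) with he | ⟨t₀, ht₀⟩
    · rw [he]; exact measure_empty
    · have hbdd : BddBelow (Iq q) := ⟨0, fun x hx => hU0 x hx.1⟩
      set e := sInf (Iq q) with hedef
      have he_le : ∀ x ∈ Iq q, e ≤ x := fun x hx => csInf_le hbdd hx
      have heq' : e < (q:ℝ) := lt_of_le_of_lt (he_le t₀ ht₀) ht₀.2.1
      have hkey : ∀ x ∈ Iq q, ∀ y, x ≤ y → y < (q:ℝ) → κ y ≤ κ x := by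
        intro x hx y h1 h2
        exact hconst x y hx.1 h1 (fun u hu1 hu2 => hx.2.2 u hu1 (lt_of_le_of_lt hu2 h2))
      have hll : ∀ x ∈ Iq q, Function.leftLim (↑κ) (q:ℝ) ≤ κ x := by
        intro x hx
        apply le_of_tendsto (κ.mono.tendsto_leftLim (q:ℝ))
        filter_upwards [Ioo_mem_nhdsLT_of_mem (Set.mem_Ioc.mpr ⟨hx.2.1, le_rfl⟩)] with y hy
        exact hkey x hx y hy.1.le hy.2
      have hlle : Function.leftLim (↑κ) (q:ℝ) ≤ κ e := by
        by_contra hc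
        push_neg at hc
        have hrc := κ.right_continuous e
        rw [Metric.continuousWithinAt_iff] at hrc
        obtain ⟨δ, hδ, hw⟩ := hrc (Function.leftLim (↑κ) (q:ℝ) - κ e) (by linarith)
        obtain ⟨x, hx, hxe⟩ : ∃ x ∈ Iq q, x < e + δ := by
          by_contra hcc
          push_neg at hcc
          have : e + δ ≤ e := le_csInf ⟨t₀, ht₀⟩ hcc
          linarith
        have hex : e ≤ x := he_le x hx
        have hdist : dist x e < δ := by
          rw [Real.dist_eq, abs_of_nonneg (by linarith)]; linarith
        have h2 := hw (show x ∈ Set.Ici e from hex) hdist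
        rw [Real.dist_eq] at h2
        have habs := abs_lt.mp h2
        have h3 := hll x hx
        linarith [κ.mono hex]
      have hIoo : κ.measure (Set.Ioo e (q:ℝ)) = 0 := by
        rw [StieltjesFunction.measure_Ioo]
        exact ENNReal.ofReal_eq_zero.mpr (by linarith)
      by_cases heIq : e ∈ Iq q
      · have hsub : Iq q ⊆ insert e (Set.Ioo e (q:ℝ)) := by
          intro x hx
          rcases eq_or_lt_of_le (he_le x hx) with h | h
          · exact Set.mem_insert_iff.mpr (Or.inl h.symm)
          · exact Set.mem_insert_iff.mpr (Or.inr ⟨h, hx.2.1⟩)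
        have hb : κ.measure (Iq q) ≤ κ.measure {e} + κ.measure (Set.Ioo e (q:ℝ)) := by
          apply le_trans (measure_mono hsub)
          rw [Set.insert_eq]
          exact measure_union_le _ _
        rw [hatom e heIq.1, hIoo] at hb
        simpa using hb
      · have hsub : Iq q ⊆ Set.Ioo e (q:ℝ) := by
          intro x hx
          rcases eq_or_lt_of_le (he_le x hx) with h | h
          · exact absurd (show e ∈ Iq q by rwa [← h] at hx) heIq
          · exact ⟨h, hx.2.1⟩
        exact le_antisymm (le_trans (measure_mono hsub) (le_of_eq hIoo)) (zero_le)
  refine le_antisymm ?_ (zero_le)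
  calc κ.measure U ≤ κ.measure (⋃ q : ℚ, Iq q) := measure_mono hcover
    _ ≤ ∑' q : ℚ, κ.measure (Iq q) := measure_iUnion_le _
    _ = 0 := by simp [hzero]

lemma leftLim_Pfun_zero (H : Hyp φ a) : Function.leftLim (Pfun φ a) 0 = 0 := by
  apply leftLim_eq_of_tendsto
  apply Filter.Tendsto.congr' _ tendsto_const_nhds
  filter_upwards [self_mem_nhdsWithin] with y hy
  exact (Pfun_neg H (le_of_lt hy)).symm

lemma leftLim_Nt_zero (H : Hyp φ a) : Function.leftLim (Nt φ a) 0 = 0 := by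
  apply leftLim_eq_of_tendsto
  apply Filter.Tendsto.congr' _ tendsto_const_nhds
  filter_upwards [self_mem_nhdsWithin] with y hy
  exact (Nt_neg H (le_of_lt hy)).symm

end DR

/-- For a nonnegative càdlàg `φ` with `φ 0 = 0` and `a > 0`, the doubly
reflected path `Λ_a(φ)` decomposes as `φ - κ₊ + κ₋` with `κ₊, κ₋` nondecreasing càdlàg
(Stieltjes) functions vanishing at `0`, such that the Lebesgue–Stieltjes measure of `κ₊`
does not charge `{s ≥ 0 : Λ_a(φ)(s) < a}` and that of `κ₋` does not charge
`{s ≥ 0 : Λ_a(φ)(s) > 0}`. -/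
theorem stmt3 (φ : ℝ → ℝ) (a : ℝ) (ha : 0 < a) (h0 : φ 0 = 0)
    (hnonneg : ∀ t, 0 ≤ t → 0 ≤ φ t)
    (hrc : ∀ t, 0 ≤ t → ContinuousWithinAt φ (Set.Ici t) t)
    (hll : ∀ t, 0 < t → ∃ l, Filter.Tendsto φ (nhdsWithin t (Set.Iio t)) (nhds l)) :
    ∃ κp κm : StieltjesFunction ℝ,
      κp 0 = 0 ∧ κm 0 = 0 ∧
      (∀ t, 0 ≤ t → doubleReflection φ a t = φ t - κp t + κm t) ∧
      κp.measure {s | 0 ≤ s ∧ doubleReflection φ a s < a} = 0 ∧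
      κm.measure {s | 0 ≤ s ∧ 0 < doubleReflection φ a s} = 0 := by

  have H : DR.Hyp φ a := ⟨ha, h0, hnonneg, hrc, hll⟩
  set κp : StieltjesFunction ℝ := ⟨DR.Pfun φ a, DR.Pfun_mono H, DR.Pfun_rc H⟩ with hκp
  set κm : StieltjesFunction ℝ := ⟨DR.Nt φ a, DR.Nt_mono H, DR.Nt_rc H⟩ with hκm
  have hΛ : ∀ s, doubleReflection φ a s = φ s - DR.eta φ a s := fun s => rfl
  -- right-openness of the two sets
  have hopenA : ∀ s ∈ {s : ℝ | 0 ≤ s ∧ doubleReflection φ a s < a},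
      ∃ δ > 0, ∀ u, s ≤ u → u < s + δ → u ∈ {s : ℝ | 0 ≤ s ∧ doubleReflection φ a s < a} := by
    intro s hs
    have hs2 : φ s - DR.eta φ a s < a := by rw [← hΛ s]; exact hs.2
    set ε := (a - (φ s - DR.eta φ a s))/3 with hεdef
    have hε : 0 < ε := by rw [hεdef]; linarith
    obtain ⟨δ₁, hδ₁, hw₁⟩ := DR.rc_eps H hs.1 hε
    obtain ⟨δ₂, hδ₂, hw₂⟩ := DR.eta_rc H hs.1 hε
    refine ⟨min δ₁ δ₂, lt_min hδ₁ hδ₂, fun u h1 h2 => ?_⟩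
    have hu0 : 0 ≤ u := le_trans hs.1 h1
    have hb₁ := abs_le.mp (hw₁ u h1 (by have := min_le_left δ₁ δ₂; linarith))
    have hb₂ := abs_le.mp (hw₂ u h1 (by have := min_le_right δ₁ δ₂; linarith))
    refine ⟨hu0, ?_⟩
    rw [hΛ u]
    linarith
  have hopenB : ∀ s ∈ {s : ℝ | 0 ≤ s ∧ 0 < doubleReflection φ a s},
      ∃ δ > 0, ∀ u, s ≤ u → u < s + δ → u ∈ {s : ℝ | 0 ≤ s ∧ 0 < doubleReflection φ a s} := by
    intro s hs
    have hs2 : 0 < φ s - DR.eta φ a s := by rw [← hΛ s]; exact hs.2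
    set ε := (φ s - DR.eta φ a s)/3 with hεdef
    have hε : 0 < ε := by rw [hεdef]; linarith
    obtain ⟨δ₁, hδ₁, hw₁⟩ := DR.rc_eps H hs.1 hε
    obtain ⟨δ₂, hδ₂, hw₂⟩ := DR.eta_rc H hs.1 hε
    refine ⟨min δ₁ δ₂, lt_min hδ₁ hδ₂, fun u h1 h2 => ?_⟩
    have hu0 : 0 ≤ u := le_trans hs.1 h1
    have hb₁ := abs_le.mp (hw₁ u h1 (by have := min_le_left δ₁ δ₂; linarith))
    have hb₂ := abs_le.mp (hw₂ u h1 (by have := min_le_right δ₁ δ₂; linarith))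
    refine ⟨hu0, ?_⟩
    rw [hΛ u]
    linarith
  refine ⟨κp, κm, DR.Pfun_zero H, DR.Nt_neg H le_rfl, ?_, ?_, ?_⟩
  · intro t ht
    show doubleReflection φ a t = φ t - DR.Pfun φ a t + DR.Nt φ a t
    rw [hΛ t, DR.Nt, DR.etat_eq ht]
    ring
  · -- κp does not charge {Λ < a}
    apply DR.meas_zero κp _ (fun s hs => hs.1) hopenA
    · -- constancy
      intro t₁ t₂ ht₁ h12 hsub
      show DR.Pfun φ a t₂ ≤ DR.Pfun φ a t₁
      have h := DR.Pfun_incr_le H ht₁.1 h12 le_rfl ?_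
      · linarith
      · intro n u hu hrange
        apply le_of_eq
        apply Finset.sum_eq_zero
        intro i _
        apply DR.pos_eq_zero
        rw [sub_nonpos]
        by_contra hlt
        push_neg at hlt
        have hcb : u (2*i) ≤ u (2*i+1) := hu (by omega)
        have h0i : 0 ≤ u (2*i) := le_trans ht₁.1 (hrange (2*i)).1
        obtain ⟨q, hq1, hq2, hq3, _⟩ := DR.thmA H h0i hcb
          (show DR.eta φ a (u (2*i)) < (DR.eta φ a (u (2*i)) + DR.eta φ a (u (2*i+1)))/2
            by linarith)
          (show (DR.eta φ a (u (2*i)) + DR.eta φ a (u (2*i+1)))/2 < DR.eta φ a (u (2*i+1))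
            by linarith)
        have hqmem : q ∈ {s : ℝ | 0 ≤ s ∧ doubleReflection φ a s < a} :=
          hsub q (le_trans (hrange (2*i)).1 hq1.le) (le_trans hq2 (hrange (2*i+1)).2)
        have := hqmem.2
        rw [hΛ q, hq3] at this
        linarith
    · -- atoms
      intro t ht
      have hmeas : κp.measure {t} = ENNReal.ofReal (κp t - Function.leftLim (↑κp) t) :=
        κp.measure_singleton t
      rw [hmeas]
      apply ENNReal.ofReal_eq_zero.mpr
      rcases eq_or_lt_of_le ht.1 with h | h
      · show DR.Pfun φ a t - Function.leftLim (DR.Pfun φ a) t ≤ 0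
        rw [← h, DR.leftLim_Pfun_zero H, DR.Pfun_zero H]
        norm_num
      · obtain ⟨l, hl⟩ := hll t h
        have hη := DR.eta_tendsto_left H h
        have hjump := DR.jumpP H h hl hη
        have hΛt : φ t - DR.eta φ a t < a := by rw [← hΛ t]; exact ht.2
        have hLLA := DR.LLA H h hl hη hΛt
        show DR.Pfun φ a t - Function.leftLim (DR.Pfun φ a) t ≤ 0
        have : DR.pos (DR.eta φ a t -
            (Function.leftLim (DR.Pfun φ a) t - Function.leftLim (DR.Nt φ a) t)) = 0 :=
          DR.pos_eq_zero (by linarith)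
        linarith [hjump, this.symm.le.trans (le_of_eq this)]
  · -- κm does not charge {Λ > 0}
    apply DR.meas_zero κm _ (fun s hs => hs.1) hopenB
    · intro t₁ t₂ ht₁ h12 hsub
      show DR.Nt φ a t₂ ≤ DR.Nt φ a t₁
      have ht₂0 : 0 ≤ t₂ := le_trans ht₁.1 h12
      have hmono2 : ∀ x y, t₁ ≤ x → x ≤ y → y ≤ t₂ → DR.eta φ a x ≤ DR.eta φ a y := by
        intro x y hx hxy hy
        by_contra hlt
        push_neg at hlt
        have hx0 : 0 ≤ x := le_trans ht₁.1 hx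
        obtain ⟨q, hq1, hq2, hq3, _⟩ := DR.thmB H hx0 hxy
          (show DR.eta φ a y < (DR.eta φ a y + DR.eta φ a x)/2 by linarith)
          (show (DR.eta φ a y + DR.eta φ a x)/2 < DR.eta φ a x by linarith)
        have hqmem : q ∈ {s : ℝ | 0 ≤ s ∧ 0 < doubleReflection φ a s} :=
          hsub q (le_trans hx hq1) (le_trans hq2 hy)
        have := hqmem.2
        rw [hΛ q, hq3] at this
        linarith
      have hC : 0 ≤ DR.eta φ a t₂ - DR.eta φ a t₁ := by
        have := hmono2 t₁ t₂ le_rfl h12 le_rfl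
        linarith
      have h := DR.Pfun_incr_le H ht₁.1 h12 hC ?_
      · rw [DR.Nt, DR.Nt, DR.etat_eq ht₁.1, DR.etat_eq ht₂0]
        linarith
      · intro n u hu hrange
        have hg : ∀ i j : ℕ, i ≤ j → DR.eta φ a (u i) ≤ DR.eta φ a (u j) := fun i j hij =>
          hmono2 (u i) (u j) (hrange i).1 (hu hij) (hrange j).2
        have hpair : ∀ i, i < n → DR.pos (DR.eta φ a (u (2*i+1)) - DR.eta φ a (u (2*i)))
            ≤ DR.eta φ a (u (2*i+1)) - DR.eta φ a (u (2*i)) := by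
          intro i _
          rw [DR.pos_eq_self (by linarith [hg (2*i) (2*i+1) (by omega)])]
        have := DR.famSum_le_of_pairbound n u (DR.eta φ a) hg
          (fun i hi => hpair i hi)
        have h1 : DR.eta φ a (u (2*n)) ≤ DR.eta φ a t₂ :=
          hmono2 (u (2*n)) t₂ (hrange (2*n)).1 (hrange (2*n)).2 le_rfl
        have h2 : DR.eta φ a t₁ ≤ DR.eta φ a (u 0) :=
          hmono2 t₁ (u 0) le_rfl (hrange 0).1 (hrange 0).2
        linarith
    · intro t ht
      have hmeas : κm.measure {t} = ENNReal.ofReal (κm t - Function.leftLim (↑κm) t) :=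
        κm.measure_singleton t
      rw [hmeas]
      apply ENNReal.ofReal_eq_zero.mpr
      rcases eq_or_lt_of_le ht.1 with h | h
      · show DR.Nt φ a t - Function.leftLim (DR.Nt φ a) t ≤ 0
        rw [← h, DR.leftLim_Nt_zero H, DR.Nt_neg H le_rfl]
        norm_num
      · obtain ⟨l, hl⟩ := hll t h
        have hη := DR.eta_tendsto_left H h
        have hjump := DR.jumpP H h hl hη
        have hΛt : 0 < φ t - DR.eta φ a t := by rw [← hΛ t]; exact ht.2
        have hLLB := DR.LLB H h hl hη hΛt
        show DR.Nt φ a t - Function.leftLim (DR.Nt φ a) t ≤ 0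
        have hposeq : DR.pos (DR.eta φ a t -
            (Function.leftLim (DR.Pfun φ a) t - Function.leftLim (DR.Nt φ a) t))
            = DR.eta φ a t -
              (Function.leftLim (DR.Pfun φ a) t - Function.leftLim (DR.Nt φ a) t) :=
          DR.pos_eq_self (by linarith)
        rw [hposeq] at hjump
        rw [DR.Nt, DR.etat_eq ht.1]
        linarith
end

section
/- Let μ be a finite nonnegative Borel measure on ℝ and x ∈ ℝ. Define Ψ(μ, x) to be the measure whose cumulative distribution function is y ↦ (μ(-∞, y] - x)^+. Then Ψ(μ, x) is a well-defined finite nonnegative Borel measure on ℝ, and the map (μ, x) ↦ Ψ(μ, x) is continuous from M(ℝ) × ℝ to M(ℝ), where M(ℝ) carries the topology of weak convergence. -/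
open MeasureTheory Set Filter Metric
open scoped NNReal ENNReal Topology

noncomputable section

/-- The real-valued CDF of a finite measure. -/
def rcdf (μ : FiniteMeasure ℝ) (y : ℝ) : ℝ := ((μ (Iic y) : ℝ≥0) : ℝ)

lemma rcdf_eq_toReal (μ : FiniteMeasure ℝ) (y : ℝ) :
    rcdf μ y = (μ.toMeasure (Iic y)).toReal := rfl

lemma rcdf_nonneg (μ : FiniteMeasure ℝ) (y : ℝ) : 0 ≤ rcdf μ y := NNReal.coe_nonneg _

lemma rcdf_mono (μ : FiniteMeasure ℝ) : Monotone (rcdf μ) := by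
  intro a b hab
  exact NNReal.coe_le_coe.2 (μ.apply_mono (Iic_subset_Iic.2 hab))

lemma tendsto_rcdf_atBot (μ : FiniteMeasure ℝ) : Tendsto (rcdf μ) atBot (𝓝 0) := by
  have hseq : Tendsto (fun n : ℕ => μ.toMeasure (Iic (-(n:ℝ)))) atTop
      (𝓝 (μ.toMeasure (⋂ n : ℕ, Iic (-(n:ℝ))))) := by
    apply tendsto_measure_iInter_atTop
    · exact fun n => measurableSet_Iic.nullMeasurableSet
    · intro a b hab
      have hab' : (a:ℝ) ≤ b := Nat.cast_le.mpr hab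
      exact Iic_subset_Iic.2 (by linarith)
    · exact ⟨0, measure_ne_top _ _⟩
  have hempty : (⋂ n : ℕ, Iic (-(n:ℝ))) = ∅ := by
    ext z
    simp only [mem_iInter, mem_Iic, mem_empty_iff_false, iff_false, not_forall, not_le]
    obtain ⟨n, hn⟩ := exists_nat_gt (-z)
    exact ⟨n, by linarith⟩
  rw [hempty] at hseq
  simp only [measure_empty] at hseq
  have hseqR : Tendsto (fun n : ℕ => rcdf μ (-(n:ℝ))) atTop (𝓝 0) := by
    have := (ENNReal.tendsto_toReal (by simp)).comp hseq
    simpa [rcdf_eq_toReal, Function.comp_def] using this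
  rw [tendsto_order]
  constructor
  · intro c hc
    exact Eventually.of_forall fun y => lt_of_lt_of_le hc (rcdf_nonneg μ y)
  · intro c hc
    obtain ⟨n, hn⟩ := (hseqR.eventually_lt_const hc).exists
    filter_upwards [eventually_le_atBot (-(n:ℝ))] with y hy
    exact lt_of_le_of_lt (rcdf_mono μ hy) hn

lemma tendsto_rcdf_atTop (μ : FiniteMeasure ℝ) :
    Tendsto (rcdf μ) atTop (𝓝 ((μ.mass : ℝ))) := by
  have h := tendsto_measure_Iic_atTop (μ.toMeasure)
  have h2 := (ENNReal.tendsto_toReal (measure_ne_top μ.toMeasure univ)).comp h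
  exact h2

lemma rcdf_rightCont (μ : FiniteMeasure ℝ) (a : ℝ) :
    ContinuousWithinAt (rcdf μ) (Ici a) a := by
  have hseq : Tendsto (fun n : ℕ => μ.toMeasure (Iic (a + 1/(n+1)))) atTop
      (𝓝 (μ.toMeasure (⋂ n : ℕ, Iic (a + 1/((n:ℝ)+1))))) := by
    apply tendsto_measure_iInter_atTop
    · exact fun n => measurableSet_Iic.nullMeasurableSet
    · intro m n hmn
      apply Iic_subset_Iic.2
      have : (1:ℝ)/(n+1) ≤ 1/(m+1) := by
        apply one_div_le_one_div_of_le (by positivity)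
        have hmn' : (m:ℝ) ≤ n := Nat.cast_le.mpr hmn
        linarith
      linarith
    · exact ⟨0, measure_ne_top _ _⟩
  have hiInter : (⋂ n : ℕ, Iic (a + 1/((n:ℝ)+1))) = Iic a := by
    ext z
    simp only [mem_iInter, mem_Iic]
    constructor
    · intro h
      by_contra hz
      push_neg at hz
      obtain ⟨n, hn⟩ := exists_nat_one_div_lt (sub_pos.2 hz)
      have := h n
      linarith [hn]
    · intro h n
      have : (0:ℝ) < 1/((n:ℝ)+1) := by positivity
      linarith
  rw [hiInter] at hseq
  have hseqR : Tendsto (fun n : ℕ => rcdf μ (a + 1/((n:ℝ)+1))) atTop (𝓝 (rcdf μ a)) := by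
    have := (ENNReal.tendsto_toReal (measure_ne_top _ _)).comp hseq
    simpa [rcdf_eq_toReal, Function.comp_def] using this
  rw [ContinuousWithinAt, tendsto_order]
  constructor
  · intro c hc
    filter_upwards [self_mem_nhdsWithin] with y hy
    exact lt_of_lt_of_le hc (rcdf_mono μ hy)
  · intro c hc
    obtain ⟨n, hn⟩ := (hseqR.eventually_lt_const hc).exists
    have hmem : Ico a (a + 1/((n:ℝ)+1)) ∈ 𝓝[≥] a :=
      Ico_mem_nhdsGE (lt_add_of_pos_right a (by positivity))
    filter_upwards [hmem] with y hy
    exact lt_of_le_of_lt (rcdf_mono μ (le_of_lt hy.2)) hn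

/-- The Stieltjes function `y ↦ ((μ (Iic y) : ℝ) - x⁺)⁺`. -/
def psiSF (μ : FiniteMeasure ℝ) (x : ℝ) : StieltjesFunction ℝ where
  toFun := fun y => max (rcdf μ y - max x 0) 0
  mono' := fun a b hab => max_le_max (by linarith [rcdf_mono μ hab]) le_rfl
  right_continuous' := fun a => by
    have hc : Continuous (fun t : ℝ => max (t - max x 0) 0) := by continuity
    exact (hc.continuousAt).comp_continuousWithinAt (rcdf_rightCont μ a)

lemma psiSF_apply (μ : FiniteMeasure ℝ) (x y : ℝ) :
    psiSF μ x y = max (rcdf μ y - max x 0) 0 := rfl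

lemma psiSF_tendsto_atBot (μ : FiniteMeasure ℝ) (x : ℝ) :
    Tendsto (psiSF μ x) atBot (𝓝 0) := by
  have hc : Continuous (fun t : ℝ => max (t - max x 0) 0) := by continuity
  have := (hc.tendsto 0).comp (tendsto_rcdf_atBot μ)
  simp [Function.comp_def, max_eq_right (neg_nonpos.2 (le_max_right x 0))] at this
  exact this

lemma psiSF_tendsto_atTop (μ : FiniteMeasure ℝ) (x : ℝ) :
    Tendsto (psiSF μ x) atTop (𝓝 (max ((μ.mass : ℝ) - max x 0) 0)) := by
  have hc : Continuous (fun t : ℝ => max (t - max x 0) 0) := by continuity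
  exact (hc.tendsto _).comp (tendsto_rcdf_atTop μ)

lemma psiSF_measure_univ (μ : FiniteMeasure ℝ) (x : ℝ) :
    (psiSF μ x).measure univ = ENNReal.ofReal (max ((μ.mass : ℝ) - max x 0) 0) := by
  rw [StieltjesFunction.measure_univ _ (psiSF_tendsto_atBot μ x) (psiSF_tendsto_atTop μ x)]
  simp

/-- The map `Ψ`. -/
def Psi (p : FiniteMeasure ℝ × ℝ) : FiniteMeasure ℝ :=
  ⟨(psiSF p.1 p.2).measure, ⟨by rw [psiSF_measure_univ]; exact ENNReal.ofReal_lt_top⟩⟩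

lemma Psi_toMeasure (p : FiniteMeasure ℝ × ℝ) : (Psi p).toMeasure = (psiSF p.1 p.2).measure := rfl

lemma Psi_apply_Iic (p : FiniteMeasure ℝ × ℝ) (y : ℝ) :
    ((Psi p (Iic y) : ℝ≥0) : ℝ) = max (rcdf p.1 y - max p.2 0) 0 := by
  have h : (Psi p).toMeasure (Iic y) = ENNReal.ofReal (psiSF p.1 p.2 y - 0) := by
    rw [Psi_toMeasure]
    exact StieltjesFunction.measure_Iic _ (psiSF_tendsto_atBot p.1 p.2) y
  have : ((Psi p (Iic y) : ℝ≥0) : ℝ) = ((Psi p).toMeasure (Iic y)).toReal := rfl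
  rw [this, h, sub_zero, psiSF_apply, ENNReal.toReal_ofReal (le_max_right _ _)]

lemma Psi_apply_Ioc (p : FiniteMeasure ℝ × ℝ) {y₁ y₂ : ℝ} (h : y₁ ≤ y₂) :
    ((Psi p (Ioc y₁ y₂) : ℝ≥0) : ℝ)
      = max (rcdf p.1 y₂ - max p.2 0) 0 - max (rcdf p.1 y₁ - max p.2 0) 0 := by
  have hmono : max (rcdf p.1 y₁ - max p.2 0) 0 ≤ max (rcdf p.1 y₂ - max p.2 0) 0 :=
    max_le_max (sub_le_sub_right (rcdf_mono p.1 h) _) le_rfl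
  have h1 : (Psi p).toMeasure (Ioc y₁ y₂) = ENNReal.ofReal (psiSF p.1 p.2 y₂ - psiSF p.1 p.2 y₁) :=
    StieltjesFunction.measure_Ioc _ y₁ y₂
  have : ((Psi p (Ioc y₁ y₂) : ℝ≥0) : ℝ) = ((Psi p).toMeasure (Ioc y₁ y₂)).toReal := rfl
  rw [this, h1]
  rw [show (psiSF p.1 p.2) y₂ - (psiSF p.1 p.2) y₁
      = max (rcdf p.1 y₂ - max p.2 0) 0 - max (rcdf p.1 y₁ - max p.2 0) 0 from rfl] at *
  rw [ENNReal.toReal_ofReal (by linarith [hmono])]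

lemma Psi_mass (p : FiniteMeasure ℝ × ℝ) :
    ((Psi p).mass : ℝ) = max ((p.1.mass : ℝ) - max p.2 0) 0 := by
  have : ((Psi p).mass : ℝ) = ((Psi p).toMeasure univ).toReal := rfl
  rw [this, Psi_toMeasure, psiSF_measure_univ, ENNReal.toReal_ofReal (le_max_right _ _)]

lemma continuous_mass_Psi : Continuous fun p : FiniteMeasure ℝ × ℝ => ((Psi p).mass : ℝ) := by
  have : (fun p : FiniteMeasure ℝ × ℝ => ((Psi p).mass : ℝ))
      = fun p => max ((p.1.mass : ℝ) - max p.2 0) 0 := funext Psi_mass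
  rw [this]
  apply Continuous.max _ continuous_const
  apply Continuous.sub
  · exact NNReal.continuous_coe.comp (MeasureTheory.FiniteMeasure.continuous_mass.comp continuous_fst)
  · exact continuous_snd.max continuous_const


lemma grid_mono {k : ℕ} {y : ℕ → ℝ} (hy : ∀ i < k, y i < y (i+1)) :
    ∀ ⦃i j : ℕ⦄, i ≤ j → j ≤ k → y i ≤ y j := by
  intro i j hij hjk
  induction j with
  | zero => simp_all
  | succ n ih =>
    rcases Nat.eq_or_lt_of_le hij with h | hlt
    · rw [h]
    · have h1 : y i ≤ y n := ih (Nat.lt_succ_iff.1 hlt) (Nat.le_of_succ_le hjk)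
      exact h1.trans (hy n (Nat.lt_of_succ_le hjk)).le

lemma grid_exists {k : ℕ} {y : ℕ → ℝ} (hy : ∀ i < k, y i < y (i+1)) {z : ℝ}
    (h1 : y 0 < z) (h2 : z ≤ y k) : ∃ i < k, z ∈ Ioc (y i) (y (i+1))  := by
  induction k with
  | zero => exact absurd h2 (not_le.2 h1)
  | succ n ih =>
    by_cases hz : z ≤ y n
    · obtain ⟨i, hi, hmem⟩ := ih (fun i hi => hy i (hi.trans (Nat.lt_succ_self n))) hz
      exact ⟨i, hi.trans (Nat.lt_succ_self n), hmem⟩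
    · exact ⟨n, Nat.lt_succ_self n, ⟨not_le.1 hz, h2⟩⟩

lemma meas_Ioc_le {μ ν : Measure ℝ} [IsFiniteMeasure μ] [IsFiniteMeasure ν] {a b : ℝ}
    (hab : a ≤ b) {d : ℝ≥0∞} (h1 : μ (Iic b) ≤ ν (Iic b) + d) (h2 : ν (Iic a) ≤ μ (Iic a) + d) :
    μ (Ioc a b) ≤ ν (Ioc a b) + 2*d := by
  have keyμ : μ (Iic a) + μ (Ioc a b) = μ (Iic b) := by
    rw [← measure_union (Iic_disjoint_Ioc le_rfl) measurableSet_Ioc, Iic_union_Ioc_eq_Iic hab]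
  have keyν : ν (Iic a) + ν (Ioc a b) = ν (Iic b) := by
    rw [← measure_union (Iic_disjoint_Ioc le_rfl) measurableSet_Ioc, Iic_union_Ioc_eq_Iic hab]
  have : μ (Iic a) + μ (Ioc a b) ≤ μ (Iic a) + (ν (Ioc a b) + 2*d) := by
    calc μ (Iic a) + μ (Ioc a b) = μ (Iic b) := keyμ
    _ ≤ ν (Iic b) + d := h1
    _ = ν (Iic a) + ν (Ioc a b) + d := by rw [keyν]
    _ ≤ (μ (Iic a) + d) + ν (Ioc a b) + d := by gcongr
    _ = μ (Iic a) + (ν (Ioc a b) + 2*d) := by ring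
  exact (ENNReal.add_le_add_iff_left (measure_ne_top μ _)).1 this

lemma grid_bound (μ ν : Measure ℝ) [IsFiniteMeasure μ] [IsFiniteMeasure ν]
    (k : ℕ) (y : ℕ → ℝ) (εr : ℝ) (d t : ℝ≥0∞)
    (hy : ∀ i < k, y i < y (i+1)) (hspace : ∀ i < k, y (i+1) - y i < εr)
    (hclose : ∀ i ≤ k, μ (Iic (y i)) ≤ ν (Iic (y i)) + d ∧ ν (Iic (y i)) ≤ μ (Iic (y i)) + d)
    (ht0 : μ (Iic (y 0)) ≤ t) (htk : μ (Ioi (y k)) ≤ t)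
    (B : Set ℝ) : μ B ≤ ν (thickening εr B) + (2*t + (2*k)*d) := by
  classical
  set S : Finset ℕ := (Finset.range k).filter (fun i => (B ∩ Ioc (y i) (y (i+1))).Nonempty) with hS
  set U : Set ℝ := ⋃ i ∈ S, Ioc (y i) (y (i+1)) with hU
  have hcover : B ⊆ Iic (y 0) ∪ U ∪ Ioi (y k) := by
    intro z hz
    by_cases hz0 : z ≤ y 0
    · exact Or.inl (Or.inl hz0)
    by_cases hzk : y k < z
    · exact Or.inr hzk
    push_neg at hz0 hzk
    obtain ⟨i, hik, hmem⟩ := grid_exists hy hz0 hzk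
    refine Or.inl (Or.inr ?_)
    refine mem_biUnion ?_ hmem
    exact Finset.mem_filter.2 ⟨Finset.mem_range.2 hik, ⟨z, hz, hmem⟩⟩
  have hμB : μ B ≤ μ (Iic (y 0)) + μ U + μ (Ioi (y k)) := by
    calc μ B ≤ μ (Iic (y 0) ∪ U ∪ Ioi (y k)) := measure_mono hcover
    _ ≤ μ (Iic (y 0) ∪ U) + μ (Ioi (y k)) := measure_union_le _ _
    _ ≤ μ (Iic (y 0)) + μ U + μ (Ioi (y k)) := by gcongr; exact measure_union_le _ _
  have hμU : μ U ≤ ∑ i ∈ S, μ (Ioc (y i) (y (i+1))) := measure_biUnion_finset_le S _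
  have hterm : ∀ i ∈ S, μ (Ioc (y i) (y (i+1))) ≤ ν (Ioc (y i) (y (i+1))) + 2*d := by
    intro i hi
    have hik : i < k := Finset.mem_range.1 (Finset.mem_filter.1 hi).1
    exact meas_Ioc_le (hy i hik).le (hclose (i+1) hik).1 (hclose i hik.le).2
  have hsum : ∑ i ∈ S, μ (Ioc (y i) (y (i+1)))
      ≤ (∑ i ∈ S, ν (Ioc (y i) (y (i+1)))) + S.card * (2*d) := by
    calc ∑ i ∈ S, μ (Ioc (y i) (y (i+1))) ≤ ∑ i ∈ S, (ν (Ioc (y i) (y (i+1))) + 2*d) :=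
      Finset.sum_le_sum hterm
    _ = (∑ i ∈ S, ν (Ioc (y i) (y (i+1)))) + S.card * (2*d) := by
      rw [Finset.sum_add_distrib, Finset.sum_const, nsmul_eq_mul]
  have hdisj : (S : Set ℕ).PairwiseDisjoint (fun i => Ioc (y i) (y (i+1))) := by
    intro i hi j hj hij
    have hik : i < k := Finset.mem_range.1 (Finset.mem_filter.1 hi).1
    have hjk : j < k := Finset.mem_range.1 (Finset.mem_filter.1 hj).1
    rcases hij.lt_or_gt with h | h
    · exact Set.Ioc_disjoint_Ioc.2 (le_trans (min_le_left _ _)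
        (le_trans (grid_mono hy h hjk.le) (le_max_right _ _)))
    · exact Set.Ioc_disjoint_Ioc.2 (le_trans (min_le_right _ _)
        (le_trans (grid_mono hy h hik.le) (le_max_left _ _)))
  have hνU : ∑ i ∈ S, ν (Ioc (y i) (y (i+1))) = ν U :=
    (measure_biUnion_finset hdisj (fun i _ => measurableSet_Ioc)).symm
  have hUsub : U ⊆ thickening εr B := by
    intro z hz
    obtain ⟨i, hiS, hmem⟩ := mem_iUnion₂.1 hz
    obtain ⟨b, hbB, hbmem⟩ := (Finset.mem_filter.1 hiS).2
    have hik : i < k := Finset.mem_range.1 (Finset.mem_filter.1 hiS).1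
    refine mem_thickening_iff.2 ⟨b, hbB, ?_⟩
    rw [Real.dist_eq, abs_lt]
    constructor
    · have := hspace i hik; have := hmem.1; have := hbmem.2; linarith
    · have := hspace i hik; have := hbmem.1; have := hmem.2; linarith
  have hcard : (S.card : ℝ≥0∞) * (2*d) ≤ (2*k)*d := by
    have : S.card ≤ k := (Finset.card_filter_le _ _).trans (by simp)
    calc (S.card : ℝ≥0∞) * (2*d) ≤ (k : ℝ≥0∞) * (2*d) := by gcongr
    _ = (2*k)*d := by ring
  have hμU2 : μ U ≤ ν U + S.card * (2*d) := by
    rw [← hνU]; exact hμU.trans hsum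
  calc μ B ≤ μ (Iic (y 0)) + μ U + μ (Ioi (y k)) := hμB
  _ ≤ t + ((ν U) + S.card * (2*d)) + t := by gcongr
  _ ≤ t + ((ν (thickening εr B)) + (2*k)*d) + t := by gcongr
  _ = ν (thickening εr B) + (2*t + (2*k)*d) := by ring

lemma grid_LP (μ ν : Measure ℝ) [IsFiniteMeasure μ] [IsFiniteMeasure ν]
    (k : ℕ) (y : ℕ → ℝ) (εr : ℝ) (d t : ℝ≥0∞) (hεr : 0 < εr)
    (hy : ∀ i < k, y i < y (i+1)) (hspace : ∀ i < k, y (i+1) - y i < εr)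
    (hclose : ∀ i ≤ k, μ (Iic (y i)) ≤ ν (Iic (y i)) + d ∧ ν (Iic (y i)) ≤ μ (Iic (y i)) + d)
    (ht0μ : μ (Iic (y 0)) ≤ t) (htkμ : μ (Ioi (y k)) ≤ t)
    (ht0ν : ν (Iic (y 0)) ≤ t) (htkν : ν (Ioi (y k)) ≤ t) :
    levyProkhorovEDist μ ν ≤ max (ENNReal.ofReal εr) (2*t + (2*k)*d) := by
  apply levyProkhorovEDist_le_of_forall μ ν _
  intro η B hη hηtop hB
  have hη1 : ENNReal.ofReal εr < η := lt_of_le_of_lt (le_max_left _ _) hη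
  have hη2 : 2*t + (2*k)*d ≤ η := le_of_lt (lt_of_le_of_lt (le_max_right _ _) hη)
  have hεrη : εr ≤ η.toReal :=
    le_of_lt ((ENNReal.ofReal_lt_iff_lt_toReal hεr.le hηtop.ne).1 hη1)
  have hthick : ∀ (C : Set ℝ), thickening εr C ⊆ thickening η.toReal C :=
    fun C => thickening_mono hεrη C
  constructor
  · calc μ B ≤ ν (thickening εr B) + (2*t + (2*k)*d) :=
        grid_bound μ ν k y εr d t hy hspace hclose ht0μ htkμ B
    _ ≤ ν (thickening η.toReal B) + η := add_le_add (measure_mono (hthick B)) hη2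
  · have hclose' : ∀ i ≤ k, ν (Iic (y i)) ≤ μ (Iic (y i)) + d ∧ μ (Iic (y i)) ≤ ν (Iic (y i)) + d :=
      fun i hi => ⟨(hclose i hi).2, (hclose i hi).1⟩
    calc ν B ≤ μ (thickening εr B) + (2*t + (2*k)*d) :=
        grid_bound ν μ k y εr d t hy hspace hclose' ht0ν htkν B
    _ ≤ μ (thickening η.toReal B) + η := add_le_add (measure_mono (hthick B)) hη2


lemma exists_Ioo_not_mem {A : Set ℝ} (hA : A.Countable) {u v : ℝ} (huv : u < v) :
    ∃ z, z ∈ Ioo u v ∧ z ∉ A := by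
  by_contra h
  push_neg at h
  have hsub : Ioo u v ⊆ A := fun z hz => h z hz
  have hc : (Ioo u v).Countable := hA.mono hsub
  rw [← Cardinal.le_aleph0_iff_set_countable, Cardinal.mk_Ioo_real huv] at hc
  exact absurd hc Cardinal.aleph0_lt_continuum.not_ge

lemma countable_atoms (ν : Measure ℝ) [IsFiniteMeasure ν] : {z : ℝ | ν {z} ≠ 0}.Countable := by
  have h := MeasureTheory.Measure.countable_meas_pos_of_disjoint_iUnion₀ (μ := ν)
    (As := fun z : ℝ => {z}) (fun z => (measurableSet_singleton z).nullMeasurableSet)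
    (fun i j hij => Disjoint.aedisjoint (by simp [hij]))
  convert h using 1
  ext z
  simp [pos_iff_ne_zero]

/-- The normalized CDF value. -/
def phi (p : FiniteMeasure ℝ × ℝ) (y : ℝ) : ℝ :=
  max (rcdf p.1 y - max p.2 0) 0 / ((Psi p).mass : ℝ)

lemma phi_nonneg (p : FiniteMeasure ℝ × ℝ) (y : ℝ) : 0 ≤ phi p y :=
  div_nonneg (le_max_right _ _) (NNReal.coe_nonneg _)

lemma phi_mono (p : FiniteMeasure ℝ × ℝ) : Monotone (phi p) := by
  intro y₁ y₂ h
  unfold phi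
  simp only [div_eq_mul_inv]
  exact mul_le_mul_of_nonneg_right
    (max_le_max (sub_le_sub_right (rcdf_mono p.1 h) _) le_rfl)
    (inv_nonneg.2 (NNReal.coe_nonneg _))

lemma psi_normalize_toMeasure_Iic {p : FiniteMeasure ℝ × ℝ} (hp : (Psi p).mass ≠ 0) (y : ℝ) :
    (Psi p).normalize.toMeasure (Iic y) = ENNReal.ofReal (phi p y) := by
  have h1 : (Psi p).normalize.toMeasure (Iic y)
      = (((Psi p).normalize (Iic y) : ℝ≥0) : ℝ≥0∞) :=
    (ProbabilityMeasure.ennreal_coeFn_eq_coeFn_toMeasure _ _).symm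
  have hnz : Psi p ≠ 0 := (MeasureTheory.FiniteMeasure.mass_nonzero_iff (Psi p)).1 hp
  have h2 := MeasureTheory.FiniteMeasure.normalize_eq_of_nonzero (Psi p) hnz (Iic y)
  rw [h1, h2]
  rw [← ENNReal.ofReal_coe_nnreal]
  congr 1
  push_cast
  rw [phi]
  rw [← Psi_apply_Iic p y]
  rw [div_eq_inv_mul]


lemma continuous_massNN_Psi : Continuous fun p : FiniteMeasure ℝ × ℝ => (Psi p).mass := by
  have h : (fun p : FiniteMeasure ℝ × ℝ => (Psi p).mass)
      = fun p => Real.toNNReal (((Psi p).mass : ℝ)) :=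
    funext fun p => (Real.toNNReal_coe).symm
  rw [h]
  exact continuous_real_toNNReal.comp continuous_mass_Psi

lemma rcdf_eq_mass_mul (μ : FiniteMeasure ℝ) (y : ℝ) :
    rcdf μ y = (μ.mass : ℝ) * ((μ.normalize (Iic y) : ℝ≥0) : ℝ) := by
  rw [rcdf]
  exact_mod_cast congrArg NNReal.toReal
    (MeasureTheory.FiniteMeasure.self_eq_mass_mul_normalize μ (Iic y))

lemma phi_tendsto {μ₀ : FiniteMeasure ℝ} {x₀ : ℝ} (hμ₀ : μ₀ ≠ 0)
    (hm₀ : (Psi (μ₀, x₀)).mass ≠ 0) {y : ℝ} (hatom : μ₀.normalize.toMeasure {y} = 0) :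
    Tendsto (fun p => phi p y) (𝓝 (μ₀, x₀)) (𝓝 (phi (μ₀, x₀) y)) := by
  set L := 𝓝 (μ₀, x₀) with hL
  have hfst : Tendsto (fun p : FiniteMeasure ℝ × ℝ => p.1) L (𝓝 μ₀) :=
    continuous_fst.tendsto _
  have hν : Tendsto (fun p : FiniteMeasure ℝ × ℝ => p.1.normalize) L (𝓝 μ₀.normalize) :=
    MeasureTheory.FiniteMeasure.tendsto_normalize_of_tendsto hfst hμ₀
  have hbdry : μ₀.normalize (frontier (Iic y)) = 0 := by
    rw [frontier_Iic]
    exact ENNReal.coe_eq_zero.1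
      (by rw [ProbabilityMeasure.ennreal_coeFn_eq_coeFn_toMeasure]; exact hatom)
  have hcdf := MeasureTheory.ProbabilityMeasure.tendsto_measure_of_null_frontier_of_tendsto hν hbdry
  have hcdfR : Tendsto (fun p : FiniteMeasure ℝ × ℝ =>
      ((p.1.normalize (Iic y) : ℝ≥0) : ℝ)) L (𝓝 ((μ₀.normalize (Iic y) : ℝ≥0) : ℝ)) :=
    NNReal.tendsto_coe.2 hcdf
  have hmassR : Tendsto (fun p : FiniteMeasure ℝ × ℝ => (p.1.mass : ℝ)) L (𝓝 ((μ₀.mass : ℝ))) :=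
    ((NNReal.continuous_coe.comp
      (MeasureTheory.FiniteMeasure.continuous_mass.comp continuous_fst)).tendsto _)
  have hrc : Tendsto (fun p : FiniteMeasure ℝ × ℝ => rcdf p.1 y) L (𝓝 (rcdf μ₀ y)) := by
    simp only [rcdf_eq_mass_mul]
    exact hmassR.mul hcdfR
  have hxp : Tendsto (fun p : FiniteMeasure ℝ × ℝ => max p.2 0) L (𝓝 (max x₀ 0)) :=
    ((continuous_snd.max continuous_const).tendsto _)
  have hnum : Tendsto (fun p : FiniteMeasure ℝ × ℝ => max (rcdf p.1 y - max p.2 0) 0) L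
      (𝓝 (max (rcdf μ₀ y - max x₀ 0) 0)) :=
    (hrc.sub hxp).max tendsto_const_nhds
  have hden : Tendsto (fun p : FiniteMeasure ℝ × ℝ => ((Psi p).mass : ℝ)) L
      (𝓝 (((Psi (μ₀, x₀)).mass : ℝ))) := continuous_mass_Psi.tendsto _
  exact hnum.div hden (by exact_mod_cast hm₀)


set_option maxHeartbeats 2000000 in
lemma tendsto_normalize_Psi {μ₀ : FiniteMeasure ℝ} {x₀ : ℝ}
    (hm₀ : (Psi (μ₀, x₀)).mass ≠ 0) :
    Tendsto (fun p => (Psi p).normalize) (𝓝 (μ₀, x₀)) (𝓝 ((Psi (μ₀, x₀)).normalize)) := by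
  have hμ₀ : μ₀ ≠ 0 := by
    intro hc
    apply hm₀
    have : ((Psi (μ₀, x₀)).mass : ℝ) = 0 := by
      rw [Psi_mass]
      simp [hc, max_eq_right (neg_nonpos.2 (le_max_right x₀ 0))]
    exact_mod_cast this
  set p₀ : FiniteMeasure ℝ × ℝ := (μ₀, x₀) with hp₀def
  set L := 𝓝 p₀ with hLdef
  set P : FiniteMeasure ℝ × ℝ → ProbabilityMeasure ℝ := fun p => (Psi p).normalize with hPdef
  let H := LevyProkhorov.probabilityMeasureHomeomorph (Ω := ℝ)
  suffices hLP : Tendsto (fun p => H (P p)) L (𝓝 (H (P p₀))) by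
    have h2 := (H.symm.continuous.tendsto _).comp hLP
    simpa [Function.comp_def] using h2
  rw [Metric.tendsto_nhds]
  intro ε0 hε0
  set ε := min ε0 1 with hεdef
  have hε : 0 < ε := lt_min hε0 one_pos
  have hε1 : ε ≤ 1 := min_le_right _ _
  suffices h : ∀ᶠ p in L, dist (H (P p)) (H (P p₀)) < ε by
    filter_upwards [h] with p hp
    exact hp.trans_le (min_le_left _ _)
  have hm₀R : (0:ℝ) < ((Psi p₀).mass : ℝ) := by
    have := hm₀
    positivity
  -- tail points
  have hbotphi : Tendsto (phi p₀) atBot (𝓝 0) := by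
    have h1 : Tendsto (fun y => max (rcdf μ₀ y - max x₀ 0) 0) atBot
        (𝓝 (max (0 - max x₀ 0) 0)) :=
      ((tendsto_rcdf_atBot μ₀).sub tendsto_const_nhds).max tendsto_const_nhds
    have h2 : max (0 - max x₀ 0) (0:ℝ) = 0 := by
      rw [zero_sub]
      exact max_eq_right (neg_nonpos.2 (le_max_right x₀ 0))
    rw [h2] at h1
    have := h1.div (tendsto_const_nhds (x := ((Psi p₀).mass : ℝ))) hm₀R.ne'
    rw [zero_div] at this
    exact this
  have htopphi : Tendsto (phi p₀) atTop (𝓝 1) := by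
    have h1 : Tendsto (fun y => max (rcdf μ₀ y - max x₀ 0) 0) atTop
        (𝓝 (max ((μ₀.mass : ℝ) - max x₀ 0) 0)) :=
      ((tendsto_rcdf_atTop μ₀).sub tendsto_const_nhds).max tendsto_const_nhds
    have := h1.div (tendsto_const_nhds (x := ((Psi p₀).mass : ℝ))) hm₀R.ne'
    have hval : max ((μ₀.mass : ℝ) - max x₀ 0) 0 / ((Psi p₀).mass : ℝ) = 1 := by
      rw [← Psi_mass p₀]
      exact div_self hm₀R.ne'
    rw [hval] at this
    exact this
  obtain ⟨a₀, ha₀⟩ : ∃ a₀, phi p₀ a₀ < ε/16 :=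
    (hbotphi.eventually_lt_const (by positivity)).exists
  obtain ⟨b₀, hb₀⟩ : ∃ b₀, 1 - ε/16 < phi p₀ b₀ :=
    (htopphi.eventually_const_lt (by linarith)).exists
  set st := ε/2 with hstdef
  have hst : 0 < st := by positivity
  have hst1 : st ≤ 1/2 := by rw [hstdef]; linarith
  set a := a₀ - 1 with hadef
  set k := ⌈(b₀ - a)/st⌉₊ + 1 with hkdef
  set A := {z : ℝ | μ₀.normalize.toMeasure {z} ≠ 0} with hAdef
  have hA : A.Countable := countable_atoms _
  have hch : ∀ i : ℕ, ∃ z, z ∈ Ioo (a + i*st) (a + i*st + st/2) ∧ z ∉ A :=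
    fun i => exists_Ioo_not_mem hA (by linarith)
  choose Y hY1 hY2 using hch
  have hy : ∀ i < k, Y i < Y (i+1) := by
    intro i _
    have h1 := (hY1 i).2
    have h2 := (hY1 (i+1)).1
    have : a + (i+1 : ℕ)*st = a + i*st + st := by push_cast; ring
    rw [this] at h2
    linarith
  have hspace : ∀ i < k, Y (i+1) - Y i < 3*ε/4 := by
    intro i _
    have h1 := (hY1 i).1
    have h2 := (hY1 (i+1)).2
    have : a + (i+1 : ℕ)*st = a + i*st + st := by push_cast; ring
    rw [this] at h2
    rw [hstdef] at h1 h2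
    linarith
  have hY0 : Y 0 < a₀ := by
    have h2 := (hY1 0).2
    push_cast at h2
    rw [hadef] at h2
    linarith
  have hYk : b₀ ≤ Y k := by
    have h1 := (hY1 k).1
    have hcle : b₀ - a ≤ k * st := by
      rcases le_or_gt (b₀ - a) 0 with hba | hba
      · have : (0:ℝ) ≤ k * st := by positivity
        linarith
      · have hceil := Nat.le_ceil ((b₀ - a)/st)
        have h3 : (b₀ - a)/st * st ≤ (⌈(b₀ - a)/st⌉₊ : ℝ) * st :=
          mul_le_mul_of_nonneg_right hceil hst.le
        rw [div_mul_cancel₀ _ hst.ne'] at h3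
        have h4 : ((⌈(b₀ - a)/st⌉₊ : ℝ)) * st ≤ (k : ℝ) * st := by
          apply mul_le_mul_of_nonneg_right _ hst.le
          rw [hkdef]
          push_cast
          linarith
        linarith
    linarith
  set δ := ε/(16*(k+1 : ℝ)) with hδdef
  have hδ : 0 < δ := by positivity
  set d := ENNReal.ofReal δ with hddef
  set t := ENNReal.ofReal (ε/8) with htdef
  -- the four eventually facts
  have hmassT : Tendsto (fun p => ((Psi p).mass : ℝ)) L (𝓝 (((Psi p₀).mass : ℝ))) :=
    continuous_mass_Psi.tendsto _
  have hev_mass : ∀ᶠ p in L, (Psi p).mass ≠ 0 := by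
    filter_upwards [hmassT.eventually_const_lt hm₀R] with p hp
    intro hc
    rw [hc] at hp
    simp at hp
  have hatomY : ∀ i : ℕ, μ₀.normalize.toMeasure {Y i} = 0 := by
    intro i
    have := hY2 i
    rw [hAdef] at this
    simpa using this
  have hev_close : ∀ᶠ p in L, ∀ i ∈ Finset.range (k+1), |phi p (Y i) - phi p₀ (Y i)| ≤ δ := by
    rw [Filter.eventually_all_finset]
    intro i _
    have hT := phi_tendsto hμ₀ hm₀ (hatomY i)
    have h' := Metric.tendsto_nhds.1 hT δ hδ
    filter_upwards [h'] with p hp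
    rw [Real.dist_eq] at hp
    exact hp.le
  have hev0 : ∀ᶠ p in L, phi p (Y 0) < ε/8 := by
    have h0 : phi p₀ (Y 0) < ε/8 := by
      have := phi_mono p₀ hY0.le
      linarith
    exact (phi_tendsto hμ₀ hm₀ (hatomY 0)).eventually_lt_const h0
  have hevk : ∀ᶠ p in L, 1 - ε/8 < phi p (Y k) := by
    have h0 : 1 - ε/8 < phi p₀ (Y k) := by
      have := phi_mono p₀ hYk
      linarith
    exact (phi_tendsto hμ₀ hm₀ (hatomY k)).eventually_const_lt h0
  filter_upwards [hev_mass, hev_close, hev0, hevk] with p hp1 hp2 hp3 hp4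
  have hIic : ∀ i ∈ Finset.range (k+1),
      (P p).toMeasure (Iic (Y i)) ≤ (P p₀).toMeasure (Iic (Y i)) + d ∧
      (P p₀).toMeasure (Iic (Y i)) ≤ (P p).toMeasure (Iic (Y i)) + d := by
    intro i hi
    have habs := abs_le.1 (hp2 i hi)
    rw [hPdef]
    simp only []
    rw [psi_normalize_toMeasure_Iic hp1, psi_normalize_toMeasure_Iic hm₀]
    constructor
    · calc ENNReal.ofReal (phi p (Y i)) ≤ ENNReal.ofReal (phi p₀ (Y i) + δ) :=
          ENNReal.ofReal_le_ofReal (by linarith [habs.2])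
      _ ≤ ENNReal.ofReal (phi p₀ (Y i)) + ENNReal.ofReal δ := ENNReal.ofReal_add_le
    · calc ENNReal.ofReal (phi p₀ (Y i)) ≤ ENNReal.ofReal (phi p (Y i) + δ) :=
          ENNReal.ofReal_le_ofReal (by linarith [habs.1])
      _ ≤ ENNReal.ofReal (phi p (Y i)) + ENNReal.ofReal δ := ENNReal.ofReal_add_le
  have hmem : ∀ i, i ≤ k → i ∈ Finset.range (k+1) :=
    fun i hi => Finset.mem_range.2 (Nat.lt_succ_of_le hi)
  have hIoiP : ∀ (q : FiniteMeasure ℝ × ℝ), (Psi q).mass ≠ 0 → (1 - ε/8 < phi q (Y k)) →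
      (P q).toMeasure (Ioi (Y k)) ≤ t := by
    intro q hq hphi
    haveI : IsProbabilityMeasure (P q).toMeasure := (P q).prop
    have hco : Ioi (Y k) = (Iic (Y k))ᶜ := (compl_Iic (a := Y k)).symm
    rw [hco, measure_compl measurableSet_Iic (measure_ne_top _ _), measure_univ]
    rw [hPdef]
    simp only []
    rw [psi_normalize_toMeasure_Iic hq]
    calc 1 - ENNReal.ofReal (phi q (Y k)) ≤ 1 - ENNReal.ofReal (1 - ε/8) :=
        tsub_le_tsub_left (ENNReal.ofReal_le_ofReal (by linarith)) 1
    _ = ENNReal.ofReal (ε/8) := by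
        rw [← ENNReal.ofReal_one, ← ENNReal.ofReal_sub _ (by linarith)]
        norm_num
  have mainLP : levyProkhorovEDist (P p).toMeasure (P p₀).toMeasure
      ≤ max (ENNReal.ofReal (3*ε/4)) (2*t + (2*k)*d) := by
    haveI : IsProbabilityMeasure (P p).toMeasure := (P p).prop
    haveI : IsProbabilityMeasure (P p₀).toMeasure := (P p₀).prop
    apply grid_LP _ _ k Y (3*ε/4) d t (by positivity) hy hspace
    · exact fun i hi => hIic i (hmem i hi)
    · rw [hPdef]; simp only []
      rw [psi_normalize_toMeasure_Iic hp1]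
      exact ENNReal.ofReal_le_ofReal hp3.le
    · exact hIoiP p hp1 hp4
    · rw [hPdef]; simp only []
      rw [psi_normalize_toMeasure_Iic hm₀]
      apply ENNReal.ofReal_le_ofReal
      have := phi_mono p₀ hY0.le
      linarith
    · exact hIoiP p₀ hm₀ (by have := phi_mono p₀ hYk; linarith)
  have hb : (2*t + (2*(k : ℝ≥0∞))*d) ≤ ENNReal.ofReal (3*ε/4) := by
    have h2t : 2*t = ENNReal.ofReal (ε/4) := by
      rw [htdef, ← ENNReal.ofReal_ofNat 2, ← ENNReal.ofReal_mul (by norm_num)]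
      congr 1
      ring
    have h2kd : (2*(k : ℝ≥0∞))*d = ENNReal.ofReal (2*k*δ) := by
      rw [hddef, ← ENNReal.ofReal_ofNat 2, ← ENNReal.ofReal_natCast k,
        ← ENNReal.ofReal_mul (by norm_num), ← ENNReal.ofReal_mul (by positivity)]
    rw [h2t, h2kd, ← ENNReal.ofReal_add (by positivity) (by positivity)]
    apply ENNReal.ofReal_le_ofReal
    have hkk : 2*(k:ℝ)*δ ≤ ε/2 := by
      have he : 2*(k:ℝ)*δ = (2*(k:ℝ))*ε/(16*((k:ℝ)+1)) := by rw [hδdef]; ring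
      rw [he, div_le_div_iff₀ (by positivity) (by norm_num)]
      nlinarith [hε.le, (Nat.cast_nonneg k : (0:ℝ) ≤ k)]
    linarith
  have hfinal : levyProkhorovEDist (P p).toMeasure (P p₀).toMeasure
      ≤ ENNReal.ofReal (3*ε/4) := mainLP.trans (max_le le_rfl hb)
  have hdeq : dist (H (P p)) (H (P p₀))
      = (levyProkhorovEDist (P p).toMeasure (P p₀).toMeasure).toReal := rfl
  rw [hdeq]
  calc (levyProkhorovEDist (P p).toMeasure (P p₀).toMeasure).toReal
      ≤ (ENNReal.ofReal (3*ε/4)).toReal := ENNReal.toReal_mono ENNReal.ofReal_ne_top hfinal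
  _ = 3*ε/4 := ENNReal.toReal_ofReal (by positivity)
  _ < ε := by linarith


theorem continuous_Psi : Continuous Psi := by
  rw [continuous_iff_continuousAt]
  rintro ⟨μ₀, x₀⟩
  unfold ContinuousAt
  by_cases h0 : (Psi (μ₀, x₀)).mass = 0
  · have hz : Psi (μ₀, x₀) = 0 := (MeasureTheory.FiniteMeasure.mass_zero_iff _).1 h0
    rw [hz]
    apply MeasureTheory.FiniteMeasure.tendsto_zero_of_tendsto_zero_mass
    have hT := continuous_massNN_Psi.tendsto (μ₀, x₀)
    rw [h0] at hT
    exact hT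
  · exact MeasureTheory.FiniteMeasure.tendsto_of_tendsto_normalize_testAgainstNN_of_tendsto_mass
      (tendsto_normalize_Psi h0) (continuous_massNN_Psi.tendsto _)

end

/-- There is a map `Ψ : M(ℝ) × ℝ → M(ℝ)` on finite nonnegative Borel
measures such that `Ψ(μ, x)` is the measure whose distribution function is
`y ↦ (μ(-∞, y] - x)⁺` (expressed via its increments over half-open intervals, and via
the genuine CDF identity when `x ≥ 0`), and `Ψ` is continuous with respect to the weak
topology on `M(ℝ)`. -/
theorem stmt4 :
    ∃ Ψ : FiniteMeasure ℝ × ℝ → FiniteMeasure ℝ,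
      Continuous Ψ ∧
      (∀ (μ : FiniteMeasure ℝ) (x y₁ y₂ : ℝ), y₁ ≤ y₂ →
        ((Ψ (μ, x) (Set.Ioc y₁ y₂) : ℝ≥0) : ℝ)
          = max (((μ (Set.Iic y₂) : ℝ≥0) : ℝ) - x) 0
            - max (((μ (Set.Iic y₁) : ℝ≥0) : ℝ) - x) 0) ∧
      (∀ (μ : FiniteMeasure ℝ) (x y : ℝ), 0 ≤ x →
        ((Ψ (μ, x) (Set.Iic y) : ℝ≥0) : ℝ)
          = max (((μ (Set.Iic y) : ℝ≥0) : ℝ) - x) 0) := by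
  refine ⟨Psi, continuous_Psi, ?_, ?_⟩
  · intro μ x y₁ y₂ h
    rw [Psi_apply_Ioc (μ, x) h]
    rcases le_or_gt 0 x with hx | hx
    · rw [show max ((μ, x).2) 0 = x from max_eq_left hx]
      rfl
    · rw [show max ((μ, x).2) 0 = 0 from max_eq_right hx.le]
      have h1 : max (((μ (Set.Iic y₂) : ℝ≥0) : ℝ) - x) 0
          = ((μ (Set.Iic y₂) : ℝ≥0) : ℝ) - x :=
        max_eq_left (by linarith [NNReal.coe_nonneg (μ (Set.Iic y₂))])
      have h2 : max (((μ (Set.Iic y₁) : ℝ≥0) : ℝ) - x) 0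
          = ((μ (Set.Iic y₁) : ℝ≥0) : ℝ) - x :=
        max_eq_left (by linarith [NNReal.coe_nonneg (μ (Set.Iic y₁))])
      rw [h1, h2]
      have h3 : max (rcdf (μ, x).1 y₂ - 0) 0 = rcdf μ y₂ := by
        rw [sub_zero]; exact max_eq_left (rcdf_nonneg μ y₂)
      have h4 : max (rcdf (μ, x).1 y₁ - 0) 0 = rcdf μ y₁ := by
        rw [sub_zero]; exact max_eq_left (rcdf_nonneg μ y₁)
      rw [h3, h4]
      show rcdf μ y₂ - rcdf μ y₁ = _
      rw [rcdf, rcdf]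
      ring
  · intro μ x y hx
    rw [Psi_apply_Iic (μ, x) y, show max ((μ, x).2) 0 = x from max_eq_left hx]
    rfl
end

section
/- Let μ : [0, ∞) → M(ℝ) be a càdlàg measure-valued path and define Γ(μ)(t) = sup_{s ∈ [0,t]} [ μ(s)(-∞, 0] ∧ inf_{u ∈ [s,t]} μ(u)(ℝ) ]. Then Γ(μ) is a càdlàg real-valued function on [0, ∞). -/
open MeasureTheory Set
open scoped NNReal


/-- `Γ(μ)(t) = sup_{s ∈ [0,t]} [ μ(s)(-∞, 0] ∧ inf_{u ∈ [s,t]} μ(u)(ℝ) ]` for a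
measure-valued path `μ`. -/
noncomputable def GammaMap (μ : ℝ → FiniteMeasure ℝ) (t : ℝ) : ℝ :=
  sSup ((fun s => min ((μ s (Set.Iic 0) : ℝ≥0) : ℝ)
      (sInf ((fun u => ((μ u Set.univ : ℝ≥0) : ℝ)) '' Set.Icc s t))) '' Set.Icc 0 t)

namespace Stmt5Aux

variable (μ : ℝ → FiniteMeasure ℝ)

noncomputable def gm : ℝ → ℝ := fun u => ((μ u Set.univ : ℝ≥0) : ℝ)
noncomputable def fm : ℝ → ℝ := fun s => ((μ s (Set.Iic 0) : ℝ≥0) : ℝ)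
noncomputable def term (t s : ℝ) : ℝ := min (fm μ s) (sInf (gm μ '' Set.Icc s t))

noncomputable def termIo (t s : ℝ) : ℝ := min (fm μ s) (sInf (gm μ '' Set.Ico s t))

lemma gamma_eq (t : ℝ) : GammaMap μ t = sSup (term μ t '' Set.Icc 0 t) := rfl

lemma gm_nonneg (u : ℝ) : 0 ≤ gm μ u := NNReal.coe_nonneg _

lemma fm_nonneg (s : ℝ) : 0 ≤ fm μ s := NNReal.coe_nonneg _

lemma fm_le_gm (s : ℝ) : fm μ s ≤ gm μ s :=
  NNReal.coe_le_coe.mpr ((μ s).apply_mono (Set.subset_univ _))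

lemma bddBelow_gm (A : Set ℝ) : BddBelow (gm μ '' A) := by
  refine ⟨0, fun x hx => ?_⟩
  rcases hx with ⟨u, -, rfl⟩
  exact gm_nonneg μ u

lemma sInf_gm_le {A : Set ℝ} {u : ℝ} (hu : u ∈ A) : sInf (gm μ '' A) ≤ gm μ u :=
  csInf_le (bddBelow_gm μ A) (Set.mem_image_of_mem _ hu)

lemma le_sInf_gm {A : Set ℝ} {c : ℝ} (hA : A.Nonempty) (h : ∀ w ∈ A, c ≤ gm μ w) :
    c ≤ sInf (gm μ '' A) := by
  refine le_csInf (hA.image _) ?_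
  rintro b ⟨w, hw, rfl⟩
  exact h w hw

lemma sInf_gm_mono {A B : Set ℝ} (hA : A.Nonempty) (h : A ⊆ B) :
    sInf (gm μ '' B) ≤ sInf (gm μ '' A) :=
  csInf_le_csInf (bddBelow_gm μ B) (hA.image _) (Set.image_mono h)

lemma term_nonneg {t s : ℝ} (hst : s ≤ t) : 0 ≤ term μ t s :=
  le_min (fm_nonneg μ s) (le_sInf_gm μ (Set.nonempty_Icc.mpr hst) fun w _ => gm_nonneg μ w)

lemma termIo_nonneg {t s : ℝ} (hst : s < t) : 0 ≤ termIo μ t s :=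
  le_min (fm_nonneg μ s) (le_sInf_gm μ (Set.nonempty_Ico.mpr hst) fun w _ => gm_nonneg μ w)

lemma term_le_gm {t s : ℝ} (hst : s ≤ t) : term μ t s ≤ gm μ t :=
  (min_le_right _ _).trans (sInf_gm_le μ (Set.mem_Icc.mpr ⟨hst, le_rfl⟩))

lemma bddAbove_S (t : ℝ) : BddAbove (term μ t '' Set.Icc 0 t) := by
  refine ⟨gm μ t, ?_⟩
  rintro x ⟨s, hs, rfl⟩
  exact term_le_gm μ hs.2

lemma term_mem_S {t s : ℝ} (h0 : 0 ≤ s) (hst : s ≤ t) :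
    term μ t s ∈ term μ t '' Set.Icc 0 t :=
  Set.mem_image_of_mem _ (Set.mem_Icc.mpr ⟨h0, hst⟩)

lemma term_anti {t t' s : ℝ} (hst : s ≤ t) (htt' : t ≤ t') : term μ t' s ≤ term μ t s := by
  refine min_le_min le_rfl (sInf_gm_mono μ (Set.nonempty_Icc.mpr hst) (Set.Icc_subset_Icc le_rfl htt'))

lemma term_self {t : ℝ} : term μ t t = fm μ t := by
  rw [term, Set.Icc_self, Set.image_singleton, csInf_singleton]
  exact min_eq_left (fm_le_gm μ t)

lemma gamma_nonneg {t : ℝ} (ht : 0 ≤ t) : 0 ≤ sSup (term μ t '' Set.Icc 0 t) :=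
  (term_nonneg μ (le_refl t)).trans (le_csSup (bddAbove_S μ t) (term_mem_S μ ht le_rfl))

lemma tendsto_gm {l : Filter ℝ} {ν : FiniteMeasure ℝ} (h : Filter.Tendsto μ l (nhds ν)) :
    Filter.Tendsto (gm μ) l (nhds ((ν Set.univ : ℝ≥0) : ℝ)) :=
  NNReal.tendsto_coe.mpr h.mass

lemma eventually_fm_lt {l : Filter ℝ} {ν : FiniteMeasure ℝ}
    (h : Filter.Tendsto μ l (nhds ν)) {ε : ℝ} (hε : 0 < ε) :
    ∀ᶠ s in l, fm μ s < ((ν (Set.Iic 0) : ℝ≥0) : ℝ) + ε := by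
  have hlim := FiniteMeasure.limsup_measure_closed_le_of_tendsto h (isClosed_Iic (a := (0:ℝ)))
  have hfin : ((ν : Measure ℝ) (Set.Iic 0)) ≠ ⊤ := (measure_lt_top _ _).ne
  have hlt : Filter.limsup (fun i => (μ i : Measure ℝ) (Set.Iic 0)) l
      < (ν : Measure ℝ) (Set.Iic 0) + ENNReal.ofReal ε :=
    lt_of_le_of_lt hlim (ENNReal.lt_add_right hfin (ENNReal.ofReal_pos.mpr hε).ne')
  filter_upwards [Filter.eventually_lt_of_limsup_lt hlt] with s hs
  have h1 : ((μ s : Measure ℝ) (Set.Iic 0)).toReal = fm μ s := by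
    rw [← FiniteMeasure.ennreal_coeFn_eq_coeFn_toMeasure, ENNReal.coe_toReal]
    rfl
  have h2 : ((ν : Measure ℝ) (Set.Iic 0)).toReal = ((ν (Set.Iic 0) : ℝ≥0) : ℝ) := by
    rw [← FiniteMeasure.ennreal_coeFn_eq_coeFn_toMeasure, ENNReal.coe_toReal]
  have h3 := (ENNReal.toReal_lt_toReal (measure_ne_top _ _)
      (by simp [hfin, ENNReal.add_ne_top] : (ν : Measure ℝ) (Set.Iic 0) + ENNReal.ofReal ε ≠ ⊤)).mpr hs
  rw [ENNReal.toReal_add hfin ENNReal.ofReal_ne_top, ENNReal.toReal_ofReal hε.le, h1, h2] at h3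
  exact h3



theorem right_cont (μ : ℝ → FiniteMeasure ℝ)
    (hrc : ∀ t, 0 ≤ t → ContinuousWithinAt μ (Set.Ici t) t)
    (t : ℝ) (ht : 0 ≤ t) : ContinuousWithinAt (GammaMap μ) (Set.Ici t) t := by
  rw [Metric.continuousWithinAt_iff]
  intro ε hε
  have hε2 : 0 < ε / 2 := by linarith
  have hgc := tendsto_gm μ (hrc t ht)
  obtain ⟨δ₁, hδ₁, hg⟩ := Metric.tendsto_nhdsWithin_nhds.mp hgc (ε / 2) hε2
  have hf := eventually_fm_lt μ (hrc t ht) hε2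
  obtain ⟨δ₂, hδ₂, hfb⟩ := Metric.mem_nhdsWithin_iff.mp hf
  refine ⟨min δ₁ δ₂, lt_min hδ₁ hδ₂, ?_⟩
  intro u hu hud
  have hut : t ≤ u := hu
  have hud1 : dist u t < δ₁ := lt_of_lt_of_le hud (min_le_left _ _)
  have hud2 : dist u t < δ₂ := lt_of_lt_of_le hud (min_le_right _ _)
  rw [Real.dist_eq, abs_of_nonneg (by linarith : (0:ℝ) ≤ u - t)] at hud1 hud2
  rw [gamma_eq, gamma_eq]
  have hgt : gm μ t = ((μ t Set.univ : ℝ≥0) : ℝ) := rfl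
  have hft : fm μ t ≤ sSup (term μ t '' Set.Icc 0 t) := by
    rw [← term_self μ]
    exact le_csSup (bddAbove_S μ t) (term_mem_S μ ht le_rfl)
  have key1 : sSup (term μ u '' Set.Icc 0 u) ≤ sSup (term μ t '' Set.Icc 0 t) + ε / 2 := by
    apply Real.sSup_le
    · rintro x ⟨s, hs, rfl⟩
      rcases le_or_gt s t with hst | hts
      · have h1 : term μ u s ≤ term μ t s := term_anti μ hst hut
        have h2 : term μ t s ≤ sSup (term μ t '' Set.Icc 0 t) :=
          le_csSup (bddAbove_S μ t) (term_mem_S μ hs.1 hst)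
        linarith
      · have hsmem : s ∈ Metric.ball t δ₂ ∩ Set.Ici t := by
          constructor
          · rw [Metric.mem_ball, Real.dist_eq, abs_of_nonneg (by linarith : (0:ℝ) ≤ s - t)]
            linarith [hs.2]
          · exact le_of_lt hts
        have hfs : fm μ s < fm μ t + ε / 2 := hfb hsmem
        have h3 : term μ u s ≤ fm μ s := min_le_left _ _
        linarith
    · linarith [gamma_nonneg μ ht]
  have key2 : sSup (term μ t '' Set.Icc 0 t) ≤ sSup (term μ u '' Set.Icc 0 u) + ε / 2 := by
    apply Real.sSup_le
    · rintro x ⟨s, hs, rfl⟩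
      have hsu : s ≤ u := le_trans hs.2 hut
      have hsplit : min (sInf (gm μ '' Set.Icc s t)) (gm μ t - ε / 2)
          ≤ sInf (gm μ '' Set.Icc s u) := by
        apply le_sInf_gm μ (Set.nonempty_Icc.mpr hsu)
        intro w hw
        rcases le_or_gt w t with hwt | htw
        · exact le_trans (min_le_left _ _) (sInf_gm_le μ (Set.mem_Icc.mpr ⟨hw.1, hwt⟩))
        · have hwd : dist w t < δ₁ := by
            rw [Real.dist_eq, abs_of_nonneg (by linarith : (0:ℝ) ≤ w - t)]
            linarith [hw.2]
          have hgw := hg (le_of_lt htw) hwd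
          rw [Real.dist_eq, abs_lt] at hgw
          have := min_le_right (sInf (gm μ '' Set.Icc s t)) (gm μ t - ε / 2)
          rw [← hgt] at hgw
          linarith [hgw.1]
      have hbt : sInf (gm μ '' Set.Icc s t) ≤ gm μ t :=
        sInf_gm_le μ (Set.mem_Icc.mpr ⟨hs.2, le_rfl⟩)
      have hxy : term μ t s - ε / 2 ≤ term μ u s := by
        have h4 : min (fm μ s) (sInf (gm μ '' Set.Icc s t)) - ε / 2
            ≤ min (fm μ s) (min (sInf (gm μ '' Set.Icc s t)) (gm μ t - ε / 2)) := by
          have l1 := min_le_left (fm μ s) (sInf (gm μ '' Set.Icc s t))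
          have l2 := min_le_right (fm μ s) (sInf (gm μ '' Set.Icc s t))
          refine le_min (by linarith) (le_min (by linarith) (by linarith))
        calc term μ t s - ε / 2 ≤ _ := h4
          _ ≤ min (fm μ s) (sInf (gm μ '' Set.Icc s u)) := min_le_min le_rfl hsplit
          _ = term μ u s := rfl
      have h5 : term μ u s ≤ sSup (term μ u '' Set.Icc 0 u) :=
        le_csSup (bddAbove_S μ u) (term_mem_S μ hs.1 hsu)
      linarith
    · linarith [gamma_nonneg μ (le_trans ht hut)]
  rw [Real.dist_eq, abs_sub_lt_iff]
  constructor <;> linarith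

theorem left_lim (μ : ℝ → FiniteMeasure ℝ)
    (hll : ∀ t, 0 < t →
      ∃ m : FiniteMeasure ℝ, Filter.Tendsto μ (nhdsWithin t (Set.Iio t)) (nhds m))
    (t : ℝ) (ht : 0 < t) :
    ∃ l : ℝ, Filter.Tendsto (GammaMap μ) (nhdsWithin t (Set.Iio t)) (nhds l) := by
  obtain ⟨m, hm⟩ := hll t ht
  have hgc := tendsto_gm μ hm
  set L : ℝ := ((m Set.univ : ℝ≥0) : ℝ) with hL
  set T : Set ℝ := termIo μ t '' Set.Ico 0 t with hT
  have hTne : T.Nonempty := ⟨_, Set.mem_image_of_mem _ (Set.mem_Ico.mpr ⟨le_rfl, ht⟩)⟩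
  have hT0 : 0 ≤ termIo μ t 0 := termIo_nonneg μ ht
  have hTbdd : BddAbove T := by
    obtain ⟨δ0, hδ0, hg0⟩ := Metric.tendsto_nhdsWithin_nhds.mp hgc 1 one_pos
    refine ⟨L + 1, ?_⟩
    rintro x ⟨s, hs, rfl⟩
    set w := max s (max 0 (t - δ0 / 2)) with hw
    have hws : s ≤ w := le_max_left _ _
    have hwt : w < t := max_lt hs.2 (max_lt ht (by linarith))
    have hw2 : t - δ0 / 2 ≤ w := le_trans (le_max_right _ _) (le_max_right _ _)
    have hwd : dist w t < δ0 := by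
      rw [Real.dist_eq, abs_of_nonpos (by linarith : w - t ≤ 0)]
      linarith
    have hgw := hg0 hwt hwd
    rw [Real.dist_eq, abs_lt] at hgw
    have h1 : termIo μ t s ≤ gm μ w :=
      le_trans (min_le_right _ _) (sInf_gm_le μ (Set.mem_Ico.mpr ⟨hws, hwt⟩))
    linarith [hgw.2]
  refine ⟨sSup T, Metric.tendsto_nhdsWithin_nhds.mpr ?_⟩
  intro ε hε
  have hε3 : 0 < ε / 3 := by linarith
  obtain ⟨δ₁, hδ₁, hg1⟩ := Metric.tendsto_nhdsWithin_nhds.mp hgc (ε / 3) hε3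
  obtain ⟨x0, hx0T, hx0⟩ := exists_lt_of_lt_csSup hTne
    (show sSup T - ε / 3 < sSup T by linarith)
  obtain ⟨s₀, hs₀, rfl⟩ := hx0T
  refine ⟨min δ₁ (t - s₀), lt_min hδ₁ (by linarith [hs₀.2]), ?_⟩
  intro v hv hvd
  have hvt : v < t := hv
  have hvd1 : dist v t < δ₁ := lt_of_lt_of_le hvd (min_le_left _ _)
  have hvds : dist v t < t - s₀ := lt_of_lt_of_le hvd (min_le_right _ _)
  rw [Real.dist_eq, abs_of_nonpos (by linarith : v - t ≤ 0)] at hvds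
  have hvs0 : s₀ ≤ v := by linarith
  have hv0 : 0 ≤ v := le_trans hs₀.1 hvs0
  have hlow : sSup T - ε / 3 < GammaMap μ v := by
    have h1 : termIo μ t s₀ ≤ term μ v s₀ := by
      refine min_le_min le_rfl (sInf_gm_mono μ (Set.nonempty_Icc.mpr hvs0) ?_)
      intro w hw
      exact Set.mem_Ico.mpr ⟨hw.1, lt_of_le_of_lt hw.2 hvt⟩
    have h2 : term μ v s₀ ≤ GammaMap μ v := by
      rw [gamma_eq]
      exact le_csSup (bddAbove_S μ v) (term_mem_S μ hs₀.1 hvs0)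
    linarith
  have hgv := hg1 hvt hvd1
  rw [Real.dist_eq, abs_lt] at hgv
  have hup : GammaMap μ v ≤ sSup T + 2 * (ε / 3) := by
    rw [gamma_eq]
    apply Real.sSup_le
    · rintro x ⟨s, hs, rfl⟩
      have hst : s < t := lt_of_le_of_lt hs.2 hvt
      have hxv : term μ v s ≤ gm μ v := term_le_gm μ hs.2
      have hkey : min (term μ v s) (L - ε / 3) ≤ termIo μ t s := by
        rw [term, termIo, min_assoc]
        refine min_le_min le_rfl ?_
        apply le_sInf_gm μ (Set.nonempty_Ico.mpr hst)
        intro w hw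
        rcases le_or_gt w v with hwv | hvw
        · exact le_trans (min_le_left _ _) (sInf_gm_le μ (Set.mem_Icc.mpr ⟨hw.1, hwv⟩))
        · have hwd : dist w t < δ₁ := by
            rw [Real.dist_eq, abs_of_nonpos (by linarith [hw.2] : w - t ≤ 0)]
            rw [Real.dist_eq, abs_of_nonpos (by linarith : v - t ≤ 0)] at hvd1
            linarith [hw.2]
          have hgw := hg1 hw.2 hwd
          rw [Real.dist_eq, abs_lt] at hgw
          have := min_le_right (sInf (gm μ '' Set.Icc s v)) (L - ε / 3)
          linarith [hgw.1]
      have hTle : termIo μ t s ≤ sSup T :=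
        le_csSup hTbdd (Set.mem_image_of_mem _ (Set.mem_Ico.mpr ⟨hs.1, hst⟩))
      rcases le_total (term μ v s) (L - ε / 3) with hc | hc
      · rw [min_eq_left hc] at hkey
        linarith
      · rw [min_eq_right hc] at hkey
        linarith [hgv.2]
    · have h0T : 0 ≤ sSup T :=
        le_trans hT0 (le_csSup hTbdd (Set.mem_image_of_mem _ (Set.mem_Ico.mpr ⟨le_rfl, ht⟩)))
      linarith
  rw [Real.dist_eq, abs_lt]
  constructor <;> linarith

end Stmt5Aux

/-- If `μ : [0,∞) → M(ℝ)` is càdlàg (with `M(ℝ)` in the weak topology),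
then `Γ(μ)` is a càdlàg real-valued function on `[0, ∞)`. -/
theorem stmt5 (μ : ℝ → FiniteMeasure ℝ)
    (hrc : ∀ t, 0 ≤ t → ContinuousWithinAt μ (Set.Ici t) t)
    (hll : ∀ t, 0 < t →
      ∃ m : FiniteMeasure ℝ, Filter.Tendsto μ (nhdsWithin t (Set.Iio t)) (nhds m)) :
    (∀ t, 0 ≤ t → ContinuousWithinAt (GammaMap μ) (Set.Ici t) t) ∧
    (∀ t, 0 < t →
      ∃ l : ℝ, Filter.Tendsto (GammaMap μ) (nhdsWithin t (Set.Iio t)) (nhds l)) := by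
  exact ⟨Stmt5Aux.right_cont μ hrc, Stmt5Aux.left_lim μ hll⟩
end

section
/- Let W be a random variable with density φ(w) = θ e^{-θw}/(1 - e^{-θD}) on [0, D] (θ ≠ 0, D > 0), and let V ≥ 0 be a random variable independent of W with V ≤ D almost surely and E[e^{θV}] < ∞. Then P(W > D - V) = (E[e^{θV}] - 1)/(e^{θD} - 1). -/
open MeasureTheory Set

lemma aux_int (θ : ℝ) (a b : ℝ) :
    ∫ w in a..b, θ * Real.exp (-θ * w) = Real.exp (-θ * a) - Real.exp (-θ * b) := by
  have hderiv : ∀ w ∈ Set.uIcc a b, HasDerivAt (fun w => -Real.exp (-θ * w))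
      (θ * Real.exp (-θ * w)) w := by
    intro w _
    have h : HasDerivAt (fun w : ℝ => -θ * w) (-θ) w := by
      simpa using (hasDerivAt_id w).const_mul (-θ)
    have h2 := ((Real.hasDerivAt_exp (-θ * w)).comp w h).neg
    refine h2.congr_deriv ?_
    ring
  have hcont : IntervalIntegrable (fun w => θ * Real.exp (-θ * w)) volume a b :=
    (Continuous.intervalIntegrable (by continuity) a b)
  rw [intervalIntegral.integral_eq_sub_of_hasDerivAt hderiv hcont]
  ring

lemma aux_ratio_nonneg {θ D v : ℝ} (hθ : θ ≠ 0) (hD : 0 < D) (hv : 0 ≤ v) (hvD : v ≤ D) :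
    0 ≤ (Real.exp (θ * v) - 1) / (Real.exp (θ * D) - 1) := by
  rcases lt_or_gt_of_ne hθ with h | h
  · have h1 : Real.exp (θ * v) ≤ 1 := Real.exp_le_one_iff.mpr (mul_nonpos_of_nonpos_of_nonneg h.le hv)
    have h2 : Real.exp (θ * D) < 1 := Real.exp_lt_one_iff.mpr (mul_neg_of_neg_of_pos h hD)
    have := div_nonneg (by linarith : (0:ℝ) ≤ -(Real.exp (θ * v) - 1))
      (by linarith : (0:ℝ) ≤ -(Real.exp (θ * D) - 1))
    rwa [neg_div_neg_eq] at this
  · have h1 : 1 ≤ Real.exp (θ * v) := Real.one_le_exp (mul_nonneg h.le hv)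
    have h2 : 1 < Real.exp (θ * D) := Real.one_lt_exp_iff.mpr (mul_pos h hD)
    exact div_nonneg (by linarith) (by linarith)

lemma aux_denom_ne {θ D : ℝ} (hθ : θ ≠ 0) (hD : 0 < D) : Real.exp (θ * D) - 1 ≠ 0 := by
  rcases lt_or_gt_of_ne hθ with h | h
  · have h2 : Real.exp (θ * D) < 1 := Real.exp_lt_one_iff.mpr (mul_neg_of_neg_of_pos h hD)
    linarith
  · have h2 : 1 < Real.exp (θ * D) := Real.one_lt_exp_iff.mpr (mul_pos h hD)
    linarith

lemma aux_denom_ne' {θ D : ℝ} (hθ : θ ≠ 0) (hD : 0 < D) : 1 - Real.exp (-θ * D) ≠ 0 := by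
  intro h
  have h2 : Real.exp (-θ * D) = 1 := by linarith
  have h3 : -θ * D = 0 := Real.exp_injective (by rw [h2, Real.exp_zero])
  rcases mul_eq_zero.mp h3 with h4 | h4
  · exact hθ (neg_eq_zero.mp h4)
  · exact hD.ne' h4

-- law of W applied to Ioi (D - v)
lemma aux_muW {θ D : ℝ} (hθ : θ ≠ 0) (hD : 0 < D) {v : ℝ} (hv : 0 ≤ v) (hvD : v ≤ D) :
    ((volume.restrict (Set.Icc (0 : ℝ) D)).withDensity
        (fun w => ENNReal.ofReal (θ * Real.exp (-θ * w) / (1 - Real.exp (-θ * D)))))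
      (Ioi (D - v))
      = ENNReal.ofReal ((Real.exp (θ * v) - 1) / (Real.exp (θ * D) - 1)) := by
  rw [withDensity_apply _ measurableSet_Ioi, Measure.restrict_restrict measurableSet_Ioi]
  have hset : Ioi (D - v) ∩ Icc 0 D = Ioc (D - v) D := by
    ext w; simp only [mem_inter_iff, mem_Ioi, mem_Icc, mem_Ioc]
    constructor
    · rintro ⟨h1, _, h3⟩; exact ⟨h1, h3⟩
    · rintro ⟨h1, h2⟩; exact ⟨h1, by linarith, h2⟩
  rw [hset]
  -- nonneg density
  have hpos : 0 < θ / (1 - Real.exp (-θ * D)) := by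
    rcases lt_or_gt_of_ne hθ with h | h
    · have : 1 < Real.exp (-θ * D) := Real.one_lt_exp_iff.mpr (by nlinarith)
      exact div_pos_of_neg_of_neg h (by linarith)
    · have : Real.exp (-θ * D) < 1 := Real.exp_lt_one_iff.mpr (by nlinarith)
      exact div_pos h (by linarith)
  have hfnn : ∀ w, 0 ≤ θ * Real.exp (-θ * w) / (1 - Real.exp (-θ * D)) := by
    intro w
    have : θ * Real.exp (-θ * w) / (1 - Real.exp (-θ * D))
        = (θ / (1 - Real.exp (-θ * D))) * Real.exp (-θ * w) := by ring
    rw [this]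
    exact mul_nonneg hpos.le (Real.exp_pos _).le
  have hintg : IntegrableOn (fun w => θ * Real.exp (-θ * w) / (1 - Real.exp (-θ * D)))
      (Ioc (D - v) D) volume := by
    apply Continuous.integrableOn_Ioc
    continuity
  rw [← ofReal_integral_eq_lintegral_ofReal hintg (Filter.Eventually.of_forall hfnn)]
  congr 1
  have : ∫ w in Ioc (D - v) D, θ * Real.exp (-θ * w) / (1 - Real.exp (-θ * D))
      = (∫ w in (D - v)..D, θ * Real.exp (-θ * w)) / (1 - Real.exp (-θ * D)) := by
    rw [intervalIntegral.integral_of_le (by linarith), integral_div]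
  rw [this, aux_int]
  rw [div_eq_div_iff (aux_denom_ne' hθ hD) (aux_denom_ne hθ hD)]
  have e1 : Real.exp (-θ * (D - v)) = Real.exp (θ * v) * Real.exp (-θ * D) := by
    rw [← Real.exp_add]; ring_nf
  have e2 : Real.exp (θ * D) * Real.exp (-θ * D) = 1 := by
    rw [← Real.exp_add]; ring_nf; exact Real.exp_zero
  rw [e1]
  linear_combination (Real.exp (θ * v) - 1) * e2

/-- Let `W` have the truncated exponential density
`φ(w) = θ e^{-θw}/(1 - e^{-θD})` on `[0, D]` (`θ ≠ 0`, `D > 0`), and let `V` be a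
random variable independent of `W` with `0 ≤ V ≤ D` a.s. and `E[e^{θV}] < ∞`. Then
`P(W > D - V) = (E[e^{θV}] - 1)/(e^{θD} - 1)`. -/
theorem stmt12 {Ω : Type*} [MeasurableSpace Ω] (P : Measure Ω) [IsProbabilityMeasure P]
    (θ D : ℝ) (hθ : θ ≠ 0) (hD : 0 < D)
    (W V : Ω → ℝ) (hWm : Measurable W) (hVm : Measurable V)
    (hlaw : Measure.map W P
      = (volume.restrict (Set.Icc (0 : ℝ) D)).withDensity
          (fun w => ENNReal.ofReal (θ * Real.exp (-θ * w) / (1 - Real.exp (-θ * D)))))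
    (hVrange : ∀ᵐ ω ∂P, 0 ≤ V ω ∧ V ω ≤ D)
    (hindep : ProbabilityTheory.IndepFun W V P)
    (hint : Integrable (fun ω => Real.exp (θ * V ω)) P) :
    (P {ω | D - V ω < W ω}).toReal
      = ((∫ ω, Real.exp (θ * V ω) ∂P) - 1) / (Real.exp (θ * D) - 1) := by
  have hpair : Measure.map (fun ω => (V ω, W ω)) P
      = (Measure.map V P).prod (Measure.map W P) :=
    (ProbabilityTheory.indepFun_iff_map_prod_eq_prod_map_map hVm.aemeasurable
      hWm.aemeasurable).mp hindep.symm
  have hs : MeasurableSet {p : ℝ × ℝ | D - p.1 < p.2} :=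
    measurableSet_lt (measurable_const.sub measurable_fst) measurable_snd
  have h1 : P {ω | D - V ω < W ω}
      = ((Measure.map V P).prod (Measure.map W P)) {p | D - p.1 < p.2} := by
    rw [← hpair, Measure.map_apply (hVm.prodMk hWm) hs]
    rfl
  rw [h1, Measure.prod_apply hs]
  have h2 : ∀ v : ℝ, Prod.mk v ⁻¹' {p : ℝ × ℝ | D - p.1 < p.2} = Ioi (D - v) := by
    intro v; rfl
  -- a.e. range of V under map measure
  have hVrange' : ∀ᵐ v ∂(Measure.map V P), 0 ≤ v ∧ v ≤ D := by
    rw [ae_map_iff hVm.aemeasurable]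
    · exact hVrange
    · exact (measurableSet_Ici.inter measurableSet_Iic : MeasurableSet {v : ℝ | 0 ≤ v ∧ v ≤ D})
  have h3 : ∫⁻ v, (Measure.map W P) (Prod.mk v ⁻¹' {p : ℝ × ℝ | D - p.1 < p.2})
        ∂(Measure.map V P)
      = ∫⁻ v, ENNReal.ofReal ((Real.exp (θ * v) - 1) / (Real.exp (θ * D) - 1))
        ∂(Measure.map V P) := by
    refine lintegral_congr_ae ?_
    filter_upwards [hVrange'] with v hv
    rw [h2 v, hlaw, aux_muW hθ hD hv.1 hv.2]
  rw [h3]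
  have hmg : Measurable fun v : ℝ =>
      ENNReal.ofReal ((Real.exp (θ * v) - 1) / (Real.exp (θ * D) - 1)) := by
    exact (((Real.measurable_exp.comp (measurable_const.mul measurable_id)).sub
      measurable_const).div_const _).ennreal_ofReal
  rw [lintegral_map hmg hVm]
  have hintg : Integrable (fun ω => (Real.exp (θ * V ω) - 1) / (Real.exp (θ * D) - 1)) P :=
    (hint.sub (integrable_const 1)).div_const _
  have hnn : 0 ≤ᵐ[P] fun ω => (Real.exp (θ * V ω) - 1) / (Real.exp (θ * D) - 1) := by
    filter_upwards [hVrange] with ω hω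
    exact aux_ratio_nonneg hθ hD hω.1 hω.2
  rw [← ofReal_integral_eq_lintegral_ofReal hintg hnn, ENNReal.toReal_ofReal
    (integral_nonneg_of_ae hnn)]
  rw [integral_div, integral_sub hint (integrable_const 1), integral_const]
  simp
end

section
/- Single-server reneging optimality of EDF (deterministic, pathwise): Consider finitely many customers indexed k = 1, …, n, customer k arriving at time S_k with service requirement v_k > 0 and deadline d_k > S_k, where a service policy specifies, for each time t, measurable allocation of total service rate at most 1 among customers present (a customer is present from its arrival until it is either served to completion or its deadline elapses, at which point its residual work is deleted). Let R_π(t) denote the cumulative residual work deleted due to elapsed deadlines under policy π up to time t, and let R_EDF(t) be the corresponding quantity under the preemptive Earliest-Deadline-First policy (always serve the present customer with the earliest deadline, never idle when customers are present). Then R_EDF(t) ≤ R_π(t) for every t ≥ 0 and every policy π. -/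
open MeasureTheory Set

/-- Residual work of customer `k` at time `t` under the service-rate allocation
`rate`: the initial service requirement minus the cumulative service received. -/
noncomputable def resid {n : ℕ} (v : Fin n → ℝ) (rate : ℝ → Fin n → ℝ)
    (k : Fin n) (t : ℝ) : ℝ :=
  v k - ∫ s in (0 : ℝ)..t, rate s k

/-- Customer `k` is present at time `t`: it has arrived, its deadline has not yet
elapsed, and it has strictly positive residual work. -/
def present {n : ℕ} (S v d : Fin n → ℝ) (rate : ℝ → Fin n → ℝ)
    (k : Fin n) (t : ℝ) : Prop :=
  S k ≤ t ∧ t < d k ∧ 0 < resid v rate k t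

/-- A service policy for the single-server reneging system: a measurable allocation of
total service rate at most `1` among the customers present. -/
structure Policy (n : ℕ) (S v d : Fin n → ℝ) where
  rate : ℝ → Fin n → ℝ
  meas : ∀ k, Measurable fun t => rate t k
  nonneg : ∀ t k, 0 ≤ rate t k
  total : ∀ t, (∑ k, rate t k) ≤ 1
  support : ∀ t k, rate t k ≠ 0 → present S v d rate k t

/-- Cumulative work deleted due to elapsed deadlines (reneged work) by time `t`:
the sum, over customers whose deadline has elapsed, of their residual work at the
deadline. -/
noncomputable def renegedWork {n : ℕ} (_S v d : Fin n → ℝ) (rate : ℝ → Fin n → ℝ)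
    (t : ℝ) : ℝ :=
  ∑ k, if d k ≤ t then max (resid v rate k (d k)) 0 else 0

/-- A policy is (preemptive) Earliest-Deadline-First: whenever some customer is
present, it serves, at full rate `1`, a present customer whose deadline is earliest
among all present customers (in particular it never idles when customers are
present). -/
def IsEDF {n : ℕ} (S v d : Fin n → ℝ) (π : Policy n S v d) : Prop :=
  ∀ t : ℝ, (∃ k, present S v d π.rate k t) →
    ∃ k, present S v d π.rate k t ∧ (∀ j, present S v d π.rate j t → d k ≤ d j) ∧
      π.rate t k = 1

namespace EDFAux

variable {n : ℕ} {S v d : Fin n → ℝ}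

lemma rate_le_one (p : Policy n S v d) (t : ℝ) (k : Fin n) : p.rate t k ≤ 1 :=
  le_trans (Finset.single_le_sum (fun j _ => p.nonneg t j) (Finset.mem_univ k)) (p.total t)

lemma rate_intInt (p : Policy n S v d) (k : Fin n) (a b : ℝ) :
    IntervalIntegrable (fun s => p.rate s k) volume a b := by
  refine (intervalIntegrable_const (c := (1 : ℝ))).mono_fun
    ((p.meas k).aestronglyMeasurable.restrict) ?_
  refine Filter.Eventually.of_forall fun x => ?_
  simp only [Real.norm_eq_abs, abs_of_nonneg (p.nonneg x k)]
  simpa using rate_le_one p x k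

lemma rate_zero (p : Policy n S v d) {t : ℝ} {k : Fin n}
    (h : ¬ present S v d p.rate k t) : p.rate t k = 0 := by
  by_contra h'; exact h (p.support t k h')

lemma rate_zero_before (p : Policy n S v d) {t : ℝ} {k : Fin n} (h : t < S k) :
    p.rate t k = 0 :=
  rate_zero p fun hp => absurd hp.1 (not_le.2 h)

lemma rate_zero_after (p : Policy n S v d) {t : ℝ} {k : Fin n} (h : d k ≤ t) :
    p.rate t k = 0 :=
  rate_zero p fun hp => absurd hp.2.1 (not_lt.2 h)

lemma integral_rate_zero (p : Policy n S v d) {k : Fin n} {a b : ℝ} (hab : a ≤ b)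
    (h : ∀ s ∈ Set.Ioc a b, p.rate s k = 0) : (∫ s in a..b, p.rate s k) = 0 := by
  rw [intervalIntegral.integral_of_le hab]
  calc (∫ s in Set.Ioc a b, p.rate s k) = ∫ _ in Set.Ioc a b, (0 : ℝ) :=
        setIntegral_congr_fun measurableSet_Ioc h
    _ = 0 := by simp

lemma resid_sub (p : Policy n S v d) (k : Fin n) (a b : ℝ) :
    resid v p.rate k b = resid v p.rate k a - ∫ s in a..b, p.rate s k := by
  unfold resid
  rw [← intervalIntegral.integral_add_adjacent_intervals (rate_intInt p k 0 a)
    (rate_intInt p k a b)]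
  ring

lemma resid_cont (p : Policy n S v d) (k : Fin n) : Continuous (resid v p.rate k) :=
  continuous_const.sub (intervalIntegral.continuous_primitive (fun a b => rate_intInt p k a b) 0)

lemma resid_zero (p : Policy n S v d) (k : Fin n) : resid v p.rate k 0 = v k := by
  simp [resid]

lemma resid_frozen (p : Policy n S v d) (k : Fin n) {a b : ℝ} (hab : a ≤ b)
    (h : ∀ s ∈ Set.Ioc a b, p.rate s k = 0) :
    resid v p.rate k b = resid v p.rate k a := by
  rw [resid_sub p k a b, integral_rate_zero p hab h, sub_zero]

lemma resid_after_deadline (p : Policy n S v d) (k : Fin n) {s : ℝ} (h : d k ≤ s) :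
    resid v p.rate k s = resid v p.rate k (d k) :=
  resid_frozen p k h fun r hr => rate_zero_after p hr.1.le

lemma resid_nonneg (p : Policy n S v d) (hv : ∀ k, 0 < v k) (k : Fin n) (t : ℝ) :
    0 ≤ resid v p.rate k t := by
  rcases le_or_gt t 0 with htn | htp
  · have h1 : resid v p.rate k t = v k + ∫ s in t..(0:ℝ), p.rate s k := by
      unfold resid
      rw [intervalIntegral.integral_symm]; ring
    have h2 : 0 ≤ ∫ s in t..(0:ℝ), p.rate s k :=
      intervalIntegral.integral_nonneg htn (fun r _ => p.nonneg r k)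
    rw [h1]; linarith [hv k]
  · by_contra hneg
    push_neg at hneg
    set B := Set.Icc (0:ℝ) t ∩ {s | 0 ≤ resid v p.rate k s} with hB
    have hBc : IsCompact B :=
      isCompact_Icc.inter_right (isClosed_le continuous_const (resid_cont p k))
    have h0B : (0:ℝ) ∈ B := ⟨⟨le_refl _, htp.le⟩, by simp [resid_zero p k, (hv k).le]⟩
    set u := sSup B with hu
    have huB : u ∈ B := hBc.sSup_mem ⟨0, h0B⟩
    have hut : u < t := lt_of_le_of_ne huB.1.2 fun h => by
      rw [h] at huB; exact absurd huB.2 (not_le.2 hneg)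
    have hzero : ∀ s ∈ Set.Ioc u t, p.rate s k = 0 := by
      intro s hs
      have hsB : s ∉ B := fun hmem => absurd (le_csSup hBc.bddAbove hmem) (not_le.2 hs.1)
      have hres : ¬ (0 ≤ resid v p.rate k s) := by
        intro hge
        exact hsB ⟨⟨le_trans huB.1.1 hs.1.le, hs.2⟩, hge⟩
      exact rate_zero p fun hp => hres hp.2.2.le
    have := resid_sub p k u t
    rw [integral_rate_zero p hut.le hzero, sub_zero] at this
    rw [this] at hneg
    exact absurd huB.2 (not_le.2 hneg)

lemma resid_eq_v_before (p : Policy n S v d) {k : Fin n} {s : ℝ} (h0 : 0 ≤ s)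
    (h : s < S k) : resid v p.rate k s = v k := by
  have h1 : resid v p.rate k s = resid v p.rate k 0 :=
    resid_frozen p k h0 fun r hr => rate_zero_before p (lt_of_le_of_lt hr.2 h)
  rw [h1, resid_zero]

lemma resid_deadline_nonpos (p : Policy n S v d) {k : Fin n} (h : d k ≤ 0) :
    resid v p.rate k (d k) = v k := by
  have h1 : resid v p.rate k 0 = resid v p.rate k (d k) :=
    resid_frozen p k h fun r hr => rate_zero_after p hr.1.le
  rw [← h1, resid_zero]

lemma reneged_eq (p : Policy n S v d) (hv : ∀ k, 0 < v k) (t : ℝ) :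
    renegedWork S v d p.rate t
      = ∑ k ∈ Finset.univ.filter (fun k => d k ≤ t), resid v p.rate k (d k) := by
  unfold renegedWork
  rw [Finset.sum_filter]
  refine Finset.sum_congr rfl fun k _ => ?_
  by_cases h : d k ≤ t <;> simp [h, max_eq_left (resid_nonneg p hv k (d k))]

end EDFAux

namespace EDFAux

variable {n : ℕ} {S v d : Fin n → ℝ}

lemma sum_equivFin (C : Finset (Fin n)) (g : Fin n → ℝ) :
    (∑ i : Fin C.card, g ((C.equivFin.symm i : {x // x ∈ C}) : Fin n)) = ∑ k ∈ C, g k := by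
  rw [← Finset.sum_coe_sort C g]
  exact Equiv.sum_comp C.equivFin.symm (fun x : {x // x ∈ C} => g (x : Fin n))

/-- Restriction of a policy to a subset of customers. -/
noncomputable def restrictPolicy (p : Policy n S v d) (C : Finset (Fin n)) :
    Policy C.card (fun i => S ((C.equivFin.symm i : {x // x ∈ C}) : Fin n))
      (fun i => v ((C.equivFin.symm i : {x // x ∈ C}) : Fin n))
      (fun i => d ((C.equivFin.symm i : {x // x ∈ C}) : Fin n)) where
  rate t i := p.rate t ((C.equivFin.symm i : {x // x ∈ C}) : Fin n)
  meas i := p.meas _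
  nonneg t i := p.nonneg t _
  total t := by
    rw [show (∑ i : Fin C.card, p.rate t ((C.equivFin.symm i : {x // x ∈ C}) : Fin n))
        = ∑ k ∈ C, p.rate t k from sum_equivFin C _]
    exact le_trans (Finset.sum_le_sum_of_subset_of_nonneg C.subset_univ
      (fun k _ _ => p.nonneg t k)) (p.total t)
  support t i h := p.support t _ h

lemma restrict_present_iff (p : Policy n S v d) (C : Finset (Fin n)) (i : Fin C.card) (t : ℝ) :
    present (fun i => S ((C.equivFin.symm i : {x // x ∈ C}) : Fin n))
      (fun i => v ((C.equivFin.symm i : {x // x ∈ C}) : Fin n))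
      (fun i => d ((C.equivFin.symm i : {x // x ∈ C}) : Fin n))
      (restrictPolicy p C).rate i t
      ↔ present S v d p.rate ((C.equivFin.symm i : {x // x ∈ C}) : Fin n) t := Iff.rfl

lemma restrict_resid (p : Policy n S v d) (C : Finset (Fin n)) (i : Fin C.card) (t : ℝ) :
    resid (fun i => v ((C.equivFin.symm i : {x // x ∈ C}) : Fin n)) (restrictPolicy p C).rate i t
      = resid v p.rate ((C.equivFin.symm i : {x // x ∈ C}) : Fin n) t := rfl

lemma restrict_reneged (p : Policy n S v d) (hv : ∀ k, 0 < v k) {s : ℝ} {r : ℝ}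
    (hr : r ≤ s) :
    renegedWork (fun i => S (((Finset.univ.filter (fun k => d k ≤ s)).equivFin.symm i : _) : Fin n))
      (fun i => v (((Finset.univ.filter (fun k => d k ≤ s)).equivFin.symm i : _) : Fin n))
      (fun i => d (((Finset.univ.filter (fun k => d k ≤ s)).equivFin.symm i : _) : Fin n))
      (restrictPolicy p (Finset.univ.filter (fun k => d k ≤ s))).rate r
      = renegedWork S v d p.rate r := by
  classical
  set C := Finset.univ.filter (fun k => d k ≤ s) with hC
  unfold renegedWork
  rw [show (∑ i : Fin C.card, if d ((C.equivFin.symm i : {x // x ∈ C}) : Fin n) ≤ r then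
        max (resid (fun i => v ((C.equivFin.symm i : {x // x ∈ C}) : Fin n)) (restrictPolicy p C).rate i
          ((fun i => d ((C.equivFin.symm i : {x // x ∈ C}) : Fin n)) i)) 0 else 0)
      = ∑ k ∈ C, (if d k ≤ r then max (resid v p.rate k (d k)) 0 else 0) from ?_]
  · refine Finset.sum_subset C.subset_univ fun k _ hk => ?_
    have : ¬ d k ≤ s := by
      intro h; exact hk (Finset.mem_filter.2 ⟨Finset.mem_univ _, h⟩)
    rw [if_neg (fun h => this (le_trans h hr))]
  · rw [← sum_equivFin C (fun k => if d k ≤ r then max (resid v p.rate k (d k)) 0 else 0)]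
    rfl

lemma restrict_isEDF (edf : Policy n S v d) (hedf : IsEDF S v d edf) {s : ℝ} :
    IsEDF (fun i => S (((Finset.univ.filter (fun k => d k ≤ s)).equivFin.symm i : _) : Fin n))
      (fun i => v (((Finset.univ.filter (fun k => d k ≤ s)).equivFin.symm i : _) : Fin n))
      (fun i => d (((Finset.univ.filter (fun k => d k ≤ s)).equivFin.symm i : _) : Fin n))
      (restrictPolicy edf (Finset.univ.filter (fun k => d k ≤ s))) := by
  classical
  set C := Finset.univ.filter (fun k => d k ≤ s) with hC
  intro r hex
  obtain ⟨i, hi⟩ := hex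
  obtain ⟨j, hj, hjmin, hjr⟩ := hedf r ⟨_, (restrict_present_iff edf C i r).1 hi⟩
  have hdi : d ((C.equivFin.symm i : {x // x ∈ C}) : Fin n) ≤ s :=
    (Finset.mem_filter.1 (C.equivFin.symm i).2).2
  have hjC : j ∈ C := Finset.mem_filter.2 ⟨Finset.mem_univ _,
    le_trans (hjmin _ ((restrict_present_iff edf C i r).1 hi)) hdi⟩
  refine ⟨C.equivFin ⟨j, hjC⟩, ?_, ?_, ?_⟩
  · rw [restrict_present_iff, Equiv.symm_apply_apply]
    exact hj
  · intro i' hi'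
    show d ((C.equivFin.symm (C.equivFin ⟨j, hjC⟩) : {x // x ∈ C}) : Fin n) ≤ _
    rw [Equiv.symm_apply_apply]
    exact hjmin _ ((restrict_present_iff edf C i' r).1 hi')
  · show edf.rate r ((C.equivFin.symm (C.equivFin ⟨j, hjC⟩) : {x // x ∈ C}) : Fin n) = 1
    rw [Equiv.symm_apply_apply]
    exact hjr

end EDFAux

namespace EDFAux

variable {n : ℕ} {S v d : Fin n → ℝ}

/-- If some customer's deadline exceeds `s`, the reneged-work comparison at time `s`
follows from the comparison for strictly smaller systems (restriction to the customers
whose deadlines have elapsed by `s`). -/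
lemma subsystem_step (S v d : Fin n → ℝ) (hv : ∀ k, 0 < v k) (hd : ∀ k, S k < d k)
    (edf : Policy n S v d) (hedf : IsEDF S v d edf) (π : Policy n S v d)
    (hprev : ∀ m : ℕ, m < n → ∀ (S' v' d' : Fin m → ℝ), (∀ k, 0 < v' k) → (∀ k, S' k < d' k) →
      ∀ (e' : Policy m S' v' d'), IsEDF S' v' d' e' → ∀ (p' : Policy m S' v' d'),
      ∀ r : ℝ, 0 ≤ r → renegedWork S' v' d' e'.rate r ≤ renegedWork S' v' d' p'.rate r)
    (s : ℝ) (hs0 : 0 ≤ s) (hwit : ∃ k0, s < d k0) :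
    renegedWork S v d edf.rate s ≤ renegedWork S v d π.rate s := by
  classical
  obtain ⟨k0, hk0⟩ := hwit
  set C := Finset.univ.filter (fun k => d k ≤ s) with hC
  have hk0C : k0 ∉ C := by
    intro h
    exact absurd (Finset.mem_filter.1 h).2 (not_le.2 hk0)
  have hcard : C.card < n := by
    have h1 : C ⊂ Finset.univ := ⟨C.subset_univ, fun h => hk0C (h (Finset.mem_univ k0))⟩
    have := Finset.card_lt_card h1
    simpa using this
  have h := hprev C.card hcard _ _ _
    (fun i => hv _) (fun i => hd _)
    (restrictPolicy edf C) (restrict_isEDF edf hedf) (restrictPolicy π C) s hs0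
  rwa [restrict_reneged edf hv (le_refl s), restrict_reneged π hv (le_refl s)] at h

lemma key : ∀ n : ℕ, ∀ (S v d : Fin n → ℝ), (∀ k, 0 < v k) → (∀ k, S k < d k) →
    ∀ (edf : Policy n S v d), IsEDF S v d edf → ∀ (π : Policy n S v d),
    ∀ t : ℝ, 0 ≤ t → renegedWork S v d edf.rate t ≤ renegedWork S v d π.rate t := by
  intro n
  induction n using Nat.strong_induction_on with
  | _ n IH =>
  intro S v d hv hd edf hedf π
  classical
  have claim : ∀ t : ℝ, 0 ≤ t → (∃ k0, t ≤ d k0) →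
      renegedWork S v d edf.rate t ≤ renegedWork S v d π.rate t := by
    intro t ht hex
    obtain ⟨k0, hk0⟩ := hex
    set C : Finset (Fin n) := Finset.univ.filter (fun k => d k ≤ t) with hC
    set H : ℝ → ℝ := fun s => ∑ k ∈ C,
      ((∫ r in (0:ℝ)..s, edf.rate r k) - ∫ r in (0:ℝ)..s, π.rate r k) with hH
    have hgoal : renegedWork S v d π.rate t - renegedWork S v d edf.rate t = H t := by
      rw [reneged_eq π hv t, reneged_eq edf hv t, hH, ← Finset.sum_sub_distrib]
      refine Finset.sum_congr rfl fun k hk => ?_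
      have hkt : d k ≤ t := (Finset.mem_filter.1 hk).2
      rw [← resid_after_deadline π k hkt, ← resid_after_deadline edf k hkt]
      unfold resid; ring
    have hH0 : 0 ≤ H t := by
      by_contra hneg
      push_neg at hneg
      have hHcont : Continuous H := by
        refine continuous_finset_sum _ fun k _ => Continuous.sub ?_ ?_
        · exact intervalIntegral.continuous_primitive (fun a b => rate_intInt edf k a b) 0
        · exact intervalIntegral.continuous_primitive (fun a b => rate_intInt π k a b) 0
      set B := Set.Icc (0:ℝ) t ∩ {s | 0 ≤ H s} with hB
      have hBc : IsCompact B := isCompact_Icc.inter_right (isClosed_le continuous_const hHcont)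
      have h0B : (0:ℝ) ∈ B := ⟨⟨le_refl _, ht⟩, by simp [hH]⟩
      set u := sSup B with hu
      have huB : u ∈ B := hBc.sSup_mem ⟨0, h0B⟩
      have hu0 : 0 ≤ u := huB.1.1
      have hut : u ≤ t := huB.1.2
      have huH : 0 ≤ H u := huB.2
      have hult : u < t := lt_of_le_of_ne hut fun h => absurd (h ▸ huH) (not_le.2 hneg)
      -- pointwise comparison on (u, t)
      have hpt : ∀ s ∈ Set.Ioo u t, (∑ k ∈ C, π.rate s k) ≤ ∑ k ∈ C, edf.rate s k := by
        intro s hs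
        have hs0 : 0 ≤ s := le_trans hu0 hs.1.le
        have hst : s ≤ t := hs.2.le
        have hsneg : H s < 0 := by
          by_contra hge
          push_neg at hge
          exact absurd (le_csSup hBc.bddAbove ⟨⟨hs0, hst⟩, hge⟩) (not_le.2 hs.1)
        by_cases hpres : ∃ k ∈ C, present S v d edf.rate k s
        · obtain ⟨k, hkC, hkp⟩ := hpres
          obtain ⟨j, _, hjmin, hjrate⟩ := hedf s ⟨k, hkp⟩
          have hjC : j ∈ C := Finset.mem_filter.2 ⟨Finset.mem_univ _,
            le_trans (hjmin k hkp) (Finset.mem_filter.1 hkC).2⟩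
          calc (∑ k ∈ C, π.rate s k)
              ≤ ∑ k, π.rate s k := Finset.sum_le_sum_of_subset_of_nonneg C.subset_univ
                (fun k _ _ => π.nonneg s k)
            _ ≤ 1 := π.total s
            _ = edf.rate s j := hjrate.symm
            _ ≤ ∑ k ∈ C, edf.rate s k :=
                Finset.single_le_sum (fun i _ => edf.nonneg s i) hjC
        · exfalso
          push_neg at hpres
          -- no class customer is present under EDF at time s ⟹ 0 ≤ H s, contradiction
          have hHs : H s = ∑ k ∈ C, (resid v π.rate k s - resid v edf.rate k s) := by
            rw [hH]
            refine Finset.sum_congr rfl fun k _ => ?_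
            unfold resid; ring
          -- split the class by whether the deadline has elapsed by `s`
          have hsplit := Finset.sum_filter_add_sum_filter_not C (fun k => d k ≤ s)
            (fun k => resid v π.rate k s - resid v edf.rate k s)
          have hC1 : C.filter (fun k => d k ≤ s) = Finset.univ.filter (fun k => d k ≤ s) := by
            ext k
            simp only [hC, Finset.mem_filter, Finset.filter_filter, Finset.mem_univ, true_and]
            exact ⟨fun h => h.2, fun h => ⟨le_trans h hst, h⟩⟩
          -- elapsed part: reneging comparison from the induction hypothesis
          have hA : 0 ≤ ∑ k ∈ C.filter (fun k => d k ≤ s),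
              (resid v π.rate k s - resid v edf.rate k s) := by
            have hsum : ∀ (p : Policy n S v d),
                (∑ k ∈ C.filter (fun k => d k ≤ s), resid v p.rate k s)
                  = renegedWork S v d p.rate s := by
              intro p
              rw [reneged_eq p hv s, hC1]
              refine Finset.sum_congr rfl fun k hk => ?_
              exact resid_after_deadline p k (Finset.mem_filter.1 hk).2
            have hcomp : renegedWork S v d edf.rate s ≤ renegedWork S v d π.rate s := by
              refine subsystem_step S v d hv hd edf hedf π ?_ s hs0 ⟨k0, lt_of_lt_of_le hs.2 hk0⟩
              intro m hm
              exact IH m hm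
            rw [Finset.sum_sub_distrib, hsum edf, hsum π, sub_nonneg] at *
            exact hcomp
          -- non-elapsed part: pointwise comparison
          have hBpt : 0 ≤ ∑ k ∈ C.filter (fun k => ¬ d k ≤ s),
              (resid v π.rate k s - resid v edf.rate k s) := by
            refine Finset.sum_nonneg fun k hk => ?_
            have hks : ¬ d k ≤ s := (Finset.mem_filter.1 hk).2
            have hkC : k ∈ C := (Finset.mem_filter.1 hk).1
            rcases lt_or_ge s (S k) with hSk | hSk
            · rw [resid_eq_v_before π hs0 hSk, resid_eq_v_before edf hs0 hSk]
              simp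
            · have hnp : ¬ present S v d edf.rate k s := hpres k hkC
              have hre : resid v edf.rate k s ≤ 0 := by
                by_contra hpos
                push_neg at hpos
                exact hnp ⟨hSk, not_le.1 hks, hpos⟩
              have h0 : resid v edf.rate k s = 0 :=
                le_antisymm hre (resid_nonneg edf hv k s)
              rw [h0, sub_zero]
              exact resid_nonneg π hv k s
          rw [hHs, ← hsplit] at hsneg
          linarith
      -- integrate the pointwise comparison over (u, t)
      have hdecomp : H t = H u + ∫ r in u..t, (∑ k ∈ C, (edf.rate r k - π.rate r k)) := by
        rw [intervalIntegral.integral_finset_sum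
          (fun k _ => (rate_intInt edf k u t).sub (rate_intInt π k u t)), hH,
          ← Finset.sum_add_distrib]
        refine Finset.sum_congr rfl fun k _ => ?_
        rw [intervalIntegral.integral_sub (rate_intInt edf k u t) (rate_intInt π k u t),
          ← intervalIntegral.integral_add_adjacent_intervals (rate_intInt edf k 0 u)
            (rate_intInt edf k u t),
          ← intervalIntegral.integral_add_adjacent_intervals (rate_intInt π k 0 u)
            (rate_intInt π k u t)]
        ring
      have hintnn : 0 ≤ ∫ r in u..t, (∑ k ∈ C, (edf.rate r k - π.rate r k)) := by
        rw [intervalIntegral.integral_of_le hult.le]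
        refine setIntegral_nonneg_ae measurableSet_Ioc ?_
        have hae : ∀ᵐ (x : ℝ), x ≠ t := by
          rw [Filter.eventually_iff, MeasureTheory.mem_ae_iff]
          have hc : {x : ℝ | x ≠ t}ᶜ = {t} := by ext x; simp
          rw [hc]
          exact measure_singleton t
        refine hae.mono fun x hx hxm => ?_
        have hxo : x ∈ Set.Ioo u t := ⟨hxm.1, lt_of_le_of_ne hxm.2 hx⟩
        have := hpt x hxo
        rw [Finset.sum_sub_distrib]
        linarith
      rw [hdecomp] at hneg
      linarith
    linarith [hgoal, hH0]
  intro t ht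
  by_cases hex : ∃ k0, t ≤ d k0
  · exact claim t ht hex
  · push_neg at hex
    rcases isEmpty_or_nonempty (Fin n) with h0 | hne
    · unfold renegedWork
      simp
    · obtain ⟨km, -, hkm⟩ := Finset.exists_max_image Finset.univ d Finset.univ_nonempty
      have hmt : d km < t := hex km
      have hre : ∀ (p : Policy n S v d),
          renegedWork S v d p.rate t = renegedWork S v d p.rate (d km) := by
        intro p; unfold renegedWork
        refine Finset.sum_congr rfl fun k _ => ?_
        rw [if_pos (hex k).le, if_pos (hkm k (Finset.mem_univ k))]
      rw [hre edf, hre π]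
      rcases le_or_gt 0 (d km) with hm0 | hm0
      · exact claim (d km) hm0 ⟨km, le_refl _⟩
      · apply le_of_eq
        unfold renegedWork
        refine Finset.sum_congr rfl fun k _ => ?_
        have hk : d k ≤ 0 := le_trans (hkm k (Finset.mem_univ k)) hm0.le
        by_cases h : d k ≤ d km
        · rw [if_pos h, if_pos h, resid_deadline_nonpos edf hk, resid_deadline_nonpos π hk]
        · rw [if_neg h, if_neg h]

end EDFAux


/-- Pathwise optimality of EDF for the single-server queue with
reneging: for finitely many customers with arrival times `S`, service requirements
`v > 0` and deadlines `d > S`, any EDF policy accumulates no more reneged work than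
any other policy, at every time `t ≥ 0`. -/
theorem stmt14 {n : ℕ} (S v d : Fin n → ℝ)
    (hv : ∀ k, 0 < v k) (hd : ∀ k, S k < d k)
    (edf : Policy n S v d) (hedf : IsEDF S v d edf)
    (π : Policy n S v d) :
    ∀ t : ℝ, 0 ≤ t → renegedWork S v d edf.rate t ≤ renegedWork S v d π.rate t :=
  EDFAux.key n S v d hv hd edf hedf π
end
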